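/- arXiv:1010.6184 — 4 statements merged into one kernel-verified Lean document; each statement's English description precedes it below -/
import Mathlib

section
/- Let p ∈ (1,∞), let μ and ν be Radon measures on ℝ^N, and let K be a singular kernel (with respect to μ and ν) that is restrictedly L^p bounded with bound C. Let ρ ∈ L¹(ℝ^N) (with respect to Lebesgue measure), set M(x) = 1 − ρ̂(x), and for ε > 0 set M_ε(x) = M(x/ε). Then for every ε > 0 the kernel K_ε(s,t) := K(s,t) M_ε(t−s) is restrictedly L^p bounded with bound (1 + ‖ρ‖_{L¹}) C. -/
open MeasureTheory Filter Metric Complex Topology ENNReal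

noncomputable section

abbrev Euc (N : ℕ) : Type := EuclideanSpace ℝ (Fin N)

/-- Fourier transform `ρ̂(s) = ∫ ρ(x) e^{-i s·x} dx`. -/
def ft {N : ℕ} (ρ : Euc N → ℂ) (s : Euc N) : ℂ :=
  ∫ x : Euc N, ρ x * Complex.exp (-(Complex.I * ((inner ℝ s x : ℝ) : ℂ)))

/-- bounded Borel compactly supported -/
def GoodFun {N : ℕ} (f : Euc N → ℂ) : Prop :=
  Measurable f ∧ (∃ Cf : ℝ, ∀ x, ‖f x‖ ≤ Cf) ∧ HasCompactSupport f

/-- supports are separated -/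
def Separated {N : ℕ} (f g : Euc N → ℂ) : Prop :=
  ∃ a > 0, ∀ x ∈ Function.support f, ∀ y ∈ Function.support g, a ≤ dist x y

/-- restrictedly L^p bounded with bound C -/
def RestrBdd {N : ℕ} (μ ν : Measure (Euc N)) (K : Euc N → Euc N → ℂ)
    (p p' C : ℝ) : Prop :=
  ∀ f g : Euc N → ℂ, GoodFun f → GoodFun g → Separated f g →
    Integrable (fun z : Euc N × Euc N => K z.1 z.2 * f z.2 * g z.1) (ν.prod μ) ∧
    ‖∫ s, ∫ t, K s t * f t * g s ∂μ ∂ν‖ ≤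
      C * (eLpNorm f (ENNReal.ofReal p) μ).toReal *
        (eLpNorm g (ENNReal.ofReal p') ν).toReal

/-- singular kernel: measurable, locally L² off the diagonal -/
def SingKernel {N : ℕ} (μ ν : Measure (Euc N)) (K : Euc N → Euc N → ℂ) : Prop :=
  Measurable (Function.uncurry K) ∧
  ∀ Q : Set (Euc N × Euc N), IsCompact Q → (∀ z ∈ Q, z.1 ≠ z.2) →
    ∫⁻ z in Q, (‖K z.1 z.2‖₊ : ℝ≥0∞) ^ 2 ∂(ν.prod μ) < ⊤


lemma norm_exp_neg_I_mul (r : ℝ) : ‖Complex.exp (-(Complex.I * r))‖ = 1 := by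
  rw [show -(Complex.I*(r:ℂ)) = ((-r:ℝ):ℂ)*Complex.I by push_cast; ring,
    Complex.norm_exp_ofReal_mul_I]

lemma norm_exp_I_mul (r : ℝ) : ‖Complex.exp (Complex.I * r)‖ = 1 := by
  rw [show (Complex.I*(r:ℂ)) = ((r:ℝ):ℂ)*Complex.I by ring,
    Complex.norm_exp_ofReal_mul_I]

lemma cont_exp_negI {X : Type*} [TopologicalSpace X] {r : X → ℝ} (hr : Continuous r) :
    Continuous fun a => Complex.exp (-(Complex.I * ((r a : ℝ) : ℂ))) :=
  Complex.continuous_exp.comp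
    ((continuous_const.mul (Complex.continuous_ofReal.comp hr)).neg)

lemma cont_exp_I {X : Type*} [TopologicalSpace X] {r : X → ℝ} (hr : Continuous r) :
    Continuous fun a => Complex.exp (Complex.I * ((r a : ℝ) : ℂ)) :=
  Complex.continuous_exp.comp
    (continuous_const.mul (Complex.continuous_ofReal.comp hr))

lemma ft_continuous {N : ℕ} {ρ : Euc N → ℂ} (hρ : Integrable ρ volume) :
    Continuous (ft ρ) := by
  apply continuous_of_dominated (bound := fun x => ‖ρ x‖)
  · intro s
    exact hρ.aestronglyMeasurable.mul
      ((cont_exp_negI (continuous_const.inner continuous_id)).aestronglyMeasurable)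
  · intro s
    filter_upwards with x
    rw [norm_mul, norm_exp_neg_I_mul, mul_one]
  · exact hρ.norm
  · filter_upwards with x
    exact continuous_const.mul (cont_exp_negI (continuous_id.inner continuous_const))

lemma ft_norm_le {N : ℕ} {ρ : Euc N → ℂ} (s : Euc N) :
    ‖ft ρ s‖ ≤ ∫ x : Euc N, ‖ρ x‖ := by
  refine (norm_integral_le_integral_norm _).trans_eq ?_
  congr 1; funext x; rw [norm_mul, norm_exp_neg_I_mul, mul_one]

/-- multiplying a restrictedly bounded kernel by the mollifier
`M_ε(t-s)`, `M = 1 - ρ̂`, keeps it restrictedly bounded with bound `(1+‖ρ‖₁)C`. -/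
theorem smooth_regularization_restricted_bound
    {N : ℕ} (p p' C : ℝ) (hp : 1 < p) (hpp' : 1 / p + 1 / p' = 1)
    (μ ν : Measure (Euc N)) [IsLocallyFiniteMeasure μ] [μ.InnerRegular]
    [IsLocallyFiniteMeasure ν] [ν.InnerRegular]
    (K : Euc N → Euc N → ℂ) (hK : SingKernel μ ν K)
    (hKbdd : RestrBdd μ ν K p p' C)
    (ρ : Euc N → ℂ) (hρ : Integrable ρ volume)
    (M : Euc N → ℂ) (hM : ∀ x, M x = 1 - ft ρ x) :
    ∀ ε > (0 : ℝ),
      RestrBdd μ ν (fun s t => K s t * M (ε⁻¹ • (t - s))) p p'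
        ((1 + ∫ x : Euc N, ‖ρ x‖) * C) := by
  intro ε hε f g hfG hgG hsep
  obtain ⟨hfm, ⟨Cf, hCf⟩, hfc⟩ := hfG
  obtain ⟨hgm, ⟨Cg, hCg⟩, hgc⟩ := hgG
  set R : ℝ := ∫ x : Euc N, ‖ρ x‖ with hRdef
  have hR0 : 0 ≤ R := integral_nonneg fun _ => norm_nonneg _
  have hMc : Continuous M := by
    have hMe : M = fun x => 1 - ft ρ x := funext hM
    rw [hMe]; exact continuous_const.sub (ft_continuous hρ)
  have hMbd : ∀ y : Euc N, ‖M y‖ ≤ 1 + R := by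
    intro y; rw [hM]
    refine (norm_sub_le _ _).trans ?_
    simpa using add_le_add_left (ft_norm_le (ρ := ρ) y) 1
  set Φ : Euc N × Euc N → ℂ := fun z => K z.1 z.2 * f z.2 * g z.1 with hΦdef
  obtain ⟨hΦint, hΦbd⟩ := hKbdd f g ⟨hfm, ⟨Cf, hCf⟩, hfc⟩ ⟨hgm, ⟨Cg, hCg⟩, hgc⟩ hsep
  set nf : ℝ := (eLpNorm f (ENNReal.ofReal p) μ).toReal with hnfdef
  set ng : ℝ := (eLpNorm g (ENNReal.ofReal p') ν).toReal with hngdef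
  -- continuity of the shifted mollifier factor
  have hcsub : Continuous fun z : Euc N × Euc N => ε⁻¹ • (z.2 - z.1) :=
    (continuous_snd.sub continuous_fst).const_smul ε⁻¹
  have hcM : Continuous fun z : Euc N × Euc N => M (ε⁻¹ • (z.2 - z.1)) := hMc.comp hcsub
  -- integrability of the new kernel against f, g
  have hΨint : Integrable (fun z : Euc N × Euc N =>
      (K z.1 z.2 * M (ε⁻¹ • (z.2 - z.1))) * f z.2 * g z.1) (ν.prod μ) := by
    refine (hΦint.bdd_mul hcM.aestronglyMeasurable (Filter.Eventually.of_forall fun z => hMbd _)).congr ?_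
    filter_upwards with z
    show M (ε⁻¹ • (z.2 - z.1)) * Φ z = _
    rw [hΦdef]; ring
  refine ⟨hΨint, ?_⟩
  -- modulated functions
  set e₁ : Euc N → Euc N → ℂ :=
    fun x t => Complex.exp (-(Complex.I * ((ε⁻¹ * inner ℝ t x : ℝ) : ℂ))) with he₁def
  set e₂ : Euc N → Euc N → ℂ :=
    fun x s => Complex.exp (Complex.I * ((ε⁻¹ * inner ℝ s x : ℝ) : ℂ)) with he₂def
  have key : ∀ x s t : Euc N,
      Complex.exp (-(Complex.I * ((inner ℝ (ε⁻¹ • (t - s)) x : ℝ) : ℂ)))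
        = e₁ x t * e₂ x s := by
    intro x s t
    rw [he₁def, he₂def, ← Complex.exp_add]
    congr 1
    have h1 : (inner ℝ (ε⁻¹ • (t - s)) x : ℝ) = ε⁻¹ * inner ℝ t x - ε⁻¹ * inner ℝ s x := by
      rw [real_inner_smul_left, inner_sub_left]; ring
    rw [h1]; push_cast; ring
  have he₁n : ∀ x t, ‖e₁ x t‖ = 1 := fun x t => norm_exp_neg_I_mul _
  have he₂n : ∀ x s, ‖e₂ x s‖ = 1 := fun x s => norm_exp_I_mul _
  have hgood₁ : ∀ x, GoodFun (fun t => f t * e₁ x t) := by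
    intro x
    refine ⟨hfm.mul (cont_exp_negI
      (continuous_const.mul (continuous_id.inner continuous_const))).measurable,
      ⟨Cf, fun t => by rw [norm_mul, he₁n, mul_one]; exact hCf t⟩, hfc.mul_right⟩
  have hgood₂ : ∀ x, GoodFun (fun s => g s * e₂ x s) := by
    intro x
    refine ⟨hgm.mul (cont_exp_I
      (continuous_const.mul (continuous_id.inner continuous_const))).measurable,
      ⟨Cg, fun s => by rw [norm_mul, he₂n, mul_one]; exact hCg s⟩, hgc.mul_right⟩
  have hsep' : ∀ x, Separated (fun t => f t * e₁ x t) (fun s => g s * e₂ x s) := by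
    intro x
    obtain ⟨a, ha0, hasep⟩ := hsep
    exact ⟨a, ha0, fun t ht s hs =>
      hasep t (Function.mem_support.mpr (left_ne_zero_of_mul (Function.mem_support.mp ht)))
        s (Function.mem_support.mpr (left_ne_zero_of_mul (Function.mem_support.mp hs)))⟩
  have hnf' : ∀ x, eLpNorm (fun t => f t * e₁ x t) (ENNReal.ofReal p) μ
      = eLpNorm f (ENNReal.ofReal p) μ := fun x =>
    eLpNorm_congr_norm_ae (Filter.Eventually.of_forall fun t => by
      rw [norm_mul, he₁n, mul_one])
  have hng' : ∀ x, eLpNorm (fun s => g s * e₂ x s) (ENNReal.ofReal p') ν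
      = eLpNorm g (ENNReal.ofReal p') ν := fun x =>
    eLpNorm_congr_norm_ae (Filter.Eventually.of_forall fun s => by
      rw [norm_mul, he₂n, mul_one])
  have hKx := fun x : Euc N => hKbdd _ _ (hgood₁ x) (hgood₂ x) (hsep' x)
  set Ix : Euc N → ℂ := fun x =>
    ∫ z : Euc N × Euc N, K z.1 z.2 * (f z.2 * e₁ x z.2) * (g z.1 * e₂ x z.1) ∂(ν.prod μ)
    with hIxdef
  have hIxbd : ∀ x, ‖Ix x‖ ≤ C * nf * ng := by
    intro x
    have h := integral_prod (μ := ν) (ν := μ)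
      (fun z : Euc N × Euc N => K z.1 z.2 * (f z.2 * e₁ x z.2) * (g z.1 * e₂ x z.1))
      (hKx x).1
    have h2 : Ix x = ∫ s, ∫ t, K s t * (f t * e₁ x t) * (g s * e₂ x s) ∂μ ∂ν := h
    rw [h2]
    have := (hKx x).2
    rwa [hnf' x, hng' x] at this
  -- Fubini setup
  set H : (Euc N × Euc N) → Euc N → ℂ := fun z x =>
    Φ z * (ρ x * Complex.exp (-(Complex.I * ((inner ℝ (ε⁻¹ • (z.2 - z.1)) x : ℝ) : ℂ))))
    with hHdef
  have Hint : Integrable (Function.uncurry H) ((ν.prod μ).prod volume) := by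
    have base : Integrable (fun w : (Euc N × Euc N) × Euc N => Φ w.1 * ρ w.2)
        ((ν.prod μ).prod volume) := hΦint.mul_prod hρ
    have emeas : Continuous fun w : (Euc N × Euc N) × Euc N =>
        Complex.exp (-(Complex.I * ((inner ℝ (ε⁻¹ • (w.1.2 - w.1.1)) w.2 : ℝ) : ℂ))) :=
      cont_exp_negI ((hcsub.comp continuous_fst).inner continuous_snd)
    refine (base.bdd_mul emeas.aestronglyMeasurable
      (Filter.Eventually.of_forall fun w => le_of_eq (norm_exp_neg_I_mul _))).congr ?_
    filter_upwards with w
    show _ = H w.1 w.2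
    rw [hHdef]; ring
  have hswap : ∫ z, ∫ x, H z x ∂(volume) ∂(ν.prod μ)
      = ∫ x, ∫ z, H z x ∂(ν.prod μ) ∂(volume) := integral_integral_swap Hint
  have hinner1 : ∀ z : Euc N × Euc N,
      Φ z * ft ρ (ε⁻¹ • (z.2 - z.1)) = ∫ x, H z x ∂(volume) := by
    intro z
    rw [hHdef]
    simp only []
    rw [integral_const_mul (Φ z)
      (fun x => ρ x * Complex.exp (-(Complex.I * ((inner ℝ (ε⁻¹ • (z.2 - z.1)) x : ℝ) : ℂ))))]
    rfl
  have hinner2 : ∀ x : Euc N, ∫ z, H z x ∂(ν.prod μ) = ρ x * Ix x := by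
    intro x
    rw [hIxdef, ← integral_const_mul]
    refine integral_congr_ae ?_
    filter_upwards with z
    rw [hHdef]
    show Φ z * (ρ x * _) = _
    rw [key x z.1 z.2, hΦdef]; ring
  -- integrability of Φ * ft ρ ∘ shift
  have hΦftint : Integrable (fun z : Euc N × Euc N =>
      Φ z * ft ρ (ε⁻¹ • (z.2 - z.1))) (ν.prod μ) := by
    refine (hΦint.bdd_mul ((ft_continuous hρ).comp hcsub).aestronglyMeasurable
      (Filter.Eventually.of_forall fun z => ft_norm_le _)).congr ?_
    filter_upwards with z using mul_comm _ _
  -- main computation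
  have hmain : (∫ s, ∫ t, (K s t * M (ε⁻¹ • (t - s))) * f t * g s ∂μ ∂ν)
      = (∫ z, Φ z ∂(ν.prod μ)) - ∫ x, ρ x * Ix x ∂(volume) := by
    have h0 : (∫ s, ∫ t, (K s t * M (ε⁻¹ • (t - s))) * f t * g s ∂μ ∂ν)
        = ∫ z : Euc N × Euc N, (K z.1 z.2 * M (ε⁻¹ • (z.2 - z.1))) * f z.2 * g z.1
            ∂(ν.prod μ) := (integral_prod _ hΨint).symm
    rw [h0]
    have h1 : ∀ z : Euc N × Euc N,
        (K z.1 z.2 * M (ε⁻¹ • (z.2 - z.1))) * f z.2 * g z.1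
          = Φ z - Φ z * ft ρ (ε⁻¹ • (z.2 - z.1)) := by
      intro z; rw [hM, hΦdef]; ring
    rw [integral_congr_ae (Filter.Eventually.of_forall h1),
      integral_sub hΦint hΦftint]
    congr 1
    calc ∫ z, Φ z * ft ρ (ε⁻¹ • (z.2 - z.1)) ∂(ν.prod μ)
        = ∫ z, ∫ x, H z x ∂(volume) ∂(ν.prod μ) :=
          integral_congr_ae (Filter.Eventually.of_forall hinner1)
      _ = ∫ x, ∫ z, H z x ∂(ν.prod μ) ∂(volume) := hswap
      _ = ∫ x, ρ x * Ix x ∂(volume) :=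
          integral_congr_ae (Filter.Eventually.of_forall hinner2)
  rw [hmain]
  have hsecond : ‖∫ x, ρ x * Ix x ∂(volume)‖ ≤ R * (C * nf * ng) := by
    have hb : ∀ x : Euc N, ‖ρ x * Ix x‖ ≤ ‖ρ x‖ * (C * nf * ng) := by
      intro x
      rw [norm_mul]
      exact mul_le_mul_of_nonneg_left (hIxbd x) (norm_nonneg _)
    calc ‖∫ x, ρ x * Ix x ∂(volume)‖
        ≤ ∫ x, ‖ρ x‖ * (C * nf * ng) ∂(volume) :=
          norm_integral_le_of_norm_le (hρ.norm.mul_const _)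
            (Filter.Eventually.of_forall hb)
      _ = R * (C * nf * ng) := by rw [integral_mul_const, hRdef]
  calc ‖(∫ z, Φ z ∂(ν.prod μ)) - ∫ x, ρ x * Ix x ∂(volume)‖
      ≤ ‖∫ z, Φ z ∂(ν.prod μ)‖ + ‖∫ x, ρ x * Ix x ∂(volume)‖ := norm_sub_le _ _
    _ ≤ C * nf * ng + R * (C * nf * ng) := by
        refine add_le_add ?_ hsecond
        rw [hΦdef, integral_prod _ hΦint]
        exact hΦbd
    _ = (1 + R) * C * nf * ng := by ring
end
end

section
/- Let h ∈ L¹(ℝ^N × ℝ^N) (with respect to Lebesgue measure on ℝ^{2N}) and let M = ĥ be its Fourier transform on ℝ^{2N}, viewed as a function M(s,t) on ℝ^N × ℝ^N. Then M is a Schur multiplier with Schur norm at most ‖h‖_{L¹}: for every p ∈ (1,∞), all Radon measures μ, ν on ℝ^N, and every singular kernel K that is restrictedly L^p bounded with bound C, the kernel (s,t) ↦ M(s,t) K(s,t) is restrictedly L^p bounded with bound ‖h‖_{L¹} C. -/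
open MeasureTheory Filter Metric Complex Topology ENNReal

noncomputable section

lemma norm_exp_neg_I_real (r : ℝ) : ‖Complex.exp (-(Complex.I * (r : ℂ)))‖ = 1 := by
  rw [Complex.norm_exp]; simp

lemma exp_cont {N : ℕ} (z : Euc N × Euc N) :
    Continuous fun w : Euc N × Euc N =>
      Complex.exp (-(Complex.I * (((inner ℝ z.1 w.1 : ℝ) + (inner ℝ z.2 w.2 : ℝ) : ℝ) : ℂ))) :=
  Complex.continuous_exp.comp
    ((continuous_const.mul (Complex.continuous_ofReal.comp
      ((continuous_const.inner continuous_fst).add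
        (continuous_const.inner continuous_snd)))).neg)

lemma exp_cont' {N : ℕ} (w : Euc N × Euc N) :
    Continuous fun z : Euc N × Euc N =>
      Complex.exp (-(Complex.I * (((inner ℝ z.1 w.1 : ℝ) + (inner ℝ z.2 w.2 : ℝ) : ℝ) : ℂ))) :=
  Complex.continuous_exp.comp
    ((continuous_const.mul (Complex.continuous_ofReal.comp
      ((continuous_fst.inner continuous_const).add
        (continuous_snd.inner continuous_const)))).neg)

lemma exp_meas {N : ℕ} (b : Euc N) :
    Measurable fun t : Euc N => Complex.exp (-(Complex.I * ((inner ℝ b t : ℝ) : ℂ))) :=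
  (Complex.continuous_exp.comp
    ((continuous_const.mul (Complex.continuous_ofReal.comp
      (continuous_const.inner continuous_id))).neg)).measurable

instance (N : ℕ) : BorelSpace ((Euc N × Euc N) × Euc N × Euc N) := Prod.borelSpace

set_option maxHeartbeats 1000000 in
/-- the Fourier transform `M(s,t) = ĥ(s,t)` of `h ∈ L¹(ℝ^{2N})` is a
Schur multiplier with Schur norm at most `‖h‖_{L¹}`. -/
theorem wiener_2N_schur_multiplier
    {N : ℕ} (h : Euc N × Euc N → ℂ) (hh : Integrable h volume)
    (M : Euc N → Euc N → ℂ)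
    (hM : ∀ s t : Euc N, M s t =
      ∫ z : Euc N × Euc N,
        h z * Complex.exp (-(Complex.I * (((inner ℝ z.1 s : ℝ) + (inner ℝ z.2 t : ℝ) : ℝ) : ℂ)))) :
    ∀ p p' C : ℝ, 1 < p → 1 / p + 1 / p' = 1 →
    ∀ μ ν : Measure (Euc N),
      IsLocallyFiniteMeasure μ → μ.InnerRegular →
      IsLocallyFiniteMeasure ν → ν.InnerRegular →
    ∀ K : Euc N → Euc N → ℂ, SingKernel μ ν K → RestrBdd μ ν K p p' C →
      RestrBdd μ ν (fun s t => M s t * K s t) p p'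
        ((∫ z : Euc N × Euc N, ‖h z‖) * C) := by
  intro p p' C hp hpp' μ ν hμfin hμreg hνfin hνreg K hK hKb
  haveI := hμfin; haveI := hνfin
  -- continuity of M
  have hMc : Continuous fun w : Euc N × Euc N => M w.1 w.2 := by
    have heq : (fun w : Euc N × Euc N => M w.1 w.2) =
        fun w : Euc N × Euc N => ∫ z : Euc N × Euc N,
          h z * Complex.exp
            (-(Complex.I * (((inner ℝ z.1 w.1 : ℝ) + (inner ℝ z.2 w.2 : ℝ) : ℝ) : ℂ))) := by
      funext w; exact hM w.1 w.2
    rw [heq]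
    apply continuous_of_dominated (bound := fun z => ‖h z‖)
    · intro w
      exact hh.aestronglyMeasurable.mul (exp_cont' w).aestronglyMeasurable
    · intro w
      filter_upwards with z
      rw [norm_mul, norm_exp_neg_I_real, mul_one]
    · exact hh.norm
    · filter_upwards with z
      exact continuous_const.mul (exp_cont z)
  have hMbd : ∀ s t : Euc N, ‖M s t‖ ≤ ∫ z : Euc N × Euc N, ‖h z‖ := by
    intro s t
    rw [hM s t]
    refine (norm_integral_le_integral_norm _).trans_eq ?_
    refine integral_congr_ae (Eventually.of_forall fun z => ?_)
    simp only [norm_mul, norm_exp_neg_I_real, mul_one]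
  intro f g hf hg hsep
  obtain ⟨hfm, ⟨Cf, hCf⟩, hfc⟩ := hf
  obtain ⟨hgm, ⟨Cg, hCg⟩, hgc⟩ := hg
  -- integrability of K f g
  obtain ⟨hKfg, -⟩ := hKb f g ⟨hfm, ⟨Cf, hCf⟩, hfc⟩ ⟨hgm, ⟨Cg, hCg⟩, hgc⟩ hsep
  -- shifted functions
  set fe : Euc N → Euc N → ℂ :=
    fun b t => f t * Complex.exp (-(Complex.I * ((inner ℝ b t : ℝ) : ℂ))) with hfe
  set ge : Euc N → Euc N → ℂ :=
    fun a s => g s * Complex.exp (-(Complex.I * ((inner ℝ a s : ℝ) : ℂ))) with hge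
  have hfen : ∀ b t, ‖fe b t‖ = ‖f t‖ := by
    intro b t; rw [hfe]; simp only; rw [norm_mul, norm_exp_neg_I_real, mul_one]
  have hgen : ∀ a s, ‖ge a s‖ = ‖g s‖ := by
    intro a s; rw [hge]; simp only; rw [norm_mul, norm_exp_neg_I_real, mul_one]
  have hfeG : ∀ b, GoodFun (fe b) := by
    intro b
    refine ⟨hfm.mul (exp_meas b), ⟨Cf, fun x => by rw [hfen]; exact hCf x⟩, ?_⟩
    exact hfc.mul_right
  have hgeG : ∀ a, GoodFun (ge a) := by
    intro a
    refine ⟨hgm.mul (exp_meas a), ⟨Cg, fun x => by rw [hgen]; exact hCg x⟩, ?_⟩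
    exact hgc.mul_right
  have hfes : ∀ b, Function.support (fe b) ⊆ Function.support f := by
    intro b x hx
    simp only [Function.mem_support] at hx ⊢
    intro hfx; apply hx; rw [hfe]; simp [hfx]
  have hges : ∀ a, Function.support (ge a) ⊆ Function.support g := by
    intro a x hx
    simp only [Function.mem_support] at hx ⊢
    intro hgx; apply hx; rw [hge]; simp [hgx]
  have hsep' : ∀ a b, Separated (fe b) (ge a) := by
    intro a b
    obtain ⟨d, hd, hsep⟩ := hsep
    exact ⟨d, hd, fun x hx y hy => hsep x (hfes b hx) y (hges a hy)⟩
  have hfeLp : ∀ b, eLpNorm (fe b) (ENNReal.ofReal p) μ = eLpNorm f (ENNReal.ofReal p) μ :=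
    fun b => eLpNorm_congr_norm_ae (Eventually.of_forall fun t => hfen b t)
  have hgeLp : ∀ a, eLpNorm (ge a) (ENNReal.ofReal p') ν = eLpNorm g (ENNReal.ofReal p') ν :=
    fun a => eLpNorm_congr_norm_ae (Eventually.of_forall fun s => hgen a s)
  -- bound for each frequency z = (a, b)
  have hzbd : ∀ z : Euc N × Euc N,
      Integrable (fun w : Euc N × Euc N => K w.1 w.2 * fe z.2 w.2 * ge z.1 w.1) (ν.prod μ) ∧
      ‖∫ s, ∫ t, K s t * fe z.2 t * ge z.1 s ∂μ ∂ν‖ ≤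
        C * (eLpNorm f (ENNReal.ofReal p) μ).toReal *
          (eLpNorm g (ENNReal.ofReal p') ν).toReal := by
    intro z
    obtain ⟨h1, h2⟩ := hKb (fe z.2) (ge z.1) (hfeG z.2) (hgeG z.1) (hsep' z.1 z.2)
    exact ⟨h1, by rwa [hfeLp, hgeLp] at h2⟩
  -- main kernel integrand
  set F : Euc N × Euc N → ℂ := fun w => M w.1 w.2 * (K w.1 w.2 * f w.2 * g w.1) with hF
  have hFint : Integrable F (ν.prod μ) := by
    refine Integrable.mono' (hKfg.norm.const_mul (∫ z : Euc N × Euc N, ‖h z‖))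
      (hMc.aestronglyMeasurable.mul hKfg.aestronglyMeasurable)
      (Eventually.of_forall fun w => ?_)
    rw [hF]; simp only
    rw [norm_mul]
    exact mul_le_mul_of_nonneg_right (hMbd w.1 w.2) (norm_nonneg _)
  have hFint' : Integrable
      (fun w : Euc N × Euc N =>
        (fun s t => M s t * K s t) w.1 w.2 * f w.2 * g w.1) (ν.prod μ) := by
    refine hFint.congr (Eventually.of_forall fun w => ?_)
    rw [hF]; ring
  refine ⟨hFint', ?_⟩
  -- the exponential
  set E : Euc N × Euc N → Euc N × Euc N → ℂ := fun z w =>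
    Complex.exp (-(Complex.I * (((inner ℝ z.1 w.1 : ℝ) + (inner ℝ z.2 w.2 : ℝ) : ℝ) : ℂ))) with hE
  have hEn : ∀ z w, ‖E z w‖ = 1 := by
    intro z w; rw [hE]; simp only; exact norm_exp_neg_I_real _
  have hEsplit : ∀ (z w : Euc N × Euc N),
      E z w * (K w.1 w.2 * f w.2 * g w.1) =
        K w.1 w.2 * fe z.2 w.2 * ge z.1 w.1 := by
    intro z w
    rw [hE, hfe, hge]; simp only
    rw [show ((((inner ℝ z.1 w.1 : ℝ) + (inner ℝ z.2 w.2 : ℝ) : ℝ)) : ℂ) =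
        ((inner ℝ z.1 w.1 : ℝ) : ℂ) + ((inner ℝ z.2 w.2 : ℝ) : ℂ) by push_cast; ring]
    rw [show -(Complex.I * (((inner ℝ z.1 w.1 : ℝ) : ℂ) + ((inner ℝ z.2 w.2 : ℝ) : ℂ))) =
        -(Complex.I * ((inner ℝ z.2 w.2 : ℝ) : ℂ)) + -(Complex.I * ((inner ℝ z.1 w.1 : ℝ) : ℂ))
        by ring]
    rw [Complex.exp_add]; ring
  -- integrability of the big function G on the product
  set G : (Euc N × Euc N) → (Euc N × Euc N) → ℂ := fun w z =>
    h z * E z w * (K w.1 w.2 * f w.2 * g w.1) with hG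
  have hGint : Integrable (Function.uncurry G) ((ν.prod μ).prod volume) := by
    have hbd : Integrable
        (fun q : (Euc N × Euc N) × (Euc N × Euc N) =>
          ‖K q.1.1 q.1.2 * f q.1.2 * g q.1.1‖ * ‖h q.2‖) ((ν.prod μ).prod volume) :=
      hKfg.norm.mul_prod hh.norm
    refine Integrable.mono' hbd ?_ (Eventually.of_forall fun q => ?_)
    · have hEm : Continuous fun q : (Euc N × Euc N) × (Euc N × Euc N) => E q.2 q.1 := by
        rw [hE]
        exact Complex.continuous_exp.comp
          ((continuous_const.mul (Complex.continuous_ofReal.comp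
            (((Continuous.inner (continuous_fst.comp continuous_snd)
                (continuous_fst.comp continuous_fst))).add
              ((Continuous.inner (continuous_snd.comp continuous_snd)
                (continuous_snd.comp continuous_fst)))))).neg)
      exact ((hh.aestronglyMeasurable.comp_snd.mul hEm.aestronglyMeasurable).mul
        hKfg.aestronglyMeasurable.comp_fst)
    · rw [hG]; simp only [Function.uncurry]
      rw [norm_mul, norm_mul, hEn, mul_one, mul_comm]
  -- pointwise: F w = ∫ z, G w z
  have hFrep : ∀ w : Euc N × Euc N, F w = ∫ z : Euc N × Euc N, G w z := by
    intro w
    rw [hF, hG]; simp only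
    rw [hM w.1 w.2, ← integral_mul_const]
  -- inner integral identity for each z
  have hEKint : ∀ z : Euc N × Euc N,
      Integrable (fun w : Euc N × Euc N => E z w * (K w.1 w.2 * f w.2 * g w.1)) (ν.prod μ) := by
    intro z
    exact ((hzbd z).1).congr (Eventually.of_forall fun w => (hEsplit z w).symm)
  -- the norm estimate
  show ‖∫ s, ∫ t, M s t * K s t * f t * g s ∂μ ∂ν‖ ≤ _
  have hiter : (∫ s, ∫ t, M s t * K s t * f t * g s ∂μ ∂ν) = ∫ w, F w ∂(ν.prod μ) := by
    rw [MeasureTheory.integral_integral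
      (f := fun s t => M s t * K s t * f t * g s) hFint']
    exact integral_congr_ae (Eventually.of_forall fun w => by rw [hF]; ring)
  rw [hiter]
  have h2 : (∫ w, F w ∂(ν.prod μ)) =
      ∫ z : Euc N × Euc N, ∫ w, G w z ∂(ν.prod μ) := by
    rw [show (∫ w, F w ∂(ν.prod μ)) = ∫ w, (∫ z : Euc N × Euc N, G w z) ∂(ν.prod μ) from
      integral_congr_ae (Eventually.of_forall hFrep)]
    exact integral_integral_swap hGint
  have h3 : ∀ z : Euc N × Euc N, (∫ w, G w z ∂(ν.prod μ)) =
      h z * ∫ s, ∫ t, K s t * fe z.2 t * ge z.1 s ∂μ ∂ν := by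
    intro z
    have e1 : (∫ w, G w z ∂(ν.prod μ)) =
        h z * ∫ w, E z w * (K w.1 w.2 * f w.2 * g w.1) ∂(ν.prod μ) := by
      rw [← integral_const_mul]
      exact integral_congr_ae (Eventually.of_forall fun w => by rw [hG]; ring)
    rw [e1]
    congr 1
    have h4 := MeasureTheory.integral_integral
      (f := fun s t => K s t * fe z.2 t * ge z.1 s) (hzbd z).1
    rw [h4]
    exact integral_congr_ae (Eventually.of_forall fun w => hEsplit z w)
  rw [h2]
  set a := (eLpNorm f (ENNReal.ofReal p) μ).toReal with ha
  set b := (eLpNorm g (ENNReal.ofReal p') ν).toReal with hb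
  calc ‖∫ z : Euc N × Euc N, ∫ w, G w z ∂(ν.prod μ)‖
      = ‖∫ z : Euc N × Euc N, h z * ∫ s, ∫ t, K s t * fe z.2 t * ge z.1 s ∂μ ∂ν‖ := by
        rw [integral_congr_ae (Eventually.of_forall h3)]
    _ ≤ ∫ z : Euc N × Euc N, ‖h z * ∫ s, ∫ t, K s t * fe z.2 t * ge z.1 s ∂μ ∂ν‖ :=
        norm_integral_le_integral_norm _
    _ = ∫ z : Euc N × Euc N, ‖h z‖ * ‖∫ s, ∫ t, K s t * fe z.2 t * ge z.1 s ∂μ ∂ν‖ :=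
        integral_congr_ae (Eventually.of_forall fun z => norm_mul _ _)
    _ ≤ ∫ z : Euc N × Euc N, ‖h z‖ * (C * a * b) := by
        refine integral_mono_of_nonneg
          (Eventually.of_forall fun z => mul_nonneg (norm_nonneg _) (norm_nonneg _))
          (hh.norm.mul_const _)
          (Eventually.of_forall fun z => ?_)
        exact mul_le_mul_of_nonneg_left (hzbd z).2 (norm_nonneg _)
    _ = (∫ z : Euc N × Euc N, ‖h z‖) * (C * a * b) := integral_mul_const _ _
    _ = (∫ z : Euc N × Euc N, ‖h z‖) * C * a * b := by ring
end
end

section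
/- Let σ be a Radon measure on ℝ^N without atoms (σ({x}) = 0 for every x ∈ ℝ^N). Then there exist sequences of Borel sets E_n^1, E_n^2 ⊆ ℝ^N, n ∈ ℕ, such that: (1) for every n, dist(E_n^1, E_n^2) > 0; (2) for k = 1, 2 the multiplication operators P_n^k f := 1_{E_n^k} f converge to (1/2)·I in the weak operator topology of L²(σ), i.e. for all f, g ∈ L²(σ), ∫_{E_n^k} f(x) \overline{g(x)} dσ(x) → (1/2) ∫ f \overline{g} dσ as n → ∞; (3) for every p ∈ [1,∞), k = 1, 2, and every f ∈ L^p(σ), lim_{n→∞} ‖1_{E_n^k} f‖_{L^p(σ)} = 2^{−1/p} ‖f‖_{L^p(σ)}. -/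
open MeasureTheory Filter Metric Complex Topology ENNReal

noncomputable section

lemma sign_balance {m : ℕ} (v : ℕ → Fin m → ℂ) (J : ℕ) :
    ∃ s : ℕ → Bool,
      (∑ i : Fin m, Complex.normSq (∑ j ∈ Finset.range J, (if s j then (1:ℂ) else -1) * v j i))
        ≤ ∑ j ∈ Finset.range J, ∑ i : Fin m, Complex.normSq (v j i) := by
  induction J with
  | zero => exact ⟨fun _ => true, by simp⟩
  | succ J ih =>
    obtain ⟨s, hs⟩ := ih
    set W : Fin m → ℂ := fun i => ∑ j ∈ Finset.range J, (if s j then (1:ℂ) else -1) * v j i with hW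
    have par : ∀ a b : ℂ, Complex.normSq (a + b) + Complex.normSq (a - b)
        = 2 * (Complex.normSq a + Complex.normSq b) := by
      intro a b; simp [Complex.normSq_apply]; ring
    have key : (∑ i, Complex.normSq (W i + v J i)) + (∑ i, Complex.normSq (W i - v J i))
        = 2 * ((∑ i, Complex.normSq (W i)) + ∑ i, Complex.normSq (v J i)) := by
      rw [← Finset.sum_add_distrib]
      simp_rw [par]
      rw [mul_add, Finset.mul_sum, Finset.mul_sum, ← Finset.sum_add_distrib]
      exact Finset.sum_congr rfl fun i _ => by ring
    have hmin : min (∑ i, Complex.normSq (W i + v J i)) (∑ i, Complex.normSq (W i - v J i))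
        ≤ (∑ i, Complex.normSq (W i)) + ∑ i, Complex.normSq (v J i) := by
      rcases le_total (∑ i, Complex.normSq (W i + v J i)) (∑ i, Complex.normSq (W i - v J i)) with h | h
      · rw [min_eq_left h]; linarith [key]
      · rw [min_eq_right h]; linarith [key]
    -- choose sign
    by_cases hb : (∑ i, Complex.normSq (W i + v J i)) ≤ (∑ i, Complex.normSq (W i - v J i))
    · refine ⟨Function.update s J true, ?_⟩
      have hsum : ∀ i, (∑ j ∈ Finset.range (J+1),
          (if Function.update s J true j then (1:ℂ) else -1) * v j i) = W i + v J i := by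
        intro i
        rw [Finset.sum_range_succ]
        simp only [Function.update_self]
        congr 1
        · exact Finset.sum_congr rfl fun j hj => by
            rw [Function.update_of_ne (Finset.mem_range.mp hj).ne]
        · simp
      simp_rw [hsum]
      rw [Finset.sum_range_succ]
      calc (∑ i, Complex.normSq (W i + v J i))
          ≤ (∑ i, Complex.normSq (W i)) + ∑ i, Complex.normSq (v J i) := by
            rw [min_eq_left hb] at hmin; exact hmin
        _ ≤ _ := by exact add_le_add hs le_rfl
    · refine ⟨Function.update s J false, ?_⟩
      have hsum : ∀ i, (∑ j ∈ Finset.range (J+1),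
          (if Function.update s J false j then (1:ℂ) else -1) * v j i) = W i - v J i := by
        intro i
        rw [Finset.sum_range_succ]
        simp only [Function.update_self]
        rw [sub_eq_add_neg]
        congr 1
        · exact Finset.sum_congr rfl fun j hj => by
            rw [Function.update_of_ne (Finset.mem_range.mp hj).ne]
        · simp
      simp_rw [hsum]
      rw [Finset.sum_range_succ]
      calc (∑ i, Complex.normSq (W i - v J i))
          ≤ (∑ i, Complex.normSq (W i)) + ∑ i, Complex.normSq (v J i) := by
            rw [min_eq_right (le_of_not_ge hb)] at hmin; exact hmin
        _ ≤ _ := by exact add_le_add hs le_rfl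

lemma small_ball {N : ℕ} (ν : Measure (Euc N)) [IsFiniteMeasure ν]
    (hν : ∀ x, ν {x} = 0) {ε : ℝ≥0∞} (hε : 0 < ε) (x : Euc N) :
    ∃ r > (0:ℝ), ν (Metric.ball x r) ≤ ε := by
  have hI : (⋂ n : ℕ, Metric.closedBall x (1/(n+1))) = {x} := by
    ext y
    simp only [Set.mem_iInter, Metric.mem_closedBall, Set.mem_singleton_iff]
    constructor
    · intro h
      by_contra hy
      have hd : 0 < dist y x := dist_pos.mpr hy
      obtain ⟨n, hn⟩ := exists_nat_one_div_lt hd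
      exact absurd (h n) (not_le.mpr hn)
    · rintro rfl
      intro n
      simp [dist_self]
      positivity
  have ht : Tendsto (fun n : ℕ => ν (Metric.closedBall x (1/(n+1)))) atTop (𝓝 0) := by
    have := tendsto_measure_iInter_atTop (μ := ν)
      (s := fun n : ℕ => Metric.closedBall x (1/(n+1)))
      (fun n => (measurableSet_closedBall).nullMeasurableSet)
      (fun a b hab => Metric.closedBall_subset_closedBall (by
        apply div_le_div_of_nonneg_left <;> [norm_num; positivity; exact_mod_cast by omega]))
      ⟨0, measure_ne_top _ _⟩
    rw [hI] at this
    simpa [hν x, Function.comp_def] using this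
  obtain ⟨n, hn⟩ := (ht.eventually_le_const hε.bot_lt).exists
  exact ⟨1/(n+1), by positivity,
    le_trans (measure_mono Metric.ball_subset_closedBall) hn⟩

lemma small_partition {N : ℕ} (ν : Measure (Euc N)) [IsFiniteMeasure ν]
    (hν : ∀ x, ν {x} = 0) {ε : ℝ≥0∞} (hε : 0 < ε) :
    ∃ (J : ℕ) (P : ℕ → Set (Euc N)),
      (∀ j, MeasurableSet (P j)) ∧
      (∀ j k, j ≠ k → Disjoint (P j) (P k)) ∧
      (⋃ j ∈ Finset.range J, P j) = Set.univ ∧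
      (∀ j, ν (P j) ≤ ε) := by
  -- cover by small balls
  choose r hr hνr using fun x => small_ball ν hν hε x
  obtain ⟨t, htc, htU⟩ := TopologicalSpace.countable_cover_nhds
    (f := fun x => Metric.ball x (r x)) (fun x => Metric.ball_mem_nhds x (hr x))
  have htn : t.Nonempty := by
    rcases Set.eq_empty_or_nonempty t with h | h
    · exfalso
      rw [h] at htU
      have := htU ▸ Set.mem_univ (0 : Euc N)
      simpa using this
    · exact h
  obtain ⟨u, hu⟩ := Set.Countable.exists_eq_range htc htn
  set B : ℕ → Set (Euc N) := fun n => Metric.ball (u n) (r (u n)) with hB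
  have hBU : (⋃ n, B n) = Set.univ := by
    rw [← htU, hu]
    ext y; simp [hB]
  set D : ℕ → Set (Euc N) := disjointed B with hD
  have hDm : ∀ n, MeasurableSet (D n) :=
    MeasurableSet.disjointed (fun n => measurableSet_ball)
  have hDd : Pairwise (Function.onFun Disjoint D) := disjoint_disjointed B
  have hDU : (⋃ n, D n) = Set.univ := by rw [hD, iUnion_disjointed, hBU]
  have hDs : ∀ n, ν (D n) ≤ ε := fun n =>
    le_trans (measure_mono (disjointed_subset B n)) (hνr (u n))
  -- tail
  set S : ℕ → Set (Euc N) := fun J => ⋃ (n : ℕ) (_ : J ≤ n), D n with hS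
  have hSm : ∀ J, MeasurableSet (S J) := fun J =>
    MeasurableSet.iUnion fun n => MeasurableSet.iUnion fun _ => hDm n
  have hSI : (⋂ J, S J) = ∅ := by
    ext x
    simp only [Set.mem_iInter, Set.mem_empty_iff_false, iff_false, not_forall, hS,
      Set.mem_iUnion]
    have hx : x ∈ ⋃ n, D n := hDU ▸ Set.mem_univ x
    obtain ⟨n, hn⟩ := Set.mem_iUnion.mp hx
    refine ⟨n+1, ?_⟩
    rintro ⟨k, hk, hxk⟩
    exact (hDd (by omega : n ≠ k)).le_bot ⟨hn, hxk⟩ 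
  have hSt : Tendsto (fun J => ν (S J)) atTop (𝓝 0) := by
    have := tendsto_measure_iInter_atTop (μ := ν) (s := S)
      (fun J => (hSm J).nullMeasurableSet)
      (fun a b hab => Set.iUnion₂_subset fun n hn =>
        Set.subset_iUnion₂ (s := fun n _ => D n) n (le_trans hab hn))
      ⟨0, measure_ne_top _ _⟩
    rw [hSI] at this
    simpa [Function.comp_def] using this
  obtain ⟨J, hJ⟩ := (hSt.eventually_le_const hε.bot_lt).exists
  refine ⟨J + 1, fun j => if j < J then D j else if j = J then S J else ∅,
    ?_, ?_, ?_, ?_⟩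
  · intro j
    dsimp only
    split_ifs <;> simp [hDm, hSm]
  · intro j k hjk
    dsimp only
    have hDS : ∀ a b : ℕ, a < J → Disjoint (D a) (S J) := by
      intro a b ha
      refine Set.disjoint_left.mpr fun x hxa hxS => ?_
      rw [hS] at hxS
      simp only [Set.mem_iUnion] at hxS
      obtain ⟨n, hn, hxn⟩ := hxS
      exact (hDd (by omega : a ≠ n)).le_bot ⟨hxa, hxn⟩
    split_ifs with h1 h2 h2 h3 h3 <;>
      first
        | exact hDd (by omega)
        | exact hDS _ 0 (by omega)
        | exact (hDS _ 0 (by omega)).symm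
        | exact absurd (by omega : j = k) hjk
        | simp [Set.disjoint_empty, Set.empty_disjoint]
  · apply Set.eq_univ_of_univ_subset
    intro x _
    have hx : x ∈ ⋃ n, D n := hDU ▸ Set.mem_univ x
    obtain ⟨n, hn⟩ := Set.mem_iUnion.mp hx
    simp only [Set.mem_iUnion, Finset.mem_range]
    by_cases hnJ : n < J
    · exact ⟨n, by omega, by simp [hnJ, hn]⟩
    · refine ⟨J, by omega, ?_⟩
      have : x ∈ S J := by
        rw [hS]; simp only [Set.mem_iUnion]; exact ⟨n, by omega, hn⟩
      simp [this]
  · intro j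
    dsimp only
    split_ifs
    · exact hDs j
    · exact hJ
    · simp


lemma main_approx {N : ℕ} (σ : Measure (Euc N)) [IsLocallyFiniteMeasure σ] [σ.InnerRegular]
    (hna : ∀ x : Euc N, σ {x} = 0) (m : ℕ) (h : Fin m → Euc N → ℂ)
    (hint : ∀ i, Integrable (h i) σ) {ε : ℝ} (hε : 0 < ε) :
    ∃ K₀ K₁ : Set (Euc N), IsCompact K₀ ∧ IsCompact K₁ ∧ Disjoint K₀ K₁ ∧
      (∀ i, ‖(∫ x in K₀, h i x ∂σ) - (1/2 : ℂ) * ∫ x, h i x ∂σ‖ ≤ ε) ∧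
      (∀ i, ‖(∫ x in K₁, h i x ∂σ) - (1/2 : ℂ) * ∫ x, h i x ∂σ‖ ≤ ε) := by
  classical
  set ρ : Euc N → ℝ≥0∞ := fun x => ∑ i : Fin m, (‖h i x‖₊ : ℝ≥0∞) with hρ
  have hρae : AEMeasurable ρ σ := by
    apply Finset.aemeasurable_fun_sum
    intro i _
    exact (hint i).aestronglyMeasurable.aemeasurable.enorm
  set ν : Measure (Euc N) := σ.withDensity ρ with hν
  have hνtot : ν Set.univ = ∑ i : Fin m, ∫⁻ x, (‖h i x‖₊ : ℝ≥0∞) ∂σ := by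
    rw [hν, withDensity_apply _ MeasurableSet.univ, Measure.restrict_univ, hρ]
    exact lintegral_finset_sum' _ (fun i _ => (hint i).aestronglyMeasurable.aemeasurable.enorm)
  have hνfin : IsFiniteMeasure ν := by
    constructor
    rw [hνtot]
    exact ENNReal.sum_lt_top.mpr fun i _ => (hint i).2
  have hν0 : ∀ x, ν {x} = 0 := by
    intro x
    rw [hν, withDensity_apply _ (measurableSet_singleton x)]
    exact setLIntegral_measure_zero _ _ (hna x)
  -- key bound
  have hb : ∀ (i : Fin m) (A : Set (Euc N)), MeasurableSet A →
      ‖∫ x in A, h i x ∂σ‖ ≤ (ν A).toReal := by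
    intro i A hA
    have h1 : ENNReal.ofReal (∫ x in A, ‖h i x‖ ∂σ) = ∫⁻ x in A, (‖h i x‖₊ : ℝ≥0∞) ∂σ :=
      ofReal_integral_norm_eq_lintegral_enorm ((hint i).restrict)
    have h2 : (∫ x in A, ‖h i x‖ ∂σ) = (∫⁻ x in A, (‖h i x‖₊ : ℝ≥0∞) ∂σ).toReal := by
      rw [← h1, ENNReal.toReal_ofReal (integral_nonneg (fun x => norm_nonneg _))]
    calc ‖∫ x in A, h i x ∂σ‖ ≤ ∫ x in A, ‖h i x‖ ∂σ := norm_integral_le_integral_norm _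
      _ = (∫⁻ x in A, (‖h i x‖₊ : ℝ≥0∞) ∂σ).toReal := h2
      _ ≤ (ν A).toReal := by
          apply ENNReal.toReal_mono (measure_ne_top ν A)
          rw [hν, withDensity_apply _ hA]
          exact lintegral_mono fun x => Finset.single_le_sum
            (f := fun i' => (‖h i' x‖₊ : ℝ≥0∞)) (fun _ _ => zero_le) (Finset.mem_univ i)
  -- total mass per function
  set M : Fin m → ℝ := fun i => ∫ x, ‖h i x‖ ∂σ with hM
  have hMnn : ∀ i, 0 ≤ M i := fun i => integral_nonneg fun x => norm_nonneg _
  set Ctot : ℝ := ∑ i : Fin m, M i with hC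
  have hCnn : 0 ≤ Ctot := Finset.sum_nonneg fun i _ => hMnn i
  -- small partition
  set δ : ℝ := (2*ε/3)^2 / (Ctot + 1) with hδ
  have hδpos : 0 < δ := by positivity
  have : IsFiniteMeasure ν := hνfin
  obtain ⟨J, P, hPm, hPd, hPU, hPs⟩ := small_partition ν hν0
    (ε := ENNReal.ofReal δ) (ENNReal.ofReal_pos.mpr hδpos)
  have hPsr : ∀ j, (ν (P j)).toReal ≤ δ := fun j =>
    le_trans (ENNReal.toReal_mono ofReal_ne_top (hPs j)) (by rw [ENNReal.toReal_ofReal hδpos.le])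
  set v : ℕ → Fin m → ℂ := fun j i => ∫ x in P j, h i x ∂σ with hv
  obtain ⟨s, hsb⟩ := sign_balance v J
  -- bound the balanced sum
  have hvb : ∀ j i, ‖v j i‖ ≤ (ν (P j)).toReal := fun j i => hb i (P j) (hPm j)
  have hvsum : ∀ i, ∑ j ∈ Finset.range J, ‖v j i‖ ≤ M i := by
    intro i
    have h1 : ∀ j ∈ Finset.range J, ‖v j i‖ ≤ ∫ x in P j, ‖h i x‖ ∂σ := fun j _ =>
      norm_integral_le_integral_norm _
    calc ∑ j ∈ Finset.range J, ‖v j i‖ ≤ ∑ j ∈ Finset.range J, ∫ x in P j, ‖h i x‖ ∂σ :=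
          Finset.sum_le_sum h1
      _ = ∫ x in ⋃ j ∈ Finset.range J, P j, ‖h i x‖ ∂σ := by
          rw [integral_biUnion_finset _ (fun j _ => hPm j)
            (fun a _ b _ hab => hPd a b hab) (fun j _ => (hint i).norm.integrableOn)]
      _ = M i := by rw [hPU, hM, Measure.restrict_univ]
  have hsq : ∀ i : Fin m,
      ‖∑ j ∈ Finset.range J, (if s j then (1:ℂ) else -1) * v j i‖ ≤ 2*ε/3 := by
    intro i
    have h1 : Complex.normSq (∑ j ∈ Finset.range J, (if s j then (1:ℂ) else -1) * v j i)
        ≤ (2*ε/3)^2 := by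
      refine le_trans (le_trans (Finset.single_le_sum
        (f := fun i' => Complex.normSq (∑ j ∈ Finset.range J, (if s j then (1:ℂ) else -1) * v j i'))
        (fun _ _ => Complex.normSq_nonneg _) (Finset.mem_univ i)) hsb) ?_
      have h2 : ∑ j ∈ Finset.range J, ∑ i' : Fin m, Complex.normSq (v j i')
          ≤ δ * Ctot := by
        calc ∑ j ∈ Finset.range J, ∑ i' : Fin m, Complex.normSq (v j i')
            ≤ ∑ j ∈ Finset.range J, ∑ i' : Fin m, δ * ‖v j i'‖ := by
              apply Finset.sum_le_sum; intro j _
              apply Finset.sum_le_sum; intro i' _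
              rw [Complex.normSq_eq_norm_sq]
              calc ‖v j i'‖^2 = ‖v j i'‖ * ‖v j i'‖ := by
                    ring
                _ ≤ δ * ‖v j i'‖ :=
                    mul_le_mul_of_nonneg_right (le_trans (hvb j i') (hPsr j)) (norm_nonneg _)
          _ = δ * ∑ i' : Fin m, ∑ j ∈ Finset.range J, ‖v j i'‖ := by
              rw [Finset.sum_comm, Finset.mul_sum]
              exact Finset.sum_congr rfl fun i' _ => (Finset.mul_sum _ _ _).symm
          _ ≤ δ * Ctot := by
              apply mul_le_mul_of_nonneg_left _ hδpos.le
              exact Finset.sum_le_sum fun i' _ => hvsum i'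
      refine le_trans h2 ?_
      rw [hδ]
      rw [div_mul_eq_mul_div, div_le_iff₀ (by positivity)]
      nlinarith [sq_nonneg (2*ε/3)]
    have h3 : (0:ℝ) ≤ 2*ε/3 := by positivity
    rw [← Real.sqrt_sq (norm_nonneg _), ← Real.sqrt_sq h3]
    apply Real.sqrt_le_sqrt
    rw [← Complex.normSq_eq_norm_sq]
    exact h1
  -- the half-space T
  set F : Finset ℕ := (Finset.range J).filter (fun j => s j = true) with hF
  set T : Set (Euc N) := ⋃ j ∈ F, P j with hT
  have hTm : MeasurableSet T := F.measurableSet_biUnion (fun j _ => hPm j)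
  have hint_T : ∀ i, (∫ x in T, h i x ∂σ) = ∑ j ∈ F, v j i := fun i =>
    integral_biUnion_finset F (fun j _ => hPm j) (fun a _ b _ hab => hPd a b hab)
      (fun j _ => (hint i).integrableOn)
  have hint_tot : ∀ i, (∫ x, h i x ∂σ) = ∑ j ∈ Finset.range J, v j i := by
    intro i
    rw [← setIntegral_univ, ← hPU, integral_biUnion_finset _ (fun j _ => hPm j)
      (fun a _ b _ hab => hPd a b hab) (fun j _ => (hint i).integrableOn)]
  have hhalf : ∀ i, ‖(∫ x in T, h i x ∂σ) - (1/2 : ℂ) * ∫ x, h i x ∂σ‖ ≤ ε/3 := by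
    intro i
    have hid : (∫ x in T, h i x ∂σ) - (1/2 : ℂ) * ∫ x, h i x ∂σ
        = (1/2 : ℂ) * ∑ j ∈ Finset.range J, (if s j then (1:ℂ) else -1) * v j i := by
      rw [hint_T, hint_tot,
        ← Finset.sum_filter_add_sum_filter_not (Finset.range J) (fun j => s j = true)
          (fun j => v j i),
        ← Finset.sum_filter_add_sum_filter_not (Finset.range J) (fun j => s j = true)
          (fun j => (if s j then (1:ℂ) else -1) * v j i)]
      have e1 : ∑ j ∈ (Finset.range J).filter (fun j => s j = true),
          (if s j then (1:ℂ) else -1) * v j i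
          = ∑ j ∈ (Finset.range J).filter (fun j => s j = true), v j i :=
        Finset.sum_congr rfl fun j hj => by
          simp [(Finset.mem_filter.mp hj).2]
      have e2 : ∑ j ∈ (Finset.range J).filter (fun j => ¬ s j = true),
          (if s j then (1:ℂ) else -1) * v j i
          = - ∑ j ∈ (Finset.range J).filter (fun j => ¬ s j = true), v j i := by
        rw [← Finset.sum_neg_distrib]
        exact Finset.sum_congr rfl fun j hj => by
          simp [(Finset.mem_filter.mp hj).2]
      rw [e1, e2, hF]
      ring
    rw [hid, norm_mul]
    have : ‖(1/2 : ℂ)‖ = 1/2 := by norm_num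
    rw [this]
    calc (1/2) * ‖∑ j ∈ Finset.range J, (if s j then (1:ℂ) else -1) * v j i‖
        ≤ (1/2) * (2*ε/3) := by
          exact mul_le_mul_of_nonneg_left (hsq i) (by norm_num)
      _ = ε/3 := by ring
  -- tail ball
  set εE : ℝ≥0∞ := ENNReal.ofReal (ε/3) with hεE
  have hεE0 : εE ≠ 0 := by
    rw [hεE]
    simp only [ne_eq, ENNReal.ofReal_eq_zero, not_le]
    positivity
  have hIball : (⋂ n : ℕ, (Metric.closedBall (0:Euc N) n)ᶜ) = (∅ : Set (Euc N)) := by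
    ext x
    simp only [Set.mem_iInter, Set.mem_compl_iff, Metric.mem_closedBall, not_le,
      Set.mem_empty_iff_false, iff_false, not_forall, not_lt]
    exact ⟨Nat.ceil (dist x (0:Euc N)), Nat.le_ceil _⟩
  have htail : Tendsto (fun n : ℕ => ν ((Metric.closedBall (0:Euc N) n)ᶜ)) atTop (𝓝 0) := by
    have := tendsto_measure_iInter_atTop (μ := ν)
      (s := fun n : ℕ => (Metric.closedBall (0:Euc N) n)ᶜ)
      (fun n => (measurableSet_closedBall.compl).nullMeasurableSet)
      (fun a b hab => Set.compl_subset_compl.mpr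
        (Metric.closedBall_subset_closedBall (by exact_mod_cast hab)))
      ⟨0, measure_ne_top _ _⟩
    rw [hIball] at this
    simpa [Function.comp_def] using this
  obtain ⟨n₀, hn₀⟩ := (htail.eventually_le_const (pos_iff_ne_zero.mpr hεE0)).exists
  set B : Set (Euc N) := Metric.closedBall (0:Euc N) n₀ with hBdef
  have hBm : MeasurableSet B := measurableSet_closedBall
  have hBfin : σ B ≠ ∞ := (isCompact_closedBall _ _).measure_lt_top.ne
  -- absolute continuity
  have hνuniv_ne : (∫⁻ x, ρ x ∂σ) ≠ ∞ := by
    have : ν Set.univ ≠ ∞ := measure_ne_top ν _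
    rwa [hν, withDensity_apply _ MeasurableSet.univ, Measure.restrict_univ] at this
  obtain ⟨δ₂, hδ₂pos, hδ₂⟩ := exists_pos_setLIntegral_lt_of_measure_lt hνuniv_ne hεE0
  -- build a compact approximating any measurable set from inside
  have build : ∀ A : Set (Euc N), MeasurableSet A →
      ∃ K, IsCompact K ∧ K ⊆ A ∧
        ∀ i, ‖(∫ x in K, h i x ∂σ) - ∫ x in A, h i x ∂σ‖ ≤ 2*ε/3 := by
    intro A hA
    set A' : Set (Euc N) := A ∩ B with hA'def
    have hA'm : MeasurableSet A' := hA.inter hBm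
    have hA'fin : σ A' ≠ ∞ :=
      (lt_of_le_of_lt (measure_mono Set.inter_subset_right) hBfin.lt_top).ne
    obtain ⟨K, hKA', hKc, hKd⟩ := hA'm.exists_isCompact_diff_lt hA'fin hδ₂pos.ne'
    refine ⟨K, hKc, hKA'.trans Set.inter_subset_left, ?_⟩
    intro i
    have hKm : MeasurableSet K := hKc.isClosed.measurableSet
    have e1 : (∫ x in A, h i x ∂σ) - (∫ x in A', h i x ∂σ) = ∫ x in A \ A', h i x ∂σ :=
      (integral_diff hA'm (hint i).integrableOn Set.inter_subset_left).symm
    have e2 : (∫ x in A', h i x ∂σ) - (∫ x in K, h i x ∂σ) = ∫ x in A' \ K, h i x ∂σ :=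
      (integral_diff hKm (hint i).integrableOn hKA').symm
    have b1 : ‖∫ x in A \ A', h i x ∂σ‖ ≤ ε/3 := by
      refine le_trans (hb i _ (hA.diff hA'm)) ?_
      have hsub : A \ A' ⊆ Bᶜ := by
        intro x hx
        simp only [hA'def, Set.mem_diff, Set.mem_inter_iff, not_and] at hx
        exact fun hxB => hx.2 (hx.1) hxB
      have : ν (A \ A') ≤ εE := le_trans (measure_mono hsub) hn₀
      have h3 : εE.toReal = ε/3 := by rw [hεE, ENNReal.toReal_ofReal (by positivity)]
      exact h3 ▸ ENNReal.toReal_mono (hεE ▸ ofReal_ne_top) this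
    have b2 : ‖∫ x in A' \ K, h i x ∂σ‖ ≤ ε/3 := by
      refine le_trans (hb i _ (hA'm.diff hKm)) ?_
      have hlt : ν (A' \ K) < εE := by
        rw [hν, withDensity_apply _ (hA'm.diff hKm)]
        exact hδ₂ _ hKd
      have h3 : εE.toReal = ε/3 := by rw [hεE, ENNReal.toReal_ofReal (by positivity)]
      exact h3 ▸ ENNReal.toReal_mono (hεE ▸ ofReal_ne_top) hlt.le
    calc ‖(∫ x in K, h i x ∂σ) - ∫ x in A, h i x ∂σ‖
        = ‖-((∫ x in A, h i x ∂σ) - (∫ x in A', h i x ∂σ))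
            + -((∫ x in A', h i x ∂σ) - (∫ x in K, h i x ∂σ))‖ := by ring_nf
      _ ≤ ‖(∫ x in A, h i x ∂σ) - (∫ x in A', h i x ∂σ)‖
            + ‖(∫ x in A', h i x ∂σ) - (∫ x in K, h i x ∂σ)‖ := by
          refine le_trans (norm_add_le _ _) ?_
          rw [norm_neg, norm_neg]
      _ ≤ ε/3 + ε/3 := by rw [e1, e2]; exact add_le_add b1 b2
      _ ≤ 2*ε/3 := by linarith
  obtain ⟨K₀, hK₀c, hK₀T, hK₀⟩ := build T hTm
  obtain ⟨K₁, hK₁c, hK₁T, hK₁⟩ := build Tᶜ hTm.compl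
  refine ⟨K₀, K₁, hK₀c, hK₁c, ?_, ?_, ?_⟩
  · exact Set.disjoint_left.mpr fun x hx0 hx1 => (hK₁T hx1) (hK₀T hx0)
  · intro i
    calc ‖(∫ x in K₀, h i x ∂σ) - (1/2 : ℂ) * ∫ x, h i x ∂σ‖
        ≤ ‖(∫ x in K₀, h i x ∂σ) - ∫ x in T, h i x ∂σ‖
          + ‖(∫ x in T, h i x ∂σ) - (1/2 : ℂ) * ∫ x, h i x ∂σ‖ := by
          have := norm_add_le ((∫ x in K₀, h i x ∂σ) - ∫ x in T, h i x ∂σ)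
            ((∫ x in T, h i x ∂σ) - (1/2 : ℂ) * ∫ x, h i x ∂σ)
          simpa using this
      _ ≤ 2*ε/3 + ε/3 := add_le_add (hK₀ i) (hhalf i)
      _ ≤ ε := by linarith
  · intro i
    have hcompl : (∫ x in Tᶜ, h i x ∂σ) - (1/2 : ℂ) * ∫ x, h i x ∂σ
        = -((∫ x in T, h i x ∂σ) - (1/2 : ℂ) * ∫ x, h i x ∂σ) := by
      have := integral_add_compl hTm (hint i)
      have h2 : (∫ x in Tᶜ, h i x ∂σ) = (∫ x, h i x ∂σ) - ∫ x in T, h i x ∂σ := by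
        rw [← this]; ring
      rw [h2]; ring
    calc ‖(∫ x in K₁, h i x ∂σ) - (1/2 : ℂ) * ∫ x, h i x ∂σ‖
        ≤ ‖(∫ x in K₁, h i x ∂σ) - ∫ x in Tᶜ, h i x ∂σ‖
          + ‖(∫ x in Tᶜ, h i x ∂σ) - (1/2 : ℂ) * ∫ x, h i x ∂σ‖ := by
          have := norm_add_le ((∫ x in K₁, h i x ∂σ) - ∫ x in Tᶜ, h i x ∂σ)
            ((∫ x in Tᶜ, h i x ∂σ) - (1/2 : ℂ) * ∫ x, h i x ∂σ)
          simpa using this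
      _ ≤ 2*ε/3 + ε/3 := by
          refine add_le_add (hK₁ i) ?_
          rw [hcompl, norm_neg]
          exact hhalf i
      _ ≤ ε := by linarith

/-- separated partitions of unity for an atomless Radon measure. -/
theorem separated_partition_of_unity
    {N : ℕ} (σ : Measure (Euc N)) [IsLocallyFiniteMeasure σ] [σ.InnerRegular]
    (hna : ∀ x : Euc N, σ {x} = 0) :
    ∃ E : ℕ → Fin 2 → Set (Euc N),
      (∀ n k, MeasurableSet (E n k)) ∧
      (∀ n, ∃ a > (0 : ℝ), ∀ x ∈ E n 0, ∀ y ∈ E n 1, a ≤ dist x y) ∧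
      (∀ k : Fin 2, ∀ f g : Euc N → ℂ, MemLp f 2 σ → MemLp g 2 σ →
        Tendsto (fun n => ∫ x in E n k, f x * (starRingEnd ℂ) (g x) ∂σ) atTop
          (𝓝 ((1 / 2 : ℂ) * ∫ x, f x * (starRingEnd ℂ) (g x) ∂σ))) ∧
      (∀ p : ℝ, 1 ≤ p → ∀ k : Fin 2, ∀ f : Euc N → ℂ,
        MemLp f (ENNReal.ofReal p) σ →
        Tendsto
          (fun n => (eLpNorm ((E n k).indicator f) (ENNReal.ofReal p) σ).toReal)
          atTop
          (𝓝 ((2 : ℝ) ^ (-(1 / p)) * (eLpNorm f (ENNReal.ofReal p) σ).toReal))) := by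
  classical
  haveI : Fact ((1:ℝ≥0∞) ≤ 1) := ⟨le_refl _⟩
  haveI : Fact ((1:ℝ≥0∞) ≠ ∞) := ⟨one_ne_top⟩
  obtain ⟨d, hd⟩ := TopologicalSpace.exists_dense_seq (Lp ℂ 1 σ)
  -- construct the sets
  have H : ∀ n : ℕ, ∃ K : Fin 2 → Set (Euc N),
      IsCompact (K 0) ∧ IsCompact (K 1) ∧ Disjoint (K 0) (K 1) ∧
      ∀ k : Fin 2, ∀ i : Fin n,
        ‖(∫ x in K k, (d i : Euc N → ℂ) x ∂σ) - (1/2 : ℂ) * ∫ x, (d i : Euc N → ℂ) x ∂σ‖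
          ≤ 1/(n+1) := by
    intro n
    have hint : ∀ i : Fin n, Integrable ((d i : Euc N → ℂ)) σ := fun i =>
      (memLp_one_iff_integrable.mp (Lp.memLp (d i)))
    obtain ⟨K₀, K₁, hc0, hc1, hdisj, hb0, hb1⟩ := main_approx σ hna n
      (fun i => (d i : Euc N → ℂ)) hint (ε := 1/(n+1)) (by positivity)
    refine ⟨![K₀, K₁], by simpa using hc0, by simpa using hc1, by simpa using hdisj, ?_⟩
    intro k i
    fin_cases k
    · simpa using hb0 i
    · simpa using hb1 i
  choose K hK0 hK1 hKd hKb using H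
  set E : ℕ → Fin 2 → Set (Euc N) := K with hE
  have hEc : ∀ n k, IsCompact (E n k) := by
    intro n k
    fin_cases k
    · exact hK0 n
    · exact hK1 n
  have hEm : ∀ n k, MeasurableSet (E n k) := fun n k => (hEc n k).isClosed.measurableSet
  -- key convergence for arbitrary integrable functions
  have key : ∀ (k : Fin 2) (h : Euc N → ℂ), Integrable h σ →
      Tendsto (fun n => ∫ x in E n k, h x ∂σ) atTop
        (𝓝 ((1/2 : ℂ) * ∫ x, h x ∂σ)) := by
    intro k h hint
    rw [Metric.tendsto_atTop]
    intro η hη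
    set hL : Lp ℂ 1 σ := (memLp_one_iff_integrable.mpr hint).toLp h with hhL
    obtain ⟨i, hi⟩ := Metric.denseRange_iff.mp hd hL (η/4) (by positivity)
    set g : Euc N → ℂ := (d i : Euc N → ℂ) with hg
    have hgi : Integrable g σ := memLp_one_iff_integrable.mp (Lp.memLp (d i))
    have hdiff : Integrable (fun x => h x - g x) σ := hint.sub hgi
    have hdist : ∫ x, ‖h x - g x‖ ∂σ < η/4 := by
      have h1 : dist hL (d i) = ∫ x, dist (hL x) ((d i : Euc N → ℂ) x) ∂σ :=
        L1.dist_eq_integral_dist hL (d i)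
      have h2 : (∫ x, dist (hL x) ((d i : Euc N → ℂ) x) ∂σ) = ∫ x, ‖h x - g x‖ ∂σ := by
        apply integral_congr_ae
        filter_upwards [(memLp_one_iff_integrable.mpr hint).coeFn_toLp] with x hx
        rw [dist_eq_norm, hx]
      rw [h1, h2] at hi
      exact hi
    obtain ⟨n₁, hn₁⟩ := exists_nat_gt (4/η)
    refine ⟨max (i+1) n₁, fun n hn => ?_⟩
    have hni : i < n := lt_of_lt_of_le (Nat.lt_succ_self i) (le_trans (le_max_left _ _) hn)
    have hKbn := hKb n k ⟨i, hni⟩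
    have hsplit : ∀ A : Set (Euc N), MeasurableSet A →
        ‖(∫ x in A, h x ∂σ) - ∫ x in A, g x ∂σ‖ ≤ ∫ x, ‖h x - g x‖ ∂σ := by
      intro A hA
      rw [← integral_sub hint.integrableOn hgi.integrableOn]
      refine le_trans (norm_integral_le_integral_norm _) ?_
      exact setIntegral_le_integral hdiff.norm (Eventually.of_forall fun x => norm_nonneg _)
    have htot : ‖(1/2:ℂ) * (∫ x, h x ∂σ) - (1/2:ℂ) * ∫ x, g x ∂σ‖ ≤ (1/2) * ∫ x, ‖h x - g x‖ ∂σ := by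
      rw [← mul_sub, norm_mul]
      have h2 : ‖(1/2 : ℂ)‖ = 1/2 := by norm_num
      rw [h2, ← integral_sub hint hgi]
      exact mul_le_mul_of_nonneg_left (norm_integral_le_integral_norm _) (by norm_num)
    have hd2 : dist (∫ x in E n k, h x ∂σ) ((1/2 : ℂ) * ∫ x, h x ∂σ) ≤
        (∫ x, ‖h x - g x‖ ∂σ) + 1/(n+1) + (1/2) * ∫ x, ‖h x - g x‖ ∂σ := by
      rw [dist_eq_norm]
      calc ‖(∫ x in E n k, h x ∂σ) - (1/2 : ℂ) * ∫ x, h x ∂σ‖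
          = ‖((∫ x in E n k, h x ∂σ) - ∫ x in E n k, g x ∂σ)
              + ((∫ x in E n k, g x ∂σ) - (1/2:ℂ) * ∫ x, g x ∂σ)
              + ((1/2:ℂ) * (∫ x, g x ∂σ) - (1/2:ℂ) * ∫ x, h x ∂σ)‖ := by ring_nf
        _ ≤ _ := by
            refine le_trans (norm_add₃_le) ?_
            refine add_le_add (add_le_add (hsplit _ (hEm n k)) hKbn) ?_
            have : (1/2:ℂ) * (∫ x, g x ∂σ) - (1/2:ℂ) * ∫ x, h x ∂σ
                = -((1/2:ℂ) * (∫ x, h x ∂σ) - (1/2:ℂ) * ∫ x, g x ∂σ) := by ring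
            rw [this, norm_neg]
            exact htot
    have hn1 : (1:ℝ)/(n+1) < η/4 := by
      rw [div_lt_iff₀ (by positivity)]
      have : (4:ℝ)/η < n₁ := hn₁
      have hn' : (n₁ : ℝ) ≤ n := by exact_mod_cast le_trans (le_max_right _ _) hn
      rw [div_lt_iff₀ hη] at hn₁
      nlinarith [hn₁, hn']
    calc dist (∫ x in E n k, h x ∂σ) ((1/2 : ℂ) * ∫ x, h x ∂σ)
        ≤ (∫ x, ‖h x - g x‖ ∂σ) + 1/(n+1) + (1/2) * ∫ x, ‖h x - g x‖ ∂σ := hd2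
      _ < η/4 + η/4 + (1/2) * (η/4) := by
          have := integral_nonneg (μ := σ) (f := fun x => ‖h x - g x‖)
            (fun x => norm_nonneg _)
          gcongr
      _ ≤ η := by linarith
  refine ⟨E, hEm, ?_, ?_, ?_⟩
  · -- separation
    intro n
    obtain ⟨r, hr, hlt⟩ := Metric.exists_pos_forall_lt_edist (hEc n 0) (hEc n 1).isClosed (hKd n)
    refine ⟨r, by exact_mod_cast hr, fun x hx y hy => ?_⟩
    have h1 := hlt x hx y hy
    rw [edist_dist, ← ENNReal.ofReal_coe_nnreal] at h1
    exact le_of_lt ((ENNReal.ofReal_lt_ofReal_iff_of_nonneg (NNReal.coe_nonneg r)).mp h1)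
  · -- weak L² convergence
    intro k f g hf hg
    have hfg : Integrable (fun x => f x * (starRingEnd ℂ) (g x)) σ := by
      have h2 := L2.integrable_inner (𝕜 := ℂ) (hg.toLp g) (hf.toLp f)
      apply h2.congr
      filter_upwards [hg.coeFn_toLp, hf.coeFn_toLp] with x hx1 hx2
      rw [RCLike.inner_apply, hx1, hx2]
    exact key k _ hfg
  · -- Lᵖ norms
    intro p hp k f hf
    have hppos : (0:ℝ) < p := lt_of_lt_of_le one_pos hp
    have hp0 : p ≠ 0 := hppos.ne'
    have hpe0 : (ENNReal.ofReal p) ≠ 0 := by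
      simp only [ne_eq, ENNReal.ofReal_eq_zero, not_le]
      exact hppos
    have hpet : (ENNReal.ofReal p) ≠ ∞ := ofReal_ne_top
    have hptr : (ENNReal.ofReal p).toReal = p := ENNReal.toReal_ofReal hppos.le
    have hI : Integrable (fun x => ‖f x‖ ^ p) σ := by
      have := hf.integrable_norm_rpow hpe0 hpet
      rwa [hptr] at this
    have hcx := key k (fun x => ((‖f x‖ ^ p : ℝ) : ℂ)) hI.ofReal
    have hre : Tendsto (fun n => ∫ x in E n k, ‖f x‖ ^ p ∂σ) atTop
        (𝓝 ((1/2) * ∫ x, ‖f x‖ ^ p ∂σ)) := by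
      have he1 : ∀ n, (∫ x in E n k, ((‖f x‖ ^ p : ℝ) : ℂ) ∂σ)
          = ((∫ x in E n k, ‖f x‖ ^ p ∂σ : ℝ) : ℂ) := fun n => integral_ofReal
      have he2 : (∫ x, ((‖f x‖ ^ p : ℝ) : ℂ) ∂σ) = ((∫ x, ‖f x‖ ^ p ∂σ : ℝ) : ℂ) :=
        integral_ofReal
      rw [he2] at hcx
      simp_rw [he1] at hcx
      have he3 : ((1/2:ℂ) * ((∫ x, ‖f x‖ ^ p ∂σ : ℝ) : ℂ))
          = (((1/2) * ∫ x, ‖f x‖ ^ p ∂σ : ℝ) : ℂ) := by push_cast; ring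
      rw [he3] at hcx
      have h3 := (Complex.continuous_re.tendsto _).comp hcx
      simpa [Function.comp_def] using h3
    have hIset : ∀ n, 0 ≤ ∫ x in E n k, ‖f x‖ ^ p ∂σ := fun n =>
      integral_nonneg fun x => Real.rpow_nonneg (norm_nonneg _) _
    have hI0 : 0 ≤ ∫ x, ‖f x‖ ^ p ∂σ :=
      integral_nonneg fun x => Real.rpow_nonneg (norm_nonneg _) _
    have hnorm : ∀ n, (eLpNorm ((E n k).indicator f) (ENNReal.ofReal p) σ).toReal
        = (∫ x in E n k, ‖f x‖ ^ p ∂σ) ^ p⁻¹ := by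
      intro n
      have hind : MemLp ((E n k).indicator f) (ENNReal.ofReal p) σ := hf.indicator (hEm n k)
      rw [hind.eLpNorm_eq_integral_rpow_norm hpe0 hpet, hptr]
      have hieq : (∫ x, ‖(E n k).indicator f x‖ ^ p ∂σ) = ∫ x in E n k, ‖f x‖ ^ p ∂σ := by
        rw [← integral_indicator (hEm n k)]
        apply integral_congr_ae
        apply Eventually.of_forall
        intro x
        by_cases hx : x ∈ E n k
        · simp [Set.indicator_of_mem hx]
        · simp [Set.indicator_of_notMem hx, Real.zero_rpow hp0]
      rw [hieq, ENNReal.toReal_ofReal (Real.rpow_nonneg (hIset n) _)]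
    have hnormf : (eLpNorm f (ENNReal.ofReal p) σ).toReal = (∫ x, ‖f x‖ ^ p ∂σ) ^ p⁻¹ := by
      rw [hf.eLpNorm_eq_integral_rpow_norm hpe0 hpet, hptr,
        ENNReal.toReal_ofReal (Real.rpow_nonneg hI0 _)]
    simp_rw [hnorm, hnormf]
    have hlim := ((Real.continuousAt_rpow_const _ p⁻¹
      (Or.inr (by positivity))).tendsto).comp hre
    have hconst : ((1/2) * ∫ x, ‖f x‖ ^ p ∂σ) ^ p⁻¹
        = (2:ℝ) ^ (-(1/p)) * (∫ x, ‖f x‖ ^ p ∂σ) ^ p⁻¹ := by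
      rw [Real.mul_rpow (by norm_num) hI0]
      congr 1
      rw [one_div, Real.inv_rpow (by norm_num : (0:ℝ) ≤ 2),
        ← Real.rpow_neg (by norm_num : (0:ℝ) ≤ 2), one_div]
    rw [← hconst]
    exact hlim
end
end

section
/- Let μ and ν be Radon measures on ℝ^N without common atoms. For f ∈ L^p(μ) write f = f_c + f_a, where f_a := f·1_{A_μ} with A_μ = {x : μ({x}) > 0} (the purely atomic part of f) and f_c := f − f_a; define the analogous decomposition g = g_c + g_a for g ∈ L^p(ν) using A_ν = {x : ν({x}) > 0}. Then there exist sequences of Borel sets E_n^1, E_n^2 ⊆ ℝ^N such that: (1) for every n, dist(E_n^1, E_n^2) > 0; (2) the operators P_n^1 f := 1_{E_n^1}(f_c + (1/2) f_a) converge to (1/2)·I in the weak operator topology of L²(μ), i.e. ∫ (P_n^1 f) \overline{h} dμ → (1/2) ∫ f \overline{h} dμ for all f, h ∈ L²(μ), and similarly the operators P_n^2 g := 1_{E_n^2}(g_c + (1/2) g_a) converge to (1/2)·I in the weak operator topology of L²(ν); (3) for every p ∈ [1,∞), limsup_{n→∞} ‖P_n^1 f‖_{L^p(μ)} ≤ 2^{−1/p}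 ‖f‖_{L^p(μ)} for every f ∈ L^p(μ), and limsup_{n→∞} ‖P_n^2 g‖_{L^p(ν)} ≤ 2^{−1/p} ‖g‖_{L^p(ν)} for every g ∈ L^p(ν). -/
open MeasureTheory Filter Metric Complex Topology ENNReal

noncomputable section

/-- `f_c + (1/2) f_a`: the function whose purely atomic part (w.r.t. `μ`) is halved. -/
def halved {N : ℕ} (μ : Measure (Euc N)) (f : Euc N → ℂ) : Euc N → ℂ :=
  fun x => if 0 < μ {x} then (1 / 2 : ℂ) * f x else f x


set_option synthInstance.maxHeartbeats 1000000
set_option maxHeartbeats 1000000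
set_option linter.unusedSectionVars false
set_option linter.unusedVariables false

namespace SepPart
open Set

lemma countable_atoms {α : Type*} [MeasurableSpace α] [MeasurableSingletonClass α]
    (μ : Measure α) [SigmaFinite μ] : {x | 0 < μ {x}}.Countable := by
  have h := Measure.countable_meas_level_set_pos (μ := μ) (g := id) measurable_id
  have heq : {t : α | 0 < μ {a | id a = t}} = {x | 0 < μ {x}} := by
    ext t
    simp only [mem_setOf_eq, id_eq, Set.setOf_eq_eq_singleton]
  rwa [heq] at h

lemma exists_enum {α : Type*} (A : Set α) (hA : A.Countable) :
    ∃ en : ℕ → Set α, (∀ n, en n ⊆ A) ∧ (∀ n, (en n).Finite) ∧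
      (∀ x ∈ A, ∀ᶠ n in atTop, x ∈ en n) := by
  rcases A.eq_empty_or_nonempty with h | h
  · exact ⟨fun _ => ∅, by simp, by simp, by simp [h]⟩
  · obtain ⟨u, hu⟩ := hA.exists_eq_range h
    refine ⟨fun n => u '' {i | i < n}, ?_, ?_, ?_⟩
    · intro n y hy
      obtain ⟨i, _, rfl⟩ := hy
      rw [hu]
      exact mem_range_self i
    · intro n
      exact (Set.finite_Iio n).image u
    · intro x hx
      rw [hu] at hx
      obtain ⟨i, rfl⟩ := hx
      filter_upwards [eventually_gt_atTop i] with n hn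
      exact ⟨i, hn, rfl⟩

lemma exists_window {α : Type*} [MeasurableSpace α] (κ : Measure α) [IsFiniteMeasure κ]
    {L : α → ℝ} (hL : Measurable L) (c : ℝ) (hc : κ {x | L x = c} = 0)
    {η : ℝ≥0∞} (hη : 0 < η) : ∃ r : ℝ, 0 < r ∧ κ {x | dist (L x) c < r} ≤ η := by
  have hI : Tendsto (fun k : ℕ => κ {x | dist (L x) c < 1 / (k + 1)}) atTop
      (𝓝 (κ (⋂ k : ℕ, {x | dist (L x) c < 1 / (k + 1)}))) := by
    apply tendsto_measure_iInter_atTop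
    · intro k
      exact ((hL.dist measurable_const) measurableSet_Iio).nullMeasurableSet
    · intro a b hab x hx
      simp only [mem_setOf_eq] at *
      have : 1 / ((b:ℝ) + 1) ≤ 1 / ((a:ℝ) + 1) := by
        apply one_div_le_one_div_of_le (by positivity)
        exact_mod_cast add_le_add_left (Nat.cast_le.2 hab) 1
      linarith
    · exact ⟨0, measure_ne_top κ _⟩
  have hset : (⋂ k : ℕ, {x | dist (L x) c < 1 / (k + 1)}) = {x | L x = c} := by
    ext x
    simp only [mem_iInter, mem_setOf_eq]
    constructor
    · intro hk
      have hd : dist (L x) c = 0 := by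
        by_contra hd
        have hd' : 0 < dist (L x) c := lt_of_le_of_ne dist_nonneg (Ne.symm hd)
        obtain ⟨k, hkk⟩ := exists_nat_gt (1 / dist (L x) c)
        have : 1 / ((k:ℝ) + 1) < dist (L x) c := by
          rw [div_lt_iff₀ (by positivity)]
          rw [div_lt_iff₀ hd'] at hkk
          nlinarith
        exact absurd (hk k) (not_lt.2 this.le)
      rwa [dist_eq_zero] at hd
    · intro hx k
      rw [hx]
      simp only [dist_self]
      positivity
  rw [hset, hc] at hI
  obtain ⟨k, hk⟩ := (hI.eventually_le_const hη).exists
  exact ⟨1 / (k + 1), by positivity, hk⟩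

lemma halved_norm_le {N : ℕ} (μ : Measure (Euc N)) (f : Euc N → ℂ) (x : Euc N) :
    ‖halved μ f x‖ ≤ ‖f x‖ := by
  rw [halved]
  split
  · rw [norm_mul]
    have : ‖(1 / 2 : ℂ)‖ = 1 / 2 := by norm_num
    rw [this]
    nlinarith [norm_nonneg (f x)]
  · exact le_refl _

lemma halved_eq_sub {N : ℕ} (μ : Measure (Euc N)) (f : Euc N → ℂ) :
    halved μ f = fun x => f x - ({x | 0 < μ {x}}.indicator (fun y => (1 / 2 : ℂ) * f y)) x := by
  funext x
  rw [halved]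
  by_cases hx : 0 < μ {x}
  · rw [if_pos hx, indicator_of_mem (by simpa using hx : x ∈ {y : Euc N | 0 < μ {y}})]
    ring
  · rw [if_neg hx,
      indicator_of_notMem (by simpa using hx : x ∉ {y : Euc N | 0 < μ {y}}), sub_zero]

lemma aesm_halved {N : ℕ} (μ : Measure (Euc N)) [SigmaFinite μ] {f : Euc N → ℂ}
    (hf : AEStronglyMeasurable f μ) : AEStronglyMeasurable (halved μ f) μ := by
  rw [halved_eq_sub]
  apply hf.sub
  exact AEStronglyMeasurable.indicator (hf.const_mul _)
    (countable_atoms μ).measurableSet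

lemma integrable_mul_conj {N : ℕ} {μ : Measure (Euc N)} {f h : Euc N → ℂ}
    (hf : MemLp f 2 μ) (hh : MemLp h 2 μ) :
    Integrable (fun x => f x * (starRingEnd ℂ) (h x)) μ := by
  have h2 : ((2 : ℝ≥0∞)).toReal = (2 : ℝ) := by norm_num
  have hf2 : Integrable (fun x => ‖f x‖ ^ (2:ℝ)) μ := by
    have := hf.integrable_norm_rpow (by norm_num) (by norm_num)
    rwa [h2] at this
  have hh2 : Integrable (fun x => ‖h x‖ ^ (2:ℝ)) μ := by
    have := hh.integrable_norm_rpow (by norm_num) (by norm_num)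
    rwa [h2] at this
  have hbound : Integrable (fun x => (‖f x‖ ^ (2:ℝ) + ‖h x‖ ^ (2:ℝ)) / 2) μ :=
    (hf2.add hh2).div_const 2
  apply hbound.mono'
  · exact hf.aestronglyMeasurable.mul
      ((Complex.continuous_conj).comp_aestronglyMeasurable hh.aestronglyMeasurable)
  · filter_upwards with x
    rw [norm_mul]
    have hc : ‖(starRingEnd ℂ) (h x)‖ = ‖h x‖ := by
      simp
    rw [hc]
    have h1 : ‖f x‖ ^ (2:ℝ) = ‖f x‖ ^ (2:ℕ) := by
      rw [show (2:ℝ) = ((2:ℕ):ℝ) by norm_num, Real.rpow_natCast]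
    have h2' : ‖h x‖ ^ (2:ℝ) = ‖h x‖ ^ (2:ℕ) := by
      rw [show (2:ℝ) = ((2:ℕ):ℝ) by norm_num, Real.rpow_natCast]
    rw [h1, h2']
    nlinarith [sq_nonneg (‖f x‖ - ‖h x‖), norm_nonneg (f x), norm_nonneg (h x)]

lemma eLpNorm_toReal_eq {α : Type*} [MeasurableSpace α] {μ : Measure α} {g : α → ℂ}
    {p : ℝ} (hp : 1 ≤ p) (hg : MemLp g (ENNReal.ofReal p) μ) :
    (eLpNorm g (ENNReal.ofReal p) μ).toReal = (∫ x, ‖g x‖ ^ p ∂μ) ^ (1 / p) := by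
  have hp0 : ENNReal.ofReal p ≠ 0 := by
    rw [Ne, ENNReal.ofReal_eq_zero]
    linarith
  have hptop : ENNReal.ofReal p ≠ ∞ := ENNReal.ofReal_ne_top
  have htr : (ENNReal.ofReal p).toReal = p := ENNReal.toReal_ofReal (by linarith)
  rw [hg.eLpNorm_eq_integral_rpow_norm hp0 hptop, htr,
    ENNReal.toReal_ofReal (Real.rpow_nonneg (integral_nonneg fun x => by positivity) _),
    one_div]


/-- the diagonal is null for a measure without atoms -/
lemma diag_null {N : ℕ} (σ : Measure (Euc N)) [SFinite σ] (hσ : ∀ x, σ {x} = 0) :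
    (σ.prod σ) {p : Euc N × Euc N | p.1 = p.2} = 0 := by
  have hmeas : MeasurableSet {p : Euc N × Euc N | p.1 = p.2} :=
    measurableSet_eq_fun measurable_fst measurable_snd
  rw [Measure.prod_apply hmeas]
  have heq : ∀ x : Euc N, (Prod.mk x ⁻¹' {p : Euc N × Euc N | p.1 = p.2}) = {x} := by
    intro x
    ext y
    simp [eq_comm]
  simp_rw [heq]
  simp [hσ]

lemma exists_good_ell {N : ℕ} (σ : Measure (Euc N)) [IsFiniteMeasure σ]
    (hσ : ∀ x, σ {x} = 0) :
    ∃ ℓ : Euc N, ∀ t : ℝ, σ {x | (inner ℝ ℓ x : ℝ) = t} = 0 := by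
  set τ : Measure (Euc N × Euc N) := σ.prod σ with hτ
  set B : Set ((Euc N × Euc N) × Euc N) :=
    {q | q.1.1 ≠ q.1.2 ∧ (inner ℝ q.2 (q.1.1 - q.1.2) : ℝ) = 0} with hB
  have hBmeas : MeasurableSet B := by
    apply MeasurableSet.inter
    · exact (measurableSet_eq_fun (measurable_fst.comp measurable_fst)
        (measurable_snd.comp measurable_fst)).compl
    · have hc : Continuous fun q : (Euc N × Euc N) × Euc N =>
          (inner ℝ q.2 (q.1.1 - q.1.2) : ℝ) :=
        Continuous.inner continuous_snd ((continuous_fst.fst).sub (continuous_fst.snd))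
      exact hc.measurable (measurableSet_singleton 0)
  have hBnull : (τ.prod volume) B = 0 := by
    rw [Measure.prod_apply hBmeas]
    have hzero : ∀ p : Euc N × Euc N, volume (Prod.mk p ⁻¹' B) = 0 := by
      intro p
      by_cases hp : p.1 = p.2
      · have hempty : Prod.mk p ⁻¹' B = ∅ := by
          ext ℓ; simp [hB, hp]
        simp [hempty]
      · have hv : p.1 - p.2 ≠ 0 := sub_ne_zero.2 hp
        have hset : Prod.mk p ⁻¹' B
            = ((LinearMap.ker (innerSL ℝ (p.1 - p.2) : Euc N →ₗ[ℝ] ℝ) : Submodule ℝ (Euc N)) : Set (Euc N)) := by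
          ext ℓ
          simp only [hB, mem_preimage, mem_setOf_eq, SetLike.mem_coe, LinearMap.mem_ker,
            hp, ne_eq, not_false_eq_true, true_and, ContinuousLinearMap.coe_coe, innerSL_apply_apply]
          rw [real_inner_comm]
        rw [hset]
        apply Measure.addHaar_submodule
        intro hker
        have hmem : p.1 - p.2 ∈ (LinearMap.ker (innerSL ℝ (p.1 - p.2) : Euc N →ₗ[ℝ] ℝ) : Submodule ℝ (Euc N)) := by
          rw [hker]; trivial
        rw [LinearMap.mem_ker, ContinuousLinearMap.coe_coe, innerSL_apply_apply] at hmem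
        exact hv (inner_self_eq_zero.1 hmem)
    simp_rw [hzero]
    simp
  -- swap coordinates
  set B' : Set (Euc N × (Euc N × Euc N)) := {q | (q.2, q.1) ∈ B} with hB'
  have hB'meas : MeasurableSet B' := (measurable_snd.prodMk measurable_fst) hBmeas
  have hswap : (volume.prod τ) B' = 0 := by
    have h1 : (volume.prod τ) B' = (τ.prod volume) (Prod.swap ⁻¹' B') := by
      rw [← Measure.prod_swap, Measure.map_apply measurable_swap hB'meas]
    have h2 : Prod.swap ⁻¹' B' = B := by
      ext q
      simp [hB', Prod.swap]
    rw [h1, h2]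
    exact hBnull
  have hae : ∀ᵐ ℓ ∂(volume : Measure (Euc N)), τ (Prod.mk ℓ ⁻¹' B') = 0 := by
    rw [Measure.prod_apply hB'meas] at hswap
    have hmble : Measurable (fun ℓ => τ (Prod.mk ℓ ⁻¹' B')) :=
      measurable_measure_prodMk_left hB'meas
    exact (lintegral_eq_zero_iff hmble).1 hswap
  have hpos : 0 < (volume : Measure (Euc N)) univ :=
    isOpen_univ.measure_pos volume ⟨0, trivial⟩
  have hne : (volume : Measure (Euc N)) ≠ 0 := by
    intro h0
    rw [h0] at hpos
    simp at hpos
  haveI : (ae (volume : Measure (Euc N))).NeBot := ae_neBot.2 hne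
  obtain ⟨ℓ, hℓ⟩ := hae.exists
  refine ⟨ℓ, fun t => ?_⟩
  set S := {x : Euc N | (inner ℝ ℓ x : ℝ) = t} with hS
  have hsub : (S ×ˢ S) \ {p : Euc N × Euc N | p.1 = p.2} ⊆ Prod.mk ℓ ⁻¹' B' := by
    rintro ⟨x, y⟩ ⟨⟨hx, hy⟩, hne2⟩
    simp only [mem_setOf_eq] at hne2
    simp only [hB', hB, mem_preimage, mem_setOf_eq]
    refine ⟨hne2, ?_⟩
    rw [inner_sub_right]
    simp only [hS, mem_setOf_eq] at hx hy
    rw [hx, hy]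
    ring
  have h5' : τ (S ×ˢ S) ≤ 0 := by
    have hd := diag_null σ hσ
    calc τ (S ×ˢ S) ≤ τ ((S ×ˢ S) \ {p : Euc N × Euc N | p.1 = p.2})
        + τ {p : Euc N × Euc N | p.1 = p.2} := by
          apply (measure_mono _).trans (measure_union_le _ _)
          intro p hp
          by_cases hpd : p.1 = p.2
          · exact Or.inr hpd
          · exact Or.inl ⟨hp, hpd⟩
      _ ≤ τ (Prod.mk ℓ ⁻¹' B') + 0 := by
          rw [hd]
          exact add_le_add_left (measure_mono hsub) 0
      _ = 0 := by rw [hℓ, add_zero]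
  have h5 : τ (S ×ˢ S) = 0 := le_antisymm h5' zero_le
  rw [hτ, Measure.prod_prod] at h5
  rcases mul_eq_zero.1 h5 with h | h <;> exact h


section OneD

/-- small scale sequence -/
def εq (n : ℕ) : ℝ := 1 / (n + 1)

lemma εq_pos (n : ℕ) : 0 < εq n := by rw [εq]; positivity
lemma εq_le_one (n : ℕ) : εq n ≤ 1 := by
  rw [εq, div_le_one (by positivity)]; linarith [Nat.cast_nonneg (α := ℝ) n]
lemma εq_tendsto : Tendsto εq atTop (𝓝 0) := tendsto_one_div_add_atTop_nhds_zero_nat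

variable (m : Measure ℝ) [IsFiniteMeasure m]

/-- CDF of m -/
def G (t : ℝ) : ℝ := (m (Iic t)).toReal

/-- total mass -/
def M : ℝ := (m univ).toReal

lemma G_mono : Monotone (G m) := fun s t h =>
  ENNReal.toReal_mono (measure_ne_top m _) (measure_mono (Iic_subset_Iic.2 h))

lemma G_nonneg (t : ℝ) : 0 ≤ G m t := ENNReal.toReal_nonneg

lemma G_le_M (t : ℝ) : G m t ≤ M m :=
  ENNReal.toReal_mono (measure_ne_top m _) (measure_mono (subset_univ _))

lemma G_measurable : Measurable (G m) := (G_mono m).measurable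

lemma G_sub_G {s t : ℝ} (h : s ≤ t) : G m t - G m s = (m (Ioc s t)).toReal := by
  have hu : m (Iic t) = m (Iic s) + m (Ioc s t) := by
    rw [← measure_union (Iic_disjoint_Ioc le_rfl) measurableSet_Ioc, Iic_union_Ioc_eq_Iic h]
  have h1 := measure_ne_top m (Iic s)
  have h2 := measure_ne_top m (Ioc s t)
  rw [G, G, hu, ENNReal.toReal_add h1 h2]
  ring

variable (hm : ∀ t : ℝ, m {t} = 0)

include hm in
lemma G_continuous : Continuous (G m) := by
  rw [Metric.continuous_iff]
  intro t₀ ε hε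
  have hI : Tendsto (fun k : ℕ => m (Ioo (t₀ - 1 / (k + 1)) (t₀ + 1 / (k + 1)))) atTop
      (𝓝 (m (⋂ k : ℕ, Ioo (t₀ - 1 / (k + 1)) (t₀ + 1 / (k + 1))))) := by
    apply tendsto_measure_iInter_atTop
    · exact fun k => measurableSet_Ioo.nullMeasurableSet
    · intro a b hab
      have h1 : 1 / ((b:ℝ) + 1) ≤ 1 / ((a:ℝ) + 1) := by
        apply one_div_le_one_div_of_le (by positivity)
        exact_mod_cast add_le_add_left (Nat.cast_le.2 hab) 1
      exact Ioo_subset_Ioo (by linarith) (by linarith)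
    · exact ⟨0, measure_ne_top m _⟩
  have hset : (⋂ k : ℕ, Ioo (t₀ - 1 / (k + 1)) (t₀ + 1 / (k + 1))) = {t₀} := by
    ext x
    simp only [mem_iInter, mem_Ioo, mem_singleton_iff]
    constructor
    · intro h
      by_contra hne
      have hd : 0 < |x - t₀| := by
        rw [abs_pos, sub_ne_zero]; exact hne
      obtain ⟨k, hk⟩ := exists_nat_gt (1 / |x - t₀|)
      have hk1 : 1 / ((k : ℝ) + 1) < |x - t₀| := by
        rw [div_lt_iff₀ (by positivity)]
        rw [div_lt_iff₀ hd] at hk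
        nlinarith
      rcases abs_cases (x - t₀) with ⟨he, _⟩ | ⟨he, _⟩ <;> rcases h k with ⟨h1, h2⟩ <;> nlinarith
    · rintro rfl k
      constructor <;> nlinarith [one_div_pos.2 (by positivity : (0:ℝ) < (k:ℝ) + 1)]
  rw [hset, hm t₀] at hI
  have : ∀ᶠ k : ℕ in atTop, m (Ioo (t₀ - 1 / (k + 1)) (t₀ + 1 / (k + 1))) < ENNReal.ofReal ε :=
    hI.eventually_lt_const (by simp [hε])
  obtain ⟨k, hk⟩ := this.exists
  refine ⟨1 / (k + 1), by positivity, fun s hs => ?_⟩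
  have hmono : ∀ u v : ℝ, u ≤ v → Ioc u v ⊆ Ioo (t₀ - 1 / (k + 1)) (t₀ + 1 / (k + 1)) →
      dist (G m v) (G m u) < ε := by
    intro u v huv hsub
    rw [Real.dist_eq, _root_.abs_of_nonneg (by linarith [G_mono m huv]), G_sub_G m huv]
    have h1 : m (Ioc u v) < ENNReal.ofReal ε := lt_of_le_of_lt (measure_mono hsub) hk
    have := ENNReal.toReal_lt_toReal (measure_ne_top m _) ENNReal.ofReal_ne_top |>.2 h1
    rwa [ENNReal.toReal_ofReal hε.le] at this
  rw [Real.dist_eq] at hs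
  rcases le_total s t₀ with h | h
  · rw [dist_comm]
    apply hmono s t₀ h
    intro x hx
    rcases abs_cases (s - t₀) with ⟨he, _⟩ | ⟨he, _⟩ <;>
      constructor <;> simp only [mem_Ioc] at hx <;> nlinarith [hx.1, hx.2,
        one_div_pos.2 (by positivity : (0:ℝ) < (k:ℝ) + 1)]
  · apply hmono t₀ s h
    intro x hx
    rcases abs_cases (s - t₀) with ⟨he, _⟩ | ⟨he, _⟩ <;>
      constructor <;> simp only [mem_Ioc] at hx <;> nlinarith [hx.1, hx.2,
        one_div_pos.2 (by positivity : (0:ℝ) < (k:ℝ) + 1)]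


lemma M_nonneg : 0 ≤ M m := ENNReal.toReal_nonneg

include hm in
lemma exists_G_lt {ε : ℝ} (hε : 0 < ε) : ∃ t, G m t < ε := by
  have hI : Tendsto (fun k : ℕ => m (Iic (-(k : ℝ)))) atTop (𝓝 (m (⋂ k : ℕ, Iic (-(k : ℝ))))) := by
    apply tendsto_measure_iInter_atTop (fun k => measurableSet_Iic.nullMeasurableSet)
      (fun a b hab => Iic_subset_Iic.2 (by exact_mod_cast neg_le_neg (Nat.cast_le.2 hab)))
      ⟨0, measure_ne_top m _⟩
  have hset : (⋂ k : ℕ, Iic (-(k : ℝ))) = ∅ := by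
    ext x
    simp only [mem_iInter, mem_Iic, mem_empty_iff_false, iff_false, not_forall, not_le]
    obtain ⟨k, hk⟩ := exists_nat_gt (-x)
    exact ⟨k, by linarith⟩
  rw [hset, measure_empty] at hI
  have := hI.eventually_lt_const (show (0:ℝ≥0∞) < ENNReal.ofReal ε by simp [hε])
  obtain ⟨k, hk⟩ := this.exists
  refine ⟨-(k:ℝ), ?_⟩
  have := ENNReal.toReal_lt_toReal (measure_ne_top m _) ENNReal.ofReal_ne_top |>.2 hk
  rwa [ENNReal.toReal_ofReal hε.le] at this

include hm in
lemma exists_lt_G {b : ℝ} (hb : b < M m) : ∃ t, b < G m t := by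
  have hI : Tendsto (fun k : ℕ => m (Iic (k : ℝ))) atTop (𝓝 (m (⋃ k : ℕ, Iic (k : ℝ)))) := by
    apply tendsto_measure_iUnion_atTop
    exact fun a b hab => Iic_subset_Iic.2 (Nat.cast_le.2 hab)
  have hset : (⋃ k : ℕ, Iic (k : ℝ)) = univ := by
    ext x
    simp only [mem_iUnion, mem_Iic, mem_univ, iff_true]
    obtain ⟨k, hk⟩ := exists_nat_gt x
    exact ⟨k, hk.le⟩
  rw [hset] at hI
  have hc : Tendsto (fun k : ℕ => G m (k : ℝ)) atTop (𝓝 (M m)) :=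
    (ENNReal.tendsto_toReal (measure_ne_top m _)).comp hI
  obtain ⟨k, hk⟩ := ((tendsto_order.1 hc).1 b hb).exists
  exact ⟨(k:ℝ), hk⟩

include hm in
lemma meas_G_le {b : ℝ} (hb : 0 ≤ b) : (m {t | G m t ≤ b}).toReal = min b (M m) := by
  rcases le_or_gt (M m) b with hbM | hbM
  · have : {t | G m t ≤ b} = univ := eq_univ_of_forall fun t => le_trans (G_le_M m t) hbM
    rw [this, min_eq_right hbM]; rfl
  · rcases eq_empty_or_nonempty {t | G m t ≤ b} with hS | hS
    · rw [hS, measure_empty]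
      rcases eq_or_lt_of_le hb with rfl | hb'
      · simp [min_eq_left (M_nonneg m)]
      · obtain ⟨t, ht⟩ := exists_G_lt m hm hb'
        exact absurd (eq_empty_iff_forall_notMem.1 hS t) (by simp [ht.le])
    · have hclosed : IsClosed {t | G m t ≤ b} :=
        isClosed_le (G_continuous m hm) continuous_const
      obtain ⟨t₁, ht₁⟩ := exists_lt_G m hm hbM
      have hbdd : BddAbove {t | G m t ≤ b} := by
        refine ⟨t₁, fun s hs => ?_⟩
        by_contra hst
        push_neg at hst
        exact absurd (le_trans (G_mono m hst.le) hs) (not_le.2 ht₁)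
      set s := sSup {t | G m t ≤ b} with hs_def
      have hmem : s ∈ {t | G m t ≤ b} := hclosed.csSup_mem hS hbdd
      have hSet : {t | G m t ≤ b} = Iic s := by
        apply Subset.antisymm (fun x hx => le_csSup hbdd hx)
        intro x hx
        exact le_trans (G_mono m hx) hmem
      have hGs : G m s = b := by
        refine le_antisymm hmem ?_
        have hseq : Tendsto (fun k : ℕ => G m (s + 1 / (k + 1))) atTop (𝓝 (G m s)) := by
          apply ((G_continuous m hm).tendsto s).comp
          have : Tendsto (fun k : ℕ => 1 / ((k:ℝ) + 1)) atTop (𝓝 0) :=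
            tendsto_one_div_add_atTop_nhds_zero_nat
          simpa using tendsto_const_nhds.add this
        apply ge_of_tendsto hseq
        filter_upwards with k
        by_contra hlt
        push_neg at hlt
        have : s + 1 / ((k:ℝ) + 1) ∈ {t | G m t ≤ b} := hlt.le
        rw [hSet, mem_Iic] at this
        nlinarith [one_div_pos.2 (by positivity : (0:ℝ) < (k:ℝ) + 1)]
      rw [hSet, min_eq_left hbM.le, ← hGs]; rfl

include hm in
lemma meas_G_lt {b : ℝ} (hb : 0 ≤ b) : (m {t | G m t < b}).toReal = min b (M m) := by
  rcases eq_or_lt_of_le hb with rfl | hb'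
  · have : {t | G m t < 0} = ∅ := eq_empty_of_forall_notMem fun t ht =>
      absurd ht (not_lt.2 (G_nonneg m t))
    simp [this, min_eq_left (M_nonneg m)]
  · have hU : {t | G m t < b} = ⋃ k : ℕ, {t | G m t ≤ b - b / (k + 2)} := by
      ext x
      simp only [mem_setOf_eq, mem_iUnion]
      constructor
      · intro hx
        have hd : 0 < b - G m x := by linarith
        obtain ⟨k, hk⟩ := exists_nat_gt (b / (b - G m x))
        refine ⟨k, ?_⟩
        have h2 : b / ((k:ℝ) + 2) < b - G m x := by
          rw [div_lt_iff₀ (by positivity)]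
          rw [div_lt_iff₀ hd] at hk
          nlinarith [G_nonneg m x]
        linarith
      · rintro ⟨k, hk⟩
        have : 0 < b / ((k:ℝ) + 2) := by positivity
        linarith
    rw [hU]
    have hI : Tendsto (fun k : ℕ => m {t | G m t ≤ b - b / (k + 2)}) atTop
        (𝓝 (m (⋃ k : ℕ, {t | G m t ≤ b - b / (k + 2)}))) := by
      apply tendsto_measure_iUnion_atTop
      intro a c hac x hx
      simp only [mem_setOf_eq] at *
      have : b / ((c:ℝ) + 2) ≤ b / ((a:ℝ) + 2) := by
        apply div_le_div_of_nonneg_left hb (by positivity)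
        exact_mod_cast add_le_add_left (Nat.cast_le.2 hac) 2
      linarith
    have hIr : Tendsto (fun k : ℕ => (m {t | G m t ≤ b - b / (k + 2)}).toReal) atTop
        (𝓝 ((m (⋃ k : ℕ, {t | G m t ≤ b - b / (k + 2)})).toReal)) :=
      (ENNReal.tendsto_toReal (measure_ne_top m _)).comp hI
    have hval : ∀ k : ℕ, (m {t | G m t ≤ b - b / (k + 2)}).toReal
        = min (b - b / (k + 2)) (M m) := by
      intro k
      apply meas_G_le m hm
      have : b / ((k:ℝ) + 2) ≤ b / 2 := by
        apply div_le_div_of_nonneg_left hb (by positivity) (by norm_num)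
      linarith
    have hlim : Tendsto (fun k : ℕ => min (b - b / (k + 2)) (M m)) atTop
        (𝓝 (min b (M m))) := by
      apply Tendsto.min _ tendsto_const_nhds
      have h1 : Tendsto (fun k : ℕ => b / ((k:ℝ) + 2)) atTop (𝓝 0) := by
        apply Tendsto.div_atTop tendsto_const_nhds
        apply tendsto_atTop_add_const_right
        exact tendsto_natCast_atTop_atTop
      simpa using tendsto_const_nhds.sub h1
    rw [tendsto_congr hval] at hIr
    exact tendsto_nhds_unique hIr hlim

include hm in
lemma meas_G_eq (b : ℝ) : m {t | G m t = b} = 0 := by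
  rcases lt_or_ge b 0 with hb | hb
  · have : {t | G m t = b} = ∅ := eq_empty_of_forall_notMem fun t ht => by
      simp only [mem_setOf_eq] at ht
      nlinarith [G_nonneg m t]
    simp [this]
  · have hsub : {t | G m t = b} = {t | G m t ≤ b} \ {t | G m t < b} := by
      ext x; simp only [mem_setOf_eq, mem_diff, not_lt]
      constructor
      · intro h; exact ⟨h.le, h.ge⟩
      · intro ⟨h1, h2⟩; exact le_antisymm h1 h2
    have hmeas_lt : MeasurableSet {t | G m t < b} :=
      measurableSet_lt (G_measurable m) measurable_const
    have hss : {t | G m t < b} ⊆ {t | G m t ≤ b} := fun x hx => by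
      simp only [mem_setOf_eq] at *; exact le_of_lt hx
    rw [hsub, measure_diff hss hmeas_lt.nullMeasurableSet (measure_ne_top m _)]
    have h1 := meas_G_le m hm hb
    have h2 := meas_G_lt m hm hb
    have : m {t | G m t ≤ b} = m {t | G m t < b} :=
      (ENNReal.toReal_eq_toReal_iff' (measure_ne_top m _) (measure_ne_top m _)).1 (h1.trans h2.symm)
    rw [this, tsub_self]

include hm in
lemma meas_G_Icc {a c : ℝ} (ha : 0 ≤ a) (hac : a ≤ c) :
    (m (G m ⁻¹' Icc a c)).toReal = min c (M m) - min a (M m) := by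
  have hset : G m ⁻¹' Icc a c = {t | G m t ≤ c} \ {t | G m t < a} := by
    ext x
    simp only [mem_preimage, mem_Icc, mem_diff, mem_setOf_eq, not_lt]
    tauto
  have hss : {t | G m t < a} ⊆ {t | G m t ≤ c} := fun x hx => le_trans (le_of_lt hx) hac
  have hmeas : MeasurableSet {t | G m t < a} :=
    measurableSet_lt (G_measurable m) measurable_const
  rw [hset, measure_diff hss hmeas.nullMeasurableSet (measure_ne_top m _),
    ENNReal.toReal_sub_of_le (measure_mono hss) (measure_ne_top m _),
    meas_G_le m hm (le_trans ha hac), meas_G_lt m hm ha]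


/-- block sets: union over k of [(2k+j)ε, (2k+j+1)ε - ε²] -/
def Cs (j : ℕ) (ε : ℝ) : Set ℝ :=
  ⋃ k : ℕ, Icc ((2 * k + j) * ε) ((2 * k + j + 1) * ε - ε ^ 2)

lemma Cs_measurable (j : ℕ) (ε : ℝ) : MeasurableSet (Cs j ε) :=
  MeasurableSet.iUnion fun _ => measurableSet_Icc

lemma Cs_gap {ε : ℝ} (hε : 0 < ε) (u v : ℝ) (hu : u ∈ Cs 0 ε) (hv : v ∈ Cs 1 ε) :
    ε ^ 2 ≤ dist u v := by
  obtain ⟨_, ⟨k, rfl⟩, hu⟩ := hu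
  obtain ⟨_, ⟨k', rfl⟩, hv⟩ := hv
  simp only [mem_Icc] at hu hv
  rw [Real.dist_eq]
  rcases le_or_gt k k' with h | h
  · have hkk : (k : ℝ) ≤ (k' : ℝ) := Nat.cast_le.2 h
    rw [abs_sub_comm, _root_.abs_of_nonneg (by push_cast at *; nlinarith)]
    push_cast at *; nlinarith
  · have hkk : (k' : ℝ) + 1 ≤ (k : ℝ) := by exact_mod_cast Nat.succ_le_of_lt h
    rw [_root_.abs_of_nonneg (by push_cast at *; nlinarith)]
    push_cast at *; nlinarith

/-- the explicit length function -/
def Lf (j : ℕ) (ε c : ℝ) (k : ℕ) : ℝ :=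
  if (2 * k + j) * ε ≤ min ((2 * k + j + 1) * ε - ε ^ 2) c
  then min ((2 * k + j + 1) * ε - ε ^ 2) c - (2 * k + j) * ε else 0

lemma Lf_nonneg (j : ℕ) (ε c : ℝ) (k : ℕ) : 0 ≤ Lf j ε c k := by
  rw [Lf]; split <;> simp_all

lemma Lf_le (j : ℕ) {ε : ℝ} (hε : 0 < ε) (c : ℝ) (k : ℕ) : Lf j ε c k ≤ ε := by
  rw [Lf]; split
  · have : min ((2 * k + j + 1) * ε - ε ^ 2) c ≤ (2 * k + j + 1) * ε - ε ^ 2 := min_le_left _ _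
    nlinarith [sq_nonneg ε]
  · linarith

lemma Lf_eq_zero {j : ℕ} {ε c : ℝ} (hε : 0 < ε) (hc : 0 ≤ c) {k : ℕ}
    (hk : Nat.floor (c / (2 * ε)) + 1 ≤ k) : Lf j ε c k = 0 := by
  rw [Lf, if_neg]
  push_neg
  have h1 : c / (2 * ε) < k := by
    calc c / (2 * ε) < Nat.floor (c / (2 * ε)) + 1 := Nat.lt_floor_add_one _
    _ ≤ k := by exact_mod_cast hk
  have h2 : c < 2 * k * ε := by
    rw [div_lt_iff₀ (by positivity)] at h1
    nlinarith
  calc min ((2 * k + j + 1) * ε - ε ^ 2) c ≤ c := min_le_right _ _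
  _ < 2 * k * ε := h2
  _ ≤ (2 * k + j) * ε := by nlinarith [Nat.cast_nonneg (α := ℝ) j]

lemma Lf_eq_full {j : ℕ} (hj : j ≤ 1) {ε c : ℝ} (hε : 0 < ε) (hε1 : ε ≤ 1) {k : ℕ}
    (hk : k < Nat.floor (c / (2 * ε))) : Lf j ε c k = ε - ε ^ 2 := by
  have hpos : 0 ≤ c / (2 * ε) := by
    by_contra h
    push_neg at h
    have : Nat.floor (c / (2 * ε)) = 0 := Nat.floor_of_nonpos h.le
    omega
  have hk1 : (k : ℝ) + 1 ≤ c / (2 * ε) := by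
    have h1 : (k + 1 : ℕ) ≤ Nat.floor (c / (2 * ε)) := hk
    calc ((k : ℝ) + 1) = ((k + 1 : ℕ) : ℝ) := by push_cast; ring
    _ ≤ Nat.floor (c / (2 * ε)) := by exact_mod_cast h1
    _ ≤ c / (2 * ε) := Nat.floor_le hpos
  have hc2 : (2 * k + 2) * ε ≤ c := by
    rw [le_div_iff₀ (by positivity)] at hk1
    nlinarith
  have hjr : (j : ℝ) ≤ 1 := by exact_mod_cast hj
  have hble : (2 * k + j + 1) * ε - ε ^ 2 ≤ c := by nlinarith [sq_nonneg ε]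
  rw [Lf, min_eq_left hble, if_pos (by nlinarith)]
  ring

lemma Lf_sum_bounds {j : ℕ} (hj : j ≤ 1) {ε c : ℝ} (hε : 0 < ε) (hε1 : ε ≤ 1) (hc : 0 ≤ c) :
    Summable (Lf j ε c) ∧
    c / 2 - (c / 2) * ε - ε ≤ ∑' k, Lf j ε c k ∧ ∑' k, Lf j ε c k ≤ c / 2 + ε := by
  set K := Nat.floor (c / (2 * ε)) + 1 with hK
  have hvanish : ∀ k ∉ Finset.range K, Lf j ε c k = 0 := by
    intro k hk
    simp only [Finset.mem_range, not_lt] at hk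
    exact Lf_eq_zero hε hc hk
  have hsummable : Summable (Lf j ε c) := summable_of_ne_finset_zero hvanish
  have hsum : ∑' k, Lf j ε c k = ∑ k ∈ Finset.range K, Lf j ε c k :=
    tsum_eq_sum hvanish
  refine ⟨hsummable, ?_, ?_⟩
  · -- lower bound
    have hsub : Finset.range (Nat.floor (c / (2 * ε))) ⊆ Finset.range K :=
      Finset.range_subset_range.2 (by omega)
    have hlow : ∑ k ∈ Finset.range (Nat.floor (c / (2 * ε))), Lf j ε c k
        ≤ ∑ k ∈ Finset.range K, Lf j ε c k :=
      Finset.sum_le_sum_of_subset_of_nonneg hsub fun k _ _ => Lf_nonneg j ε c k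
    have hfull : ∑ k ∈ Finset.range (Nat.floor (c / (2 * ε))), Lf j ε c k
        = (Nat.floor (c / (2 * ε)) : ℝ) * (ε - ε ^ 2) := by
      rw [Finset.sum_congr rfl fun k hk => Lf_eq_full hj hε hε1 (Finset.mem_range.1 hk)]
      simp [mul_comm]
      ring
    have hfl : c / (2 * ε) - 1 ≤ (Nat.floor (c / (2 * ε)) : ℝ) := by
      have := Nat.lt_floor_add_one (c / (2 * ε))
      linarith
    have hεε : 0 ≤ ε - ε ^ 2 := by nlinarith
    have : (c / (2 * ε) - 1) * (ε - ε ^ 2) ≤ (Nat.floor (c / (2 * ε)) : ℝ) * (ε - ε ^ 2) :=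
      mul_le_mul_of_nonneg_right hfl hεε
    have hexp : (c / (2 * ε) - 1) * (ε - ε ^ 2) = c / 2 - (c / 2) * ε - ε + ε ^ 2 := by
      field_simp
      ring
    rw [hsum]
    nlinarith [sq_nonneg ε]
  · -- upper bound
    rw [hsum]
    have h1 : ∑ k ∈ Finset.range K, Lf j ε c k ≤ (K : ℝ) * ε := by
      calc ∑ k ∈ Finset.range K, Lf j ε c k ≤ ∑ _k ∈ Finset.range K, ε :=
        Finset.sum_le_sum fun k _ => Lf_le j hε c k
      _ = (K : ℝ) * ε := by simp [mul_comm]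
    have h2 : (K : ℝ) ≤ c / (2 * ε) + 1 := by
      rw [hK]
      push_cast
      have := Nat.floor_le (show 0 ≤ c / (2 * ε) by positivity)
      linarith
    calc ∑ k ∈ Finset.range K, Lf j ε c k ≤ (K : ℝ) * ε := h1
    _ ≤ (c / (2 * ε) + 1) * ε := by nlinarith
    _ = c / 2 + ε := by field_simp


lemma F_measurable (j : ℕ) (n : ℕ) : MeasurableSet (G m ⁻¹' Cs j (εq n)) :=
  (G_measurable m) (Cs_measurable j (εq n))

/-- generic: halving measure asymptotics upgrades from sets to integrals -/
lemma tendsto_setIntegral_general {α : Type*} [MeasurableSpace α] (κ : Measure α)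
    (F : ℕ → Set α) (hF : ∀ n, MeasurableSet (F n))
    (hbase : ∀ s : Set α, MeasurableSet s → κ s < ⊤ →
      Tendsto (fun n => (κ (F n ∩ s)).toReal) atTop (𝓝 ((κ s).toReal / 2)))
    {E : Type*} [NormedAddCommGroup E] [NormedSpace ℝ E] [CompleteSpace E]
    {w : α → E} (hw : Integrable w κ) :
    Tendsto (fun n => ∫ x in F n, w x ∂κ) atTop (𝓝 ((2⁻¹ : ℝ) • ∫ x, w x ∂κ)) := by
  have main : ∀ ⦃w : α → E⦄, Integrable w κ →
      Tendsto (fun n => ∫ x in F n, w x ∂κ) atTop (𝓝 ((2⁻¹ : ℝ) • ∫ x, w x ∂κ)) := by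
    apply Integrable.induction
    · intro c s hs hsfin
      have heq : ∀ n, ∫ x in F n, s.indicator (fun _ => c) x ∂κ
          = (κ (F n ∩ s)).toReal • c := by
        intro n
        rw [setIntegral_indicator hs, setIntegral_const]; rfl
      have heq2 : (2⁻¹ : ℝ) • ∫ x, s.indicator (fun _ => c) x ∂κ
          = ((κ s).toReal / 2) • c := by
        rw [integral_indicator_const c hs, smul_smul]
        congr 1
        rw [measureReal_def]
        ring
      rw [tendsto_congr heq, heq2]
      exact (hbase s hs hsfin).smul_const c
    · intro f g _hd hf hg Pf Pg
      have heq : ∀ n, ∫ x in F n, (f + g) x ∂κ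
          = (∫ x in F n, f x ∂κ) + ∫ x in F n, g x ∂κ :=
        fun n => integral_add hf.integrableOn hg.integrableOn
      have heq2 : (2⁻¹ : ℝ) • ∫ x, (f + g) x ∂κ
          = (2⁻¹ : ℝ) • (∫ x, f x ∂κ) + (2⁻¹ : ℝ) • ∫ x, g x ∂κ := by
        have : ∫ x, (f + g) x ∂κ = (∫ x, f x ∂κ) + ∫ x, g x ∂κ := by
          simpa using integral_add hf hg
        rw [this, smul_add]
      rw [tendsto_congr heq, heq2]
      exact Pf.add Pg
    · apply IsSeqClosed.isClosed
      intro x p hxP hxp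
      simp only [Set.mem_setOf_eq] at hxP ⊢
      have hint : ∀ (u : MeasureTheory.Lp E 1 κ), Integrable (u : α → E) κ :=
        fun u => MeasureTheory.L1.integrable_coeFn u
      rw [tendsto_iff_norm_sub_tendsto_zero]
      have key : ∀ δ : ℝ, 0 < δ → ∀ᶠ n in atTop,
          ‖(∫ x' in F n, (p : α → E) x' ∂κ) - (2⁻¹ : ℝ) • ∫ x', (p : α → E) x' ∂κ‖ ≤ δ := by
        intro δ hδ
        obtain ⟨N, hN⟩ := Metric.tendsto_atTop.1 hxp (δ / 4) (by linarith)
        set k := N with hkdef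
        have hk := hN N (le_refl N)
        have hdist : ∫ x', ‖(x k : α → E) x' - (p : α → E) x'‖ ∂κ ≤ δ / 4 := by
          have h1 : ‖x k - p‖ = ∫ x', ‖(x k - p : MeasureTheory.Lp E 1 κ) x'‖ ∂κ :=
            MeasureTheory.L1.norm_eq_integral_norm _
          have h2 : ∫ x', ‖(x k - p : MeasureTheory.Lp E 1 κ) x'‖ ∂κ
              = ∫ x', ‖(x k : α → E) x' - (p : α → E) x'‖ ∂κ := by
            apply integral_congr_ae
            filter_upwards [MeasureTheory.Lp.coeFn_sub (x k) p] with t ht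
            rw [ht, Pi.sub_apply]
          rw [dist_eq_norm] at hk
          rw [← h2, ← h1]
          exact hk.le
        have hPk := hxP k
        rw [tendsto_iff_norm_sub_tendsto_zero] at hPk
        filter_upwards [hPk.eventually (eventually_le_nhds (show (0:ℝ) < δ / 4 by linarith))]
          with n hn
        have hsub : Integrable (fun t => (p : α → E) t - (x k : α → E) t) κ :=
          (hint p).sub (hint (x k))
        have e1 : ‖(∫ x' in F n, (p : α → E) x' ∂κ) - ∫ x' in F n, (x k : α → E) x' ∂κ‖
            ≤ δ / 4 := by
          rw [← integral_sub (hint p).integrableOn (hint (x k)).integrableOn]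
          calc ‖∫ x' in F n, ((p : α → E) x' - (x k : α → E) x') ∂κ‖
              ≤ ∫ x' in F n, ‖(p : α → E) x' - (x k : α → E) x'‖ ∂κ :=
                norm_integral_le_integral_norm _
            _ ≤ ∫ x', ‖(p : α → E) x' - (x k : α → E) x'‖ ∂κ :=
                setIntegral_le_integral hsub.norm
                  (Eventually.of_forall fun t => norm_nonneg _)
            _ = ∫ x', ‖(x k : α → E) x' - (p : α → E) x'‖ ∂κ := by simp_rw [norm_sub_rev]
            _ ≤ δ / 4 := hdist
        have e2 : ‖(2⁻¹ : ℝ) • (∫ x', (p : α → E) x' ∂κ)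
            - (2⁻¹ : ℝ) • ∫ x', (x k : α → E) x' ∂κ‖ ≤ δ / 4 := by
          rw [← smul_sub, ← integral_sub (hint p) (hint (x k)), norm_smul]
          calc ‖(2⁻¹:ℝ)‖ * ‖∫ x', ((p : α → E) x' - (x k : α → E) x') ∂κ‖
              ≤ 1 * ∫ x', ‖(p : α → E) x' - (x k : α → E) x'‖ ∂κ := by
                apply mul_le_mul
                  (by rw [Real.norm_eq_abs, _root_.abs_of_nonneg (by norm_num : (0:ℝ) ≤ 2⁻¹)]; norm_num)
                  (norm_integral_le_integral_norm _) (norm_nonneg _) (by norm_num)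
            _ = ∫ x', ‖(x k : α → E) x' - (p : α → E) x'‖ ∂κ := by
                rw [one_mul]; simp_rw [norm_sub_rev]
            _ ≤ δ / 4 := hdist
        calc ‖(∫ x' in F n, (p : α → E) x' ∂κ) - (2⁻¹ : ℝ) • ∫ x', (p : α → E) x' ∂κ‖
            ≤ ‖(∫ x' in F n, (p : α → E) x' ∂κ) - ∫ x' in F n, (x k : α → E) x' ∂κ‖
            + ‖(∫ x' in F n, (x k : α → E) x' ∂κ) - (2⁻¹ : ℝ) • ∫ x', (x k : α → E) x' ∂κ‖
            + ‖(2⁻¹ : ℝ) • (∫ x', (x k : α → E) x' ∂κ)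
              - (2⁻¹ : ℝ) • ∫ x', (p : α → E) x' ∂κ‖ := by
              have h3 := norm_add₃_le
                (a := (∫ x' in F n, (p : α → E) x' ∂κ) - ∫ x' in F n, (x k : α → E) x' ∂κ)
                (b := (∫ x' in F n, (x k : α → E) x' ∂κ)
                  - (2⁻¹ : ℝ) • ∫ x', (x k : α → E) x' ∂κ)
                (c := (2⁻¹ : ℝ) • (∫ x', (x k : α → E) x' ∂κ)
                  - (2⁻¹ : ℝ) • ∫ x', (p : α → E) x' ∂κ)
              convert h3 using 2
              · rfl
              · abel
          _ ≤ δ / 4 + δ / 4 + δ / 4 := by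
              refine add_le_add (add_le_add e1 hn) ?_
              rw [norm_sub_rev]
              exact e2
          _ ≤ δ := by linarith
      rw [NormedAddCommGroup.tendsto_nhds_zero]
      intro ε hε
      filter_upwards [key (ε / 2) (by linarith)] with n hn
      rw [Real.norm_eq_abs, _root_.abs_of_nonneg (norm_nonneg _)]
      linarith
    · intro f g hfg hf Pf
      have heq : ∀ n, ∫ x in F n, g x ∂κ = ∫ x in F n, f x ∂κ :=
        fun n => integral_congr_ae (ae_restrict_of_ae hfg.symm)
      have heq2 : ∫ x, g x ∂κ = ∫ x, f x ∂κ := integral_congr_ae hfg.symm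
      rw [tendsto_congr heq, heq2]
      exact Pf
  exact main hw



include hm in
lemma meas_F_inter {j : ℕ} (hj : j ≤ 1) {ε : ℝ} (hε : 0 < ε) (hε1 : ε ≤ 1) {c : ℝ}
    (hc : 0 ≤ c) (hcM : c ≤ M m) :
    (m (G m ⁻¹' Cs j ε ∩ {t | G m t ≤ c})).toReal = ∑' k, Lf j ε c k := by
  have hset : G m ⁻¹' Cs j ε ∩ {t | G m t ≤ c}
      = ⋃ k : ℕ, G m ⁻¹' Icc ((2 * k + j) * ε) (min ((2 * k + j + 1) * ε - ε ^ 2) c) := by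
    ext x
    simp only [Cs, mem_inter_iff, mem_preimage, mem_iUnion, mem_Icc, mem_setOf_eq, le_min_iff]
    constructor
    · rintro ⟨⟨k, h1, h2⟩, h3⟩; exact ⟨k, h1, h2, h3⟩
    · rintro ⟨k, h1, h2, h3⟩; exact ⟨⟨k, h1, h2⟩, h3⟩
  have hdisj : Pairwise (Function.onFun Disjoint fun k : ℕ =>
      G m ⁻¹' Icc ((2 * k + j) * ε) (min ((2 * k + j + 1) * ε - ε ^ 2) c)) := by
    intro k k' hkk
    apply Set.disjoint_left.2
    intro x hx hx'
    simp only [mem_preimage, mem_Icc, le_min_iff, min_le_iff] at hx hx'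
    rcases Nat.lt_or_ge k k' with h | h
    · have h1 : (k : ℝ) + 1 ≤ (k' : ℝ) := by exact_mod_cast Nat.succ_le_of_lt h
      have := hx.2.1
      have := hx'.1
      nlinarith [sq_nonneg ε, Nat.cast_nonneg (α := ℝ) j]
    · have h2 : (k' : ℝ) + 1 ≤ (k : ℝ) := by
        exact_mod_cast Nat.succ_le_of_lt (lt_of_le_of_ne h fun he => hkk he.symm)
      have := hx'.2.1
      have := hx.1
      nlinarith [sq_nonneg ε, Nat.cast_nonneg (α := ℝ) j]
  have hmeask : ∀ k : ℕ, MeasurableSet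
      (G m ⁻¹' Icc ((2 * k + j) * ε) (min ((2 * k + j + 1) * ε - ε ^ 2) c)) :=
    fun k => (G_measurable m) measurableSet_Icc
  rw [hset, measure_iUnion hdisj hmeask]
  rw [ENNReal.tsum_toReal_eq (fun k => measure_ne_top m _)]
  congr 1
  ext k
  rcases le_or_gt ((2 * k + j) * ε) (min ((2 * k + j + 1) * ε - ε ^ 2) c) with h | h
  · have ha : (0:ℝ) ≤ (2 * k + j) * ε := by positivity
    rw [meas_G_Icc m hm ha h, Lf, if_pos h]
    have h1 : min ((2 * k + j + 1) * ε - ε ^ 2) c ≤ M m := le_trans (min_le_right _ _) hcM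
    rw [min_eq_left h1, min_eq_left (le_trans h h1)]
  · rw [Icc_eq_empty (not_le.2 h), preimage_empty, measure_empty, Lf, if_neg (not_le.2 h)]
    rfl

include hm in
lemma tendsto_meas_F_inter {j : ℕ} (hj : j ≤ 1) {c : ℝ} (hc : 0 ≤ c) (hcM : c ≤ M m) :
    Tendsto (fun n => (m (G m ⁻¹' Cs j (εq n) ∩ {t | G m t ≤ c})).toReal) atTop (𝓝 (c / 2)) := by
  have heq : ∀ n, (m (G m ⁻¹' Cs j (εq n) ∩ {t | G m t ≤ c})).toReal = ∑' k, Lf j (εq n) c k :=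
    fun n => meas_F_inter m hm hj (εq_pos n) (εq_le_one n) hc hcM
  simp_rw [heq]
  have hlow : Tendsto (fun n => c / 2 - (c / 2) * εq n - εq n) atTop (𝓝 (c / 2)) := by
    have := ((tendsto_const_nhds (x := c/2) (f := atTop (α := ℕ))).sub
      (εq_tendsto.const_mul (c/2))).sub εq_tendsto
    simpa using this
  have hhigh : Tendsto (fun n => c / 2 + εq n) atTop (𝓝 (c / 2)) := by
    have := (tendsto_const_nhds (x := c/2) (f := atTop (α := ℕ))).add εq_tendsto
    simpa using this
  apply tendsto_of_tendsto_of_tendsto_of_le_of_le hlow hhigh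
  · exact fun n => (Lf_sum_bounds hj (εq_pos n) (εq_le_one n) hc).2.1
  · exact fun n => (Lf_sum_bounds hj (εq_pos n) (εq_le_one n) hc).2.2

include hm in
lemma tendsto_meas_F_univ {j : ℕ} (hj : j ≤ 1) :
    Tendsto (fun n => (m (G m ⁻¹' Cs j (εq n))).toReal) atTop (𝓝 (M m / 2)) := by
  have huniv : {t | G m t ≤ M m} = univ := eq_univ_of_forall fun t => G_le_M m t
  have := tendsto_meas_F_inter m hm hj (M_nonneg m) (le_refl (M m))
  simpa [huniv] using this

include hm in
lemma tendsto_meas_F_Iic {j : ℕ} (hj : j ≤ 1) (x : ℝ) :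
    Tendsto (fun n => (m (G m ⁻¹' Cs j (εq n) ∩ Iic x)).toReal) atTop (𝓝 ((m (Iic x)).toReal / 2)) := by
  have hae : ∀ S : Set ℝ, MeasurableSet S → m (S ∩ Iic x) = m (S ∩ {t | G m t ≤ G m x}) := by
    intro S hS
    have hsub1 : Iic x ⊆ {t | G m t ≤ G m x} := fun t ht => G_mono m ht
    have hdiff : {t | G m t ≤ G m x} \ Iic x ⊆ {t | G m t = G m x} := by
      intro t ⟨ht1, ht2⟩
      simp only [mem_Iic, not_le] at ht2
      simp only [mem_setOf_eq] at *
      exact le_antisymm ht1 (G_mono m ht2.le)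
    have hnull : m ({t | G m t ≤ G m x} \ Iic x) = 0 :=
      measure_mono_null hdiff (meas_G_eq m hm (G m x))
    apply le_antisymm
    · exact measure_mono (inter_subset_inter_right S hsub1)
    · calc m (S ∩ {t | G m t ≤ G m x})
          ≤ m (S ∩ Iic x ∪ ({t | G m t ≤ G m x} \ Iic x)) := by
            apply measure_mono
            intro t ⟨htS, htG⟩
            by_cases htx : t ∈ Iic x
            · exact Or.inl ⟨htS, htx⟩
            · exact Or.inr ⟨htG, htx⟩
      _ ≤ m (S ∩ Iic x) + m ({t | G m t ≤ G m x} \ Iic x) := measure_union_le _ _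
      _ = m (S ∩ Iic x) := by rw [hnull, add_zero]
  have hGx : (m (Iic x)).toReal = G m x := rfl
  rw [hGx]
  have := tendsto_meas_F_inter m hm hj (G_nonneg m x) (G_le_M m x)
  apply this.congr
  intro n
  rw [hae _ ((G_measurable m) (Cs_measurable j (εq n)))]

/-- helper: tendsto if approximable -/
lemma tendsto_of_near {a : ℕ → ℝ} {L : ℝ}
    (h : ∀ δ : ℝ, 0 < δ → ∃ (A : ℕ → ℝ) (La : ℝ), Tendsto A atTop (𝓝 La) ∧
      (∀ᶠ n in atTop, |a n - A n| ≤ δ) ∧ |L - La| ≤ δ) :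
    Tendsto a atTop (𝓝 L) := by
  rw [Metric.tendsto_atTop]
  intro ε hε
  obtain ⟨A, La, hA, hnear, hLa⟩ := h (ε / 4) (by linarith)
  have h2 : ∀ᶠ n in atTop, |A n - La| < ε / 4 := by
    have := Metric.tendsto_atTop.1 hA (ε / 4) (by linarith)
    obtain ⟨n₀, hn₀⟩ := this
    filter_upwards [eventually_ge_atTop n₀] with n hn
    simpa [Real.dist_eq] using hn₀ n hn
  obtain ⟨n₀, hn₀⟩ := (hnear.and h2).exists_forall_of_atTop
  refine ⟨n₀, fun n hn => ?_⟩
  obtain ⟨hn1, hn2⟩ := hn₀ n hn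
  rw [Real.dist_eq]
  have : |a n - L| ≤ |a n - A n| + |A n - La| + |La - L| := by
    calc |a n - L| = |(a n - A n) + (A n - La) + (La - L)| := by ring_nf
    _ ≤ |(a n - A n) + (A n - La)| + |La - L| := abs_add_le _ _
    _ ≤ |a n - A n| + |A n - La| + |La - L| := by linarith [abs_add_le (a n - A n) (A n - La)]
  rw [abs_sub_comm La L] at this
  linarith

include hm in
lemma tendsto_meas_F_set {j : ℕ} (hj : j ≤ 1) {S : Set ℝ} (hS : MeasurableSet S) :
    Tendsto (fun n => (m (G m ⁻¹' Cs j (εq n) ∩ S)).toReal) atTop (𝓝 ((m S).toReal / 2)) := by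
  refine MeasurableSpace.induction_on_inter
    (C := fun S _ => Tendsto (fun n => (m (G m ⁻¹' Cs j (εq n) ∩ S)).toReal) atTop
      (𝓝 ((m S).toReal / 2)))
    (BorelSpace.measurable_eq.trans (borel_eq_generateFrom_Iic ℝ)) isPiSystem_Iic
    ?_ ?_ ?_ ?_ _ hS
  · simpa using tendsto_const_nhds
  · rintro t ⟨x, rfl⟩
    exact tendsto_meas_F_Iic m hm hj x
  · intro t htm iht
    have hsplit : ∀ n, (m (G m ⁻¹' Cs j (εq n) ∩ tᶜ)).toReal
        = (m (G m ⁻¹' Cs j (εq n))).toReal - (m (G m ⁻¹' Cs j (εq n) ∩ t)).toReal := by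
      intro n
      set F := G m ⁻¹' Cs j (εq n)
      have hFt : m (F ∩ t) + m (F ∩ tᶜ) = m F := by
        have := measure_inter_add_diff (μ := m) F htm
        rwa [diff_eq] at this
      rw [← hFt, ENNReal.toReal_add (measure_ne_top m _) (measure_ne_top m _)]
      ring
    simp_rw [hsplit]
    have hcm : (m tᶜ).toReal / 2 = (M m) / 2 - (m t).toReal / 2 := by
      have huc : m t + m tᶜ = m univ := measure_add_measure_compl htm
      have hM : M m = (m t).toReal + (m tᶜ).toReal := by
        rw [M, ← huc, ENNReal.toReal_add (measure_ne_top m _) (measure_ne_top m _)]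
      rw [hM]; ring
    rw [hcm]
    exact (tendsto_meas_F_univ m hm hj).sub iht
  · intro f hdisj hfm ihf
    apply tendsto_of_near
    intro δ hδ
    have htail : Tendsto (fun K => m (⋃ i, f i) - m (accumulate f K)) atTop (𝓝 0) := by
      have h1 : Tendsto (fun K => m (accumulate f K)) atTop (𝓝 (m (⋃ i, f i))) :=
        tendsto_measure_iUnion_accumulate
      have h2 : Tendsto (fun K => m (⋃ i, f i) - m (accumulate f K)) atTop
          (𝓝 (m (⋃ i, f i) - m (⋃ i, f i))) := ENNReal.Tendsto.sub tendsto_const_nhds h1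
        (Or.inl (measure_ne_top m _))
      simpa using h2
    obtain ⟨K, hK⟩ := (htail.eventually_lt_const
      (show (0:ℝ≥0∞) < ENNReal.ofReal δ by simp [hδ])).exists
    have hAccU : accumulate f K ⊆ ⋃ i, f i := Set.accumulate_subset_iUnion K
    have hAccMeas : MeasurableSet (accumulate f K) := by
      rw [Set.accumulate_def]
      exact MeasurableSet.biUnion (to_countable _) fun i _ => hfm i
    have htailK : (m ((⋃ i, f i) \ accumulate f K)).toReal ≤ δ := by
      rw [measure_diff hAccU hAccMeas.nullMeasurableSet (measure_ne_top m _)]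
      exact ENNReal.toReal_le_of_le_ofReal hδ.le hK.le
    -- finite union as finset sum
    have hAccFin : ∀ (T : Set ℝ), MeasurableSet T → m (T ∩ accumulate f K)
        = ∑ i ∈ Finset.range (K + 1), m (T ∩ f i) := by
      intro T hT
      have hset2 : T ∩ accumulate f K = ⋃ i ∈ Finset.range (K + 1), (T ∩ f i) := by
        ext x
        simp only [mem_inter_iff, Set.mem_accumulate, mem_iUnion, Finset.mem_range,
          exists_prop]
        constructor
        · rintro ⟨hxT, i, hiK, hxi⟩; exact ⟨i, by omega, hxT, hxi⟩
        · rintro ⟨i, hiK, hxT, hxi⟩; exact ⟨hxT, i, by omega, hxi⟩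
      rw [hset2, measure_biUnion_finset]
      · intro i _ i' _ hii
        exact ((hdisj hii).mono (inter_subset_right) (inter_subset_right))
      · exact fun i _ => hT.inter (hfm i)
    set A : ℕ → ℝ := fun n => (m (G m ⁻¹' Cs j (εq n) ∩ accumulate f K)).toReal with hA_def
    set La : ℝ := (m (accumulate f K)).toReal / 2 with hLa_def
    refine ⟨A, La, ?_, ?_, ?_⟩
    · -- Tendsto A atTop (𝓝 La)
      have hsum : ∀ n, A n = ∑ i ∈ Finset.range (K + 1), (m (G m ⁻¹' Cs j (εq n) ∩ f i)).toReal := by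
        intro n
        rw [hA_def]
        simp only
        rw [hAccFin _ ((G_measurable m) (Cs_measurable j (εq n))),
          ENNReal.toReal_sum (fun i _ => measure_ne_top m _)]
      have hLasum : La = ∑ i ∈ Finset.range (K + 1), (m (f i)).toReal / 2 := by
        rw [hLa_def]
        have : m (accumulate f K) = ∑ i ∈ Finset.range (K + 1), m (f i) := by
          have := hAccFin univ MeasurableSet.univ
          simpa using this
        rw [this, ENNReal.toReal_sum (fun i _ => measure_ne_top m _), Finset.sum_div]
      rw [tendsto_congr hsum, hLasum]
      exact tendsto_finset_sum _ fun i _ => ihf i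
    · -- |a n - A n| ≤ δ
      filter_upwards with n
      set F := G m ⁻¹' Cs j (εq n)
      have h1 : A n ≤ (m (F ∩ ⋃ i, f i)).toReal :=
        ENNReal.toReal_mono (measure_ne_top m _)
          (measure_mono (inter_subset_inter_right F hAccU))
      have h2 : (m (F ∩ ⋃ i, f i)).toReal ≤ A n + (m ((⋃ i, f i) \ accumulate f K)).toReal := by
        have hsub : F ∩ ⋃ i, f i ⊆ (F ∩ accumulate f K) ∪ ((⋃ i, f i) \ accumulate f K) := by
          intro x ⟨hxF, hxU⟩
          by_cases hxA : x ∈ accumulate f K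
          · exact Or.inl ⟨hxF, hxA⟩
          · exact Or.inr ⟨hxU, hxA⟩
        calc (m (F ∩ ⋃ i, f i)).toReal
            ≤ (m ((F ∩ accumulate f K) ∪ ((⋃ i, f i) \ accumulate f K))).toReal :=
              ENNReal.toReal_mono (measure_ne_top m _) (measure_mono hsub)
          _ ≤ ((m (F ∩ accumulate f K)) + m ((⋃ i, f i) \ accumulate f K)).toReal :=
              ENNReal.toReal_mono (by simp [measure_ne_top]) (measure_union_le _ _)
          _ = A n + (m ((⋃ i, f i) \ accumulate f K)).toReal := by
              rw [ENNReal.toReal_add (measure_ne_top m _) (measure_ne_top m _)]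
      rw [abs_sub_le_iff]
      constructor <;> [skip; linarith]
      linarith [htailK]
    · -- |L - La| ≤ δ
      have h1 : La ≤ (m (⋃ i, f i)).toReal / 2 := by
        apply div_le_div_of_nonneg_right ?_ (by norm_num) |>.trans_eq rfl
        exact ENNReal.toReal_mono (measure_ne_top m _) (measure_mono hAccU)
      have h2 : (m (⋃ i, f i)).toReal ≤ (m (accumulate f K)).toReal
          + (m ((⋃ i, f i) \ accumulate f K)).toReal := by
        have hsub : (⋃ i, f i) ⊆ accumulate f K ∪ ((⋃ i, f i) \ accumulate f K) := by
          intro x hxU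
          by_cases hxA : x ∈ accumulate f K
          · exact Or.inl hxA
          · exact Or.inr ⟨hxU, hxA⟩
        calc (m (⋃ i, f i)).toReal
            ≤ ((m (accumulate f K)) + m ((⋃ i, f i) \ accumulate f K)).toReal :=
              ENNReal.toReal_mono (by simp [measure_ne_top])
                ((measure_mono hsub).trans (measure_union_le _ _))
          _ = _ := ENNReal.toReal_add (measure_ne_top m _) (measure_ne_top m _)
      rw [abs_sub_le_iff]
      constructor <;> linarith [htailK]


include hm in
lemma tendsto_meas_F_absCont {j : ℕ} (hj : j ≤ 1) (τ : Measure ℝ) [IsFiniteMeasure τ]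
    (hτ : τ ≪ m) :
    Tendsto (fun n => (τ (G m ⁻¹' Cs j (εq n))).toReal) atTop (𝓝 ((τ univ).toReal / 2)) := by
  have hint : Integrable (fun t => (τ.rnDeriv m t).toReal) m :=
    Measure.integrable_toReal_rnDeriv
  have h := tendsto_setIntegral_general m (fun n => G m ⁻¹' Cs j (εq n)) (F_measurable m j)
    (fun s hs _ => tendsto_meas_F_set m hm hj hs) hint
  rw [Measure.integral_toReal_rnDeriv hτ, smul_eq_mul, inv_mul_eq_div] at h
  apply h.congr
  intro n
  rw [Measure.setIntegral_toReal_rnDeriv hτ]; rfl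

include hm in
/-- upstairs core convergence -/
lemma tendsto_setIntegral_core {α : Type*} [MeasurableSpace α] (κ : Measure α) [SigmaFinite κ]
    (L : α → ℝ) (hL : Measurable L)
    (habs : ∀ S : Set ℝ, MeasurableSet S → m S = 0 → κ (L ⁻¹' S) = 0)
    {j : ℕ} (hj : j ≤ 1)
    {E : Type*} [NormedAddCommGroup E] [NormedSpace ℝ E] [CompleteSpace E]
    {w : α → E} (hw : Integrable w κ) :
    Tendsto (fun n => ∫ x in L ⁻¹' (G m ⁻¹' Cs j (εq n)), w x ∂κ) atTop
      (𝓝 ((2⁻¹ : ℝ) • ∫ x, w x ∂κ)) := by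
  apply tendsto_setIntegral_general κ (fun n => L ⁻¹' (G m ⁻¹' Cs j (εq n)))
    (fun n => hL (F_measurable m j n)) ?_ hw
  intro s hs hsfin
  haveI : IsFiniteMeasure (κ.restrict s) := ⟨by rwa [Measure.restrict_apply_univ]⟩
  set τ : Measure ℝ := (κ.restrict s).map L with hτdef
  haveI : IsFiniteMeasure τ := by
    constructor
    rw [hτdef, Measure.map_apply hL MeasurableSet.univ]
    exact measure_lt_top _ _
  have hτ : τ ≪ m := by
    apply Measure.AbsolutelyContinuous.mk
    intro S hS hS0
    rw [hτdef, Measure.map_apply hL hS, Measure.restrict_apply (hL hS)]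
    exact measure_mono_null inter_subset_left (habs S hS hS0)
  have hτF : ∀ n, τ (G m ⁻¹' Cs j (εq n)) = κ (L ⁻¹' (G m ⁻¹' Cs j (εq n)) ∩ s) := by
    intro n
    rw [hτdef, Measure.map_apply hL (F_measurable m j n),
      Measure.restrict_apply (hL (F_measurable m j n))]
  have hτu : τ univ = κ s := by
    rw [hτdef, Measure.map_apply hL MeasurableSet.univ, preimage_univ,
      Measure.restrict_apply_univ]
  have hTm := tendsto_meas_F_absCont m hm hj τ hτ
  rw [hτu] at hTm
  simp_rw [hτF] at hTm
  exact hTm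

/-- integrals over small sets tend to zero -/
lemma tendsto_setIntegral_small {α : Type*} [MeasurableSpace α] {κ κt : Measure α}
    [SigmaFinite κ] [IsFiniteMeasure κt] (hκ : κ ≪ κt)
    {E : Type*} [NormedAddCommGroup E] [NormedSpace ℝ E] [CompleteSpace E]
    {w : α → E} (hw : Integrable w κ)
    {s bad : ℕ → Set α} (hsm : ∀ n, MeasurableSet (s n)) (hs : ∀ n, s n ⊆ bad n)
    (hbad : Tendsto (fun n => κt (bad n)) atTop (𝓝 0)) :
    Tendsto (fun n => ∫ x in s n, w x ∂κ) atTop (𝓝 0) := by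
  set lam : Measure α := κ.withDensity (fun x => (‖w x‖₊ : ℝ≥0∞)) with hlam
  haveI : IsFiniteMeasure lam := by
    constructor
    rw [hlam, withDensity_apply _ MeasurableSet.univ, Measure.restrict_univ]
    exact hw.2
  have hlamκt : lam ≪ κt := (withDensity_absolutelyContinuous κ _).trans hκ
  have hbound : ∀ n, ‖∫ x in s n, w x ∂κ‖ ≤ (lam (bad n)).toReal := by
    intro n
    calc ‖∫ x in s n, w x ∂κ‖ ≤ ∫ x in s n, ‖w x‖ ∂κ := norm_integral_le_integral_norm _
      _ = (∫⁻ x in s n, (‖w x‖₊ : ℝ≥0∞) ∂κ).toReal := by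
          rw [integral_norm_eq_lintegral_enorm (hw.1.restrict)]; rfl
      _ = (lam (s n)).toReal := by rw [hlam, withDensity_apply _ (hsm n)]
      _ ≤ (lam (bad n)).toReal :=
          ENNReal.toReal_mono (measure_ne_top lam _) (measure_mono (hs n))
  have hto0 : Tendsto (fun n => (lam (bad n)).toReal) atTop (𝓝 0) := by
    have heq : ∀ n, (lam (bad n)).toReal = ∫ x in bad n, (lam.rnDeriv κt x).toReal ∂κt :=
      fun n => (Measure.setIntegral_toReal_rnDeriv hlamκt (bad n)).symm
    rw [tendsto_congr heq]
    exact Measure.integrable_toReal_rnDeriv.tendsto_setIntegral_nhds_zero hbad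
  exact squeeze_zero_norm hbound hto0

/-- atomic part convergence -/
lemma tendsto_setIntegral_atoms {α : Type*} [MeasurableSpace α] (ρ : Measure α)
    {A : Set α} (hA : MeasurableSet A) {Es : ℕ → Set α} (hE : ∀ n, MeasurableSet (Es n))
    (hcover : ∀ x ∈ A, ∀ᶠ n in atTop, x ∈ Es n)
    {E : Type*} [NormedAddCommGroup E] [NormedSpace ℝ E] [CompleteSpace E]
    {w : α → E} (hw : Integrable w ρ) :
    Tendsto (fun n => ∫ x in Es n ∩ A, w x ∂ρ) atTop (𝓝 (∫ x in A, w x ∂ρ)) := by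
  have heq : ∀ n, ∫ x in Es n ∩ A, w x ∂ρ = ∫ x in A, (Es n).indicator w x ∂ρ := by
    intro n
    rw [setIntegral_indicator (hE n), inter_comm]
  rw [tendsto_congr heq]
  apply tendsto_integral_of_dominated_convergence (fun x => ‖w x‖)
  · exact fun n => (hw.1.restrict.indicator (hE n))
  · exact hw.norm.restrict
  · intro n
    filter_upwards with x
    rw [norm_indicator_eq_indicator_norm]
    exact indicator_le_self' (fun _ _ => norm_nonneg _) x
  · rw [ae_restrict_iff' hA]
    filter_upwards with x hx
    apply Tendsto.congr' _ tendsto_const_nhds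
    filter_upwards [hcover x hx] with n hn
    rw [indicator_of_mem hn]


include hm in
/-- master lemma for one side -/
lemma side_main {N : ℕ} (μ : Measure (Euc N)) [SigmaFinite μ]
    {A : Set (Euc N)} (hA : MeasurableSet A)
    {L : Euc N → ℝ} (hL : Measurable L)
    (habs : ∀ S : Set ℝ, MeasurableSet S → m S = 0 → μ.restrict Aᶜ (L ⁻¹' S) = 0)
    {j : ℕ} (hj : j ≤ 1)
    {bad : ℕ → Set (Euc N)} (hbadm : ∀ n, MeasurableSet (bad n))
    (hbadto : Tendsto (fun n => (μ.restrict Aᶜ).toFinite (bad n)) atTop (𝓝 0))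
    {en : ℕ → Set (Euc N)} (hen : ∀ n, en n ⊆ A) (henm : ∀ n, MeasurableSet (en n))
    (hencov : ∀ x ∈ A, ∀ᶠ n in atTop, x ∈ en n)
    {E' : Type*} [NormedAddCommGroup E'] [NormedSpace ℝ E'] [CompleteSpace E']
    {φ w : Euc N → E'} (hφ : Integrable φ μ) (hw : Integrable w μ) (c : ℝ)
    (hφA : ∀ x ∈ A, φ x = c • w x) (hφAc : ∀ x ∉ A, φ x = w x) :
    Tendsto (fun n => ∫ x in (L ⁻¹' (G m ⁻¹' Cs j (εq n)) \ bad n) ∪ en n, φ x ∂μ) atTop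
      (𝓝 (c • ∫ x in A, w x ∂μ + (2⁻¹ : ℝ) • ∫ x in Aᶜ, w x ∂μ)) := by
  set core : ℕ → Set (Euc N) := fun n => L ⁻¹' (G m ⁻¹' Cs j (εq n)) \ bad n with hcore
  set E : ℕ → Set (Euc N) := fun n => core n ∪ en n with hE
  have hLF : ∀ n, MeasurableSet (L ⁻¹' (G m ⁻¹' Cs j (εq n))) :=
    fun n => hL (F_measurable m j n)
  have hcoreM : ∀ n, MeasurableSet (core n) := fun n => (hLF n).diff (hbadm n)
  have hEM : ∀ n, MeasurableSet (E n) := fun n => (hcoreM n).union (henm n)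
  -- split the integral over A and Aᶜ
  have hsplit : ∀ n, ∫ x in E n, φ x ∂μ
      = (∫ x in E n ∩ A, φ x ∂μ) + ∫ x in E n ∩ Aᶜ, φ x ∂μ := by
    intro n
    rw [← setIntegral_union]
    · congr 1
      rw [← inter_union_distrib_left]
      simp
    · exact Disjoint.mono inter_subset_right inter_subset_right disjoint_compl_right
    · exact (hEM n).inter hA.compl
    · exact hφ.integrableOn
    · exact hφ.integrableOn
  simp only [hE] at hsplit ⊢
  rw [tendsto_congr hsplit]
  apply Tendsto.add
  · -- atomic part
    have hcongr : ∀ n, ∫ x in (core n ∪ en n) ∩ A, φ x ∂μ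
        = c • ∫ x in (core n ∪ en n) ∩ A, w x ∂μ := by
      intro n
      rw [← integral_smul]
      apply setIntegral_congr_fun (((hEM n).inter hA))
      intro x hx
      exact hφA x hx.2
    rw [tendsto_congr hcongr]
    apply Tendsto.const_smul
    apply tendsto_setIntegral_atoms μ hA hEM _ hw
    intro x hx
    filter_upwards [hencov x hx] with n hn
    exact Or.inr hn
  · -- continuous part
    have hEAc : ∀ n, (core n ∪ en n) ∩ Aᶜ = core n ∩ Aᶜ := by
      intro n
      rw [union_inter_distrib_right]
      have : en n ∩ Aᶜ = ∅ := by
        rw [eq_empty_iff_forall_notMem]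
        rintro x ⟨hx1, hx2⟩
        exact hx2 (hen n hx1)
      rw [this, union_empty]
    have hcongr2 : ∀ n, ∫ x in (core n ∪ en n) ∩ Aᶜ, φ x ∂μ
        = ∫ x in core n, w x ∂(μ.restrict Aᶜ) := by
      intro n
      rw [hEAc n, Measure.restrict_restrict (hcoreM n)]
      apply setIntegral_congr_fun ((hcoreM n).inter hA.compl)
      intro x hx
      exact hφAc x hx.2
    rw [tendsto_congr hcongr2]
    have hdiff : ∀ n, ∫ x in core n, w x ∂(μ.restrict Aᶜ)
        = (∫ x in L ⁻¹' (G m ⁻¹' Cs j (εq n)), w x ∂(μ.restrict Aᶜ))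
          - ∫ x in L ⁻¹' (G m ⁻¹' Cs j (εq n)) ∩ bad n, w x ∂(μ.restrict Aᶜ) := by
      intro n
      have hzero : ∫ x in L ⁻¹' (G m ⁻¹' Cs j (εq n)), w x ∂(μ.restrict Aᶜ)
          = (∫ x in core n, w x ∂(μ.restrict Aᶜ))
            + ∫ x in L ⁻¹' (G m ⁻¹' Cs j (εq n)) ∩ bad n, w x ∂(μ.restrict Aᶜ) := by
        rw [← setIntegral_union]
        · congr 1
          rw [hcore]
          simp only
          rw [diff_union_inter]
        · rw [Set.disjoint_left]
          rintro x ⟨hx1, hx2⟩ ⟨hx3, hx4⟩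
          exact hx2 hx4
        · exact (hLF n).inter (hbadm n)
        · exact hw.restrict.integrableOn
        · exact hw.restrict.integrableOn
      rw [hzero]
      abel
    rw [tendsto_congr hdiff]
    have h1 : Tendsto (fun n => ∫ x in L ⁻¹' (G m ⁻¹' Cs j (εq n)), w x ∂(μ.restrict Aᶜ))
        atTop (𝓝 ((2⁻¹ : ℝ) • ∫ x, w x ∂(μ.restrict Aᶜ))) :=
      tendsto_setIntegral_core m hm (μ.restrict Aᶜ) L hL habs hj hw.restrict
    have h2 : Tendsto
        (fun n => ∫ x in L ⁻¹' (G m ⁻¹' Cs j (εq n)) ∩ bad n, w x ∂(μ.restrict Aᶜ))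
        atTop (𝓝 0) := by
      apply tendsto_setIntegral_small (MeasureTheory.absolutelyContinuous_toFinite (μ.restrict Aᶜ))
        hw.restrict (fun n => (hLF n).inter (hbadm n)) (fun n => inter_subset_right) hbadto
    have := h1.sub h2
    simpa using this


end OneD

end SepPart

open SepPart Set

/-- separated partitions of unity for two Radon measures without
common atoms. -/
theorem separated_partition_two_measures
    {N : ℕ} (μ ν : Measure (Euc N))
    [IsLocallyFiniteMeasure μ] [μ.InnerRegular]
    [IsLocallyFiniteMeasure ν] [ν.InnerRegular]
    (hna : ∀ x : Euc N, μ {x} = 0 ∨ ν {x} = 0) :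
    ∃ E₁ E₂ : ℕ → Set (Euc N),
      (∀ n, MeasurableSet (E₁ n) ∧ MeasurableSet (E₂ n)) ∧
      (∀ n, ∃ a > (0 : ℝ), ∀ x ∈ E₁ n, ∀ y ∈ E₂ n, a ≤ dist x y) ∧
      (∀ f h : Euc N → ℂ, MemLp f 2 μ → MemLp h 2 μ →
        Tendsto
          (fun n => ∫ x, (E₁ n).indicator (halved μ f) x * (starRingEnd ℂ) (h x) ∂μ)
          atTop (𝓝 ((1 / 2 : ℂ) * ∫ x, f x * (starRingEnd ℂ) (h x) ∂μ))) ∧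
      (∀ g h : Euc N → ℂ, MemLp g 2 ν → MemLp h 2 ν →
        Tendsto
          (fun n => ∫ x, (E₂ n).indicator (halved ν g) x * (starRingEnd ℂ) (h x) ∂ν)
          atTop (𝓝 ((1 / 2 : ℂ) * ∫ x, g x * (starRingEnd ℂ) (h x) ∂ν))) ∧
      (∀ p : ℝ, 1 ≤ p →
        (∀ f : Euc N → ℂ, MemLp f (ENNReal.ofReal p) μ →
          Filter.limsup
            (fun n => (eLpNorm ((E₁ n).indicator (halved μ f)) (ENNReal.ofReal p) μ).toReal)
            atTop ≤ (2 : ℝ) ^ (-(1 / p)) * (eLpNorm f (ENNReal.ofReal p) μ).toReal) ∧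
        (∀ g : Euc N → ℂ, MemLp g (ENNReal.ofReal p) ν →
          Filter.limsup
            (fun n => (eLpNorm ((E₂ n).indicator (halved ν g)) (ENNReal.ofReal p) ν).toReal)
            atTop ≤ (2 : ℝ) ^ (-(1 / p)) * (eLpNorm g (ENNReal.ofReal p) ν).toReal)) := by
  classical
  -- atoms
  set A : Set (Euc N) := {x | 0 < μ {x}} with hAdef
  set B : Set (Euc N) := {x | 0 < ν {x}} with hBdef
  have hAcnt : A.Countable := countable_atoms μ
  have hBcnt : B.Countable := countable_atoms ν
  have hAm : MeasurableSet A := hAcnt.measurableSet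
  have hBm : MeasurableSet B := hBcnt.measurableSet
  have hABdisj : ∀ a ∈ A, ∀ b ∈ B, a ≠ b := by
    rintro a ha b hb rfl
    rcases hna a with h | h
    · rw [hAdef, mem_setOf_eq, h] at ha
      exact absurd ha (lt_irrefl 0)
    · rw [hBdef, mem_setOf_eq, h] at hb
      exact absurd hb (lt_irrefl 0)
  -- continuous parts and finite versions
  have hμc0 : ∀ x, μ.restrict Aᶜ {x} = 0 := by
    intro x
    rw [Measure.restrict_apply (measurableSet_singleton x)]
    by_cases hx : x ∈ A
    · have : {x} ∩ Aᶜ = ∅ := by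
        rw [eq_empty_iff_forall_notMem]
        rintro y ⟨hy1, hy2⟩
        rw [mem_singleton_iff] at hy1
        exact hy2 (hy1 ▸ hx)
      rw [this, measure_empty]
    · have hx0 : μ {x} = 0 := by
        by_contra h0
        exact hx (by rw [hAdef, mem_setOf_eq]; exact pos_iff_ne_zero.2 h0)
      exact measure_mono_null inter_subset_left hx0
  have hνc0 : ∀ x, ν.restrict Bᶜ {x} = 0 := by
    intro x
    rw [Measure.restrict_apply (measurableSet_singleton x)]
    by_cases hx : x ∈ B
    · have : {x} ∩ Bᶜ = ∅ := by
        rw [eq_empty_iff_forall_notMem]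
        rintro y ⟨hy1, hy2⟩
        rw [mem_singleton_iff] at hy1
        exact hy2 (hy1 ▸ hx)
      rw [this, measure_empty]
    · have hx0 : ν {x} = 0 := by
        by_contra h0
        exact hx (by rw [hBdef, mem_setOf_eq]; exact pos_iff_ne_zero.2 h0)
      exact measure_mono_null inter_subset_left hx0
  set μ' : Measure (Euc N) := (μ.restrict Aᶜ).toFinite with hμ'def
  set ν' : Measure (Euc N) := (ν.restrict Bᶜ).toFinite with hν'def
  have hμ'0 : ∀ x, μ' {x} = 0 :=
    fun x => toFinite_absolutelyContinuous (μ.restrict Aᶜ) (hμc0 x)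
  have hν'0 : ∀ x, ν' {x} = 0 :=
    fun x => toFinite_absolutelyContinuous (ν.restrict Bᶜ) (hνc0 x)
  -- good direction
  obtain ⟨ℓ, hℓ⟩ := exists_good_ell (μ' + ν') (fun x => by
    rw [Measure.add_apply, hμ'0 x, hν'0 x, add_zero])
  set L : Euc N → ℝ := fun x => (inner ℝ ℓ x : ℝ) with hLdef
  have hLcont : Continuous L := Continuous.inner continuous_const continuous_id
  have hL : Measurable L := hLcont.measurable
  have hμ'L : ∀ t, μ' {x | L x = t} = 0 := by
    intro t
    have := hℓ t
    rw [Measure.add_apply] at this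
    exact (add_eq_zero.1 this).1
  have hν'L : ∀ t, ν' {x | L x = t} = 0 := by
    intro t
    have := hℓ t
    rw [Measure.add_apply] at this
    exact (add_eq_zero.1 this).2
  -- the one-dimensional measure
  set m : Measure ℝ := μ'.map L + ν'.map L with hmdef
  haveI hfin1 : IsFiniteMeasure (μ'.map L) := by
    constructor
    rw [Measure.map_apply hL MeasurableSet.univ]
    exact measure_lt_top _ _
  haveI hfin2 : IsFiniteMeasure (ν'.map L) := by
    constructor
    rw [Measure.map_apply hL MeasurableSet.univ]
    exact measure_lt_top _ _
  haveI hfinm : IsFiniteMeasure m := by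
    rw [hmdef]
    infer_instance
  have hmsingleton : ∀ t : ℝ, m {t} = 0 := by
    intro t
    rw [hmdef, Measure.add_apply, Measure.map_apply hL (measurableSet_singleton t),
      Measure.map_apply hL (measurableSet_singleton t)]
    have hpre : L ⁻¹' {t} = {x | L x = t} := by
      ext x; simp
    rw [hpre, hμ'L t, hν'L t, add_zero]
  have habsμ : ∀ S : Set ℝ, MeasurableSet S → m S = 0 → μ.restrict Aᶜ (L ⁻¹' S) = 0 := by
    intro S hS h0
    rw [hmdef, Measure.add_apply] at h0
    have h1 : μ' (L ⁻¹' S) = 0 := by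
      rw [← Measure.map_apply hL hS]
      exact (add_eq_zero.1 h0).1
    exact absolutelyContinuous_toFinite (μ.restrict Aᶜ) h1
  have habsν : ∀ S : Set ℝ, MeasurableSet S → m S = 0 → ν.restrict Bᶜ (L ⁻¹' S) = 0 := by
    intro S hS h0
    rw [hmdef, Measure.add_apply] at h0
    have h1 : ν' (L ⁻¹' S) = 0 := by
      rw [← Measure.map_apply hL hS]
      exact (add_eq_zero.1 h0).2
    exact absolutelyContinuous_toFinite (ν.restrict Bᶜ) h1
  -- enumerations of atoms
  obtain ⟨enA, henA_sub, henA_fin, henA_cov⟩ := exists_enum A hAcnt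
  obtain ⟨enB, henB_sub, henB_fin, henB_cov⟩ := exists_enum B hBcnt
  have henAm : ∀ n, MeasurableSet (enA n) := fun n => (henA_fin n).measurableSet
  have henBm : ∀ n, MeasurableSet (enB n) := fun n => (henB_fin n).measurableSet
  -- window radii
  have hwinB : ∀ (n : ℕ) (b : Euc N), ∃ r : ℝ, 0 < r ∧
      μ' {x | dist (L x) (L b) < r}
        ≤ ENNReal.ofReal (εq n) / (((henB_fin n).toFinset.card : ℝ≥0∞) + 1) := by
    intro n b
    apply exists_window μ' hL (L b) (hμ'L (L b))
    apply ENNReal.div_pos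
    · rw [Ne, ENNReal.ofReal_eq_zero, not_le]
      exact εq_pos n
    · exact ENNReal.add_ne_top.2 ⟨ENNReal.natCast_ne_top _, ENNReal.one_ne_top⟩
  have hwinA : ∀ (n : ℕ) (a : Euc N), ∃ r : ℝ, 0 < r ∧
      ν' {x | dist (L x) (L a) < r}
        ≤ ENNReal.ofReal (εq n) / (((henA_fin n).toFinset.card : ℝ≥0∞) + 1) := by
    intro n a
    apply exists_window ν' hL (L a) (hν'L (L a))
    apply ENNReal.div_pos
    · rw [Ne, ENNReal.ofReal_eq_zero, not_le]
      exact εq_pos n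
    · exact ENNReal.add_ne_top.2 ⟨ENNReal.natCast_ne_top _, ENNReal.one_ne_top⟩
  choose rB hrBpos hrBsmall using hwinB
  choose rA hrApos hrAsmall using hwinA
  -- bad sets
  set bad1 : ℕ → Set (Euc N) := fun n =>
    {x | (n : ℝ) < |L x|} ∪ ⋃ b ∈ (henB_fin n).toFinset, {x | dist (L x) (L b) < rB n b}
    with hbad1def
  set bad2 : ℕ → Set (Euc N) := fun n =>
    {x | (n : ℝ) < |L x|} ∪ ⋃ a ∈ (henA_fin n).toFinset, {x | dist (L x) (L a) < rA n a}
    with hbad2def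
  have hslabm : ∀ n : ℕ, MeasurableSet {x : Euc N | (n : ℝ) < |L x|} :=
    fun n => measurableSet_lt measurable_const hL.abs
  have hwinm : ∀ (r : ℝ) (c : ℝ), MeasurableSet {x : Euc N | dist (L x) c < r} :=
    fun r c => measurableSet_lt (hL.dist measurable_const) measurable_const
  have hbad1m : ∀ n, MeasurableSet (bad1 n) := by
    intro n
    apply (hslabm n).union
    exact (henB_fin n).toFinset.measurableSet_biUnion fun b _ => hwinm _ _
  have hbad2m : ∀ n, MeasurableSet (bad2 n) := by
    intro n
    apply (hslabm n).union
    exact (henA_fin n).toFinset.measurableSet_biUnion fun a _ => hwinm _ _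
  -- smallness of bad sets
  have hslab_tendsto : ∀ (κ : Measure (Euc N)) (_ : IsFiniteMeasure κ),
      Tendsto (fun n : ℕ => κ {x : Euc N | (n : ℝ) < |L x|}) atTop (𝓝 0) := by
    intro κ hκ
    have hI : Tendsto (fun n : ℕ => κ {x : Euc N | (n : ℝ) < |L x|}) atTop
        (𝓝 (κ (⋂ n : ℕ, {x : Euc N | (n : ℝ) < |L x|}))) := by
      apply tendsto_measure_iInter_atTop
      · exact fun n => (hslabm n).nullMeasurableSet
      · intro a b hab x hx
        simp only [mem_setOf_eq] at *
        have : (a : ℝ) ≤ (b : ℝ) := Nat.cast_le.2 hab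
        linarith
      · exact ⟨0, measure_ne_top κ _⟩
    have hset : (⋂ n : ℕ, {x : Euc N | (n : ℝ) < |L x|}) = ∅ := by
      rw [eq_empty_iff_forall_notMem]
      intro x hx
      simp only [mem_iInter, mem_setOf_eq] at hx
      obtain ⟨n, hn⟩ := exists_nat_gt |L x|
      exact absurd (hx n) (not_lt.2 hn.le)
    rw [hset, measure_empty] at hI
    exact hI
  have hbad1to : Tendsto (fun n => μ' (bad1 n)) atTop (𝓝 0) := by
    have hb : ∀ n, μ' (bad1 n) ≤ μ' {x : Euc N | (n : ℝ) < |L x|} + ENNReal.ofReal (εq n) := by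
      intro n
      refine (measure_union_le _ _).trans (add_le_add_right ?_ _)
      calc μ' (⋃ b ∈ (henB_fin n).toFinset, {x | dist (L x) (L b) < rB n b})
          ≤ ∑ b ∈ (henB_fin n).toFinset, μ' {x | dist (L x) (L b) < rB n b} :=
            measure_biUnion_finset_le _ _
        _ ≤ ∑ _b ∈ (henB_fin n).toFinset,
              ENNReal.ofReal (εq n) / (((henB_fin n).toFinset.card : ℝ≥0∞) + 1) :=
            Finset.sum_le_sum fun b _ => hrBsmall n b
        _ = ((henB_fin n).toFinset.card : ℝ≥0∞)
              * (ENNReal.ofReal (εq n) / (((henB_fin n).toFinset.card : ℝ≥0∞) + 1)) := by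
            rw [Finset.sum_const, nsmul_eq_mul]
        _ ≤ (((henB_fin n).toFinset.card : ℝ≥0∞) + 1)
              * (ENNReal.ofReal (εq n) / (((henB_fin n).toFinset.card : ℝ≥0∞) + 1)) := by
            apply _root_.mul_le_mul_left le_self_add
        _ = ENNReal.ofReal (εq n) := by
            apply ENNReal.mul_div_cancel'
            · simp
            · intro hc; exact absurd hc (ENNReal.add_ne_top.2 ⟨ENNReal.natCast_ne_top _, ENNReal.one_ne_top⟩)
    have hlim : Tendsto (fun n : ℕ => μ' {x : Euc N | (n : ℝ) < |L x|} + ENNReal.ofReal (εq n))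
        atTop (𝓝 0) := by
      have h1 := hslab_tendsto μ' inferInstance
      have h2 : Tendsto (fun n => ENNReal.ofReal (εq n)) atTop (𝓝 0) := by
        rw [← ENNReal.ofReal_zero]
        exact (ENNReal.continuous_ofReal.tendsto 0).comp εq_tendsto
      simpa using h1.add h2
    exact tendsto_of_tendsto_of_tendsto_of_le_of_le tendsto_const_nhds hlim
      (fun n => zero_le) hb
  have hbad2to : Tendsto (fun n => ν' (bad2 n)) atTop (𝓝 0) := by
    have hb : ∀ n, ν' (bad2 n) ≤ ν' {x : Euc N | (n : ℝ) < |L x|} + ENNReal.ofReal (εq n) := by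
      intro n
      refine (measure_union_le _ _).trans (add_le_add_right ?_ _)
      calc ν' (⋃ a ∈ (henA_fin n).toFinset, {x | dist (L x) (L a) < rA n a})
          ≤ ∑ a ∈ (henA_fin n).toFinset, ν' {x | dist (L x) (L a) < rA n a} :=
            measure_biUnion_finset_le _ _
        _ ≤ ∑ _a ∈ (henA_fin n).toFinset,
              ENNReal.ofReal (εq n) / (((henA_fin n).toFinset.card : ℝ≥0∞) + 1) :=
            Finset.sum_le_sum fun a _ => hrAsmall n a
        _ = ((henA_fin n).toFinset.card : ℝ≥0∞)
              * (ENNReal.ofReal (εq n) / (((henA_fin n).toFinset.card : ℝ≥0∞) + 1)) := by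
            rw [Finset.sum_const, nsmul_eq_mul]
        _ ≤ (((henA_fin n).toFinset.card : ℝ≥0∞) + 1)
              * (ENNReal.ofReal (εq n) / (((henA_fin n).toFinset.card : ℝ≥0∞) + 1)) := by
            apply _root_.mul_le_mul_left le_self_add
        _ = ENNReal.ofReal (εq n) := by
            apply ENNReal.mul_div_cancel'
            · simp
            · intro hc; exact absurd hc (ENNReal.add_ne_top.2 ⟨ENNReal.natCast_ne_top _, ENNReal.one_ne_top⟩)
    have hlim : Tendsto (fun n : ℕ => ν' {x : Euc N | (n : ℝ) < |L x|} + ENNReal.ofReal (εq n))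
        atTop (𝓝 0) := by
      have h1 := hslab_tendsto ν' inferInstance
      have h2 : Tendsto (fun n => ENNReal.ofReal (εq n)) atTop (𝓝 0) := by
        rw [← ENNReal.ofReal_zero]
        exact (ENNReal.continuous_ofReal.tendsto 0).comp εq_tendsto
      simpa using h1.add h2
    exact tendsto_of_tendsto_of_tendsto_of_le_of_le tendsto_const_nhds hlim
      (fun n => zero_le) hb
  -- the sets
  set E1 : ℕ → Set (Euc N) := fun n =>
    (L ⁻¹' (G m ⁻¹' Cs 0 (εq n)) \ bad1 n) ∪ enA n with hE1def
  set E2 : ℕ → Set (Euc N) := fun n =>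
    (L ⁻¹' (G m ⁻¹' Cs 1 (εq n)) \ bad2 n) ∪ enB n with hE2def
  have hE1m : ∀ n, MeasurableSet (E1 n) := fun n =>
    ((hL ((G_measurable m) (Cs_measurable 0 (εq n)))).diff (hbad1m n)).union (henAm n)
  have hE2m : ∀ n, MeasurableSet (E2 n) := fun n =>
    ((hL ((G_measurable m) (Cs_measurable 1 (εq n)))).diff (hbad2m n)).union (henBm n)
  refine ⟨E1, E2, fun n => ⟨hE1m n, hE2m n⟩, ?_, ?_, ?_, ?_⟩
  · -- separation
    intro n
    obtain ⟨δ, hδpos, hδ⟩ : ∃ δ > 0, ∀ s ∈ Icc (-(n:ℝ)) (n:ℝ), ∀ t ∈ Icc (-(n:ℝ)) (n:ℝ),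
        dist s t < δ → dist (G m s) (G m t) < εq n ^ 2 := by
      have huc := (isCompact_Icc (a := -(n:ℝ)) (b := (n:ℝ))).uniformContinuousOn_of_continuous
        ((G_continuous m hmsingleton).continuousOn)
      rw [Metric.uniformContinuousOn_iff] at huc
      obtain ⟨δ, hδ1, hδ2⟩ := huc (εq n ^ 2) (by have := εq_pos n; positivity)
      exact ⟨δ, hδ1, hδ2⟩
    have hnorm1 : (0:ℝ) < ‖ℓ‖ + 1 := by positivity
    set TA := (henA_fin n).toFinset with hTA
    set TB := (henB_fin n).toFinset with hTB
    set cand : Finset ℝ := {δ / (‖ℓ‖ + 1)} ∪ TB.image (fun b => rB n b / (‖ℓ‖ + 1))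
      ∪ TA.image (fun a => rA n a / (‖ℓ‖ + 1))
      ∪ (TA ×ˢ TB).image (fun ab => dist ab.1 ab.2) with hcand
    have hmem0 : δ / (‖ℓ‖ + 1) ∈ cand := by
      rw [hcand]
      simp
    have hcne : cand.Nonempty := ⟨_, hmem0⟩
    refine ⟨cand.min' hcne, ?_, ?_⟩
    · rw [gt_iff_lt, Finset.lt_min'_iff]
      intro z hz
      rw [hcand] at hz
      simp only [Finset.mem_union, Finset.mem_image, Finset.mem_singleton,
        Finset.mem_product] at hz
      rcases hz with ((rfl | ⟨b, hb, rfl⟩) | ⟨a, ha, rfl⟩) | ⟨ab, hab, rfl⟩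
      · positivity
      · have := hrBpos n b
        positivity
      · have := hrApos n a
        positivity
      · apply dist_pos.2
        apply hABdisj ab.1 _ ab.2 _
        · exact henA_sub n (((henA_fin n).mem_toFinset).1 hab.1)
        · exact henB_sub n (((henB_fin n).mem_toFinset).1 hab.2)
    · intro x hx y hy
      have key : ∀ u v : Euc N, |L u - L v| ≤ (‖ℓ‖ + 1) * dist u v := by
        intro u v
        have hLL : L u - L v = (inner ℝ ℓ (u - v) : ℝ) := by
          rw [hLdef]
          simp only
          rw [inner_sub_right]
        rw [hLL]
        calc |(inner ℝ ℓ (u - v) : ℝ)| ≤ ‖ℓ‖ * ‖u - v‖ := abs_real_inner_le_norm ℓ (u - v)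
        _ ≤ (‖ℓ‖ + 1) * dist u v := by
            rw [dist_eq_norm]
            nlinarith [norm_nonneg (u - v), norm_nonneg ℓ]
      have hmin_le_dist : ∀ z ∈ cand, z ≤ dist x y → cand.min' hcne ≤ dist x y :=
        fun z hz h => (Finset.min'_le _ _ hz).trans h
      rcases hx with hx | hx <;> rcases hy with hy | hy
      · -- core vs core
        obtain ⟨hx1, hx2⟩ := hx
        obtain ⟨hy1, hy2⟩ := hy
        have hgap : εq n ^ 2 ≤ dist (G m (L x)) (G m (L y)) :=
          Cs_gap (εq_pos n) _ _ hx1 hy1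
        have hLx : |L x| ≤ n := by
          by_contra hc
          push_neg at hc
          exact hx2 (mem_union_left _ hc)
        have hLy : |L y| ≤ n := by
          by_contra hc
          push_neg at hc
          exact hy2 (mem_union_left _ hc)
        have hfar : δ ≤ |L x - L y| := by
          by_contra hc
          push_neg at hc
          rw [abs_le] at hLx hLy
          have h2 := hδ (L x) (mem_Icc.2 ⟨hLx.1, hLx.2⟩) (L y) (mem_Icc.2 ⟨hLy.1, hLy.2⟩)
            (by rwa [Real.dist_eq])
          linarith
        apply hmin_le_dist _ hmem0
        rw [div_le_iff₀ hnorm1]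
        calc δ ≤ |L x - L y| := hfar
        _ ≤ (‖ℓ‖ + 1) * dist x y := key x y
        _ = dist x y * (‖ℓ‖ + 1) := by ring
      · -- core vs atom
        obtain ⟨hx1, hx2⟩ := hx
        have hyT : y ∈ TB := ((henB_fin n).mem_toFinset).2 hy
        have hwin : rB n y ≤ dist (L x) (L y) := by
          by_contra hc
          push_neg at hc
          exact hx2 (mem_union_right _ (Set.mem_biUnion hyT hc))
        apply hmin_le_dist (rB n y / (‖ℓ‖ + 1))
        · rw [hcand]
          refine Finset.mem_union_left _ (Finset.mem_union_left _ (Finset.mem_union_right _ ?_))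
          exact Finset.mem_image.2 ⟨y, hyT, rfl⟩
        · rw [div_le_iff₀ hnorm1]
          calc rB n y ≤ dist (L x) (L y) := hwin
          _ = |L x - L y| := Real.dist_eq _ _
          _ ≤ (‖ℓ‖ + 1) * dist x y := key x y
          _ = dist x y * (‖ℓ‖ + 1) := by ring
      · -- atom vs core
        obtain ⟨hy1, hy2⟩ := hy
        have hxT : x ∈ TA := ((henA_fin n).mem_toFinset).2 hx
        have hwin : rA n x ≤ dist (L y) (L x) := by
          by_contra hc
          push_neg at hc
          exact hy2 (mem_union_right _ (Set.mem_biUnion hxT hc))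
        apply hmin_le_dist (rA n x / (‖ℓ‖ + 1))
        · rw [hcand]
          refine Finset.mem_union_left _ (Finset.mem_union_right _ ?_)
          exact Finset.mem_image.2 ⟨x, hxT, rfl⟩
        · rw [div_le_iff₀ hnorm1]
          calc rA n x ≤ dist (L y) (L x) := hwin
          _ = |L y - L x| := Real.dist_eq _ _
          _ ≤ (‖ℓ‖ + 1) * dist y x := key y x
          _ = dist x y * (‖ℓ‖ + 1) := by rw [dist_comm]; ring
      · -- atom vs atom
        have hxT : x ∈ TA := ((henA_fin n).mem_toFinset).2 hx
        have hyT : y ∈ TB := ((henB_fin n).mem_toFinset).2 hy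
        apply hmin_le_dist (dist x y)
        · rw [hcand]
          refine Finset.mem_union_right _ ?_
          exact Finset.mem_image.2 ⟨(x, y), Finset.mem_product.2 ⟨hxT, hyT⟩, rfl⟩
        · exact le_refl _
  · -- WOT for mu
    intro f h hf hh
    have hwint : Integrable (fun x => f x * (starRingEnd ℂ) (h x)) μ :=
      integrable_mul_conj hf hh
    have hφaesm : AEStronglyMeasurable (fun x => halved μ f x * (starRingEnd ℂ) (h x)) μ :=
      (aesm_halved μ hf.aestronglyMeasurable).mul
        ((Complex.continuous_conj).comp_aestronglyMeasurable hh.aestronglyMeasurable)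
    have hφint : Integrable (fun x => halved μ f x * (starRingEnd ℂ) (h x)) μ := by
      apply hwint.norm.mono' hφaesm
      filter_upwards with x
      simp only [norm_mul]
      exact mul_le_mul_of_nonneg_right (halved_norm_le μ f x) (norm_nonneg _)
    have hind : ∀ n, ∫ x, (E1 n).indicator (halved μ f) x * (starRingEnd ℂ) (h x) ∂μ
        = ∫ x in E1 n, halved μ f x * (starRingEnd ℂ) (h x) ∂μ := by
      intro n
      rw [← integral_indicator (hE1m n)]
      congr 1
      funext x
      by_cases hx : x ∈ E1 n
      · rw [indicator_of_mem hx, indicator_of_mem hx]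
      · rw [indicator_of_notMem hx, indicator_of_notMem hx, zero_mul]
    rw [tendsto_congr hind]
    have hφA : ∀ x ∈ A, halved μ f x * (starRingEnd ℂ) (h x)
        = (2⁻¹ : ℝ) • (f x * (starRingEnd ℂ) (h x)) := by
      intro x hx
      have hμx : 0 < μ {x} := hx
      rw [halved, if_pos hμx, Complex.real_smul]
      push_cast
      ring
    have hφAc : ∀ x ∉ A, halved μ f x * (starRingEnd ℂ) (h x)
        = f x * (starRingEnd ℂ) (h x) := by
      intro x hx
      have hμx : ¬ 0 < μ {x} := hx
      rw [halved, if_neg hμx]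
    have hlim := side_main m hmsingleton μ hAm hL habsμ (by norm_num : (0:ℕ) ≤ 1)
      hbad1m hbad1to henA_sub henAm henA_cov hφint hwint (2⁻¹ : ℝ) hφA hφAc
    have hlim2 : (2⁻¹ : ℝ) • (∫ x in A, f x * (starRingEnd ℂ) (h x) ∂μ)
        + (2⁻¹ : ℝ) • ∫ x in Aᶜ, f x * (starRingEnd ℂ) (h x) ∂μ
        = (1 / 2 : ℂ) * ∫ x, f x * (starRingEnd ℂ) (h x) ∂μ := by
      rw [← smul_add, integral_add_compl hAm hwint, Complex.real_smul]
      push_cast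
      ring
    rw [← hlim2]
    exact hlim
  · -- WOT for nu
    intro f h hf hh
    have hwint : Integrable (fun x => f x * (starRingEnd ℂ) (h x)) ν :=
      integrable_mul_conj hf hh
    have hφaesm : AEStronglyMeasurable (fun x => halved ν f x * (starRingEnd ℂ) (h x)) ν :=
      (aesm_halved ν hf.aestronglyMeasurable).mul
        ((Complex.continuous_conj).comp_aestronglyMeasurable hh.aestronglyMeasurable)
    have hφint : Integrable (fun x => halved ν f x * (starRingEnd ℂ) (h x)) ν := by
      apply hwint.norm.mono' hφaesm
      filter_upwards with x
      simp only [norm_mul]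
      exact mul_le_mul_of_nonneg_right (halved_norm_le ν f x) (norm_nonneg _)
    have hind : ∀ n, ∫ x, (E2 n).indicator (halved ν f) x * (starRingEnd ℂ) (h x) ∂ν
        = ∫ x in E2 n, halved ν f x * (starRingEnd ℂ) (h x) ∂ν := by
      intro n
      rw [← integral_indicator (hE2m n)]
      congr 1
      funext x
      by_cases hx : x ∈ E2 n
      · rw [indicator_of_mem hx, indicator_of_mem hx]
      · rw [indicator_of_notMem hx, indicator_of_notMem hx, zero_mul]
    rw [tendsto_congr hind]
    have hφA : ∀ x ∈ B, halved ν f x * (starRingEnd ℂ) (h x)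
        = (2⁻¹ : ℝ) • (f x * (starRingEnd ℂ) (h x)) := by
      intro x hx
      have hνx : 0 < ν {x} := hx
      rw [halved, if_pos hνx, Complex.real_smul]
      push_cast
      ring
    have hφAc : ∀ x ∉ B, halved ν f x * (starRingEnd ℂ) (h x)
        = f x * (starRingEnd ℂ) (h x) := by
      intro x hx
      have hνx : ¬ 0 < ν {x} := hx
      rw [halved, if_neg hνx]
    have hlim := side_main m hmsingleton ν hBm hL habsν (le_refl 1)
      hbad2m hbad2to henB_sub henBm henB_cov hφint hwint (2⁻¹ : ℝ) hφA hφAc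
    have hlim2 : (2⁻¹ : ℝ) • (∫ x in B, f x * (starRingEnd ℂ) (h x) ∂ν)
        + (2⁻¹ : ℝ) • ∫ x in Bᶜ, f x * (starRingEnd ℂ) (h x) ∂ν
        = (1 / 2 : ℂ) * ∫ x, f x * (starRingEnd ℂ) (h x) ∂ν := by
      rw [← smul_add, integral_add_compl hBm hwint, Complex.real_smul]
      push_cast
      ring
    rw [← hlim2]
    exact hlim
  · -- Lp bounds
    intro p hp
    constructor
    · intro f hf
      have hp0 : (0:ℝ) < p := by linarith
      have hfa : AEStronglyMeasurable f μ := hf.aestronglyMeasurable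
      have hwint : Integrable (fun x => ‖f x‖ ^ p) μ := by
        have hh := hf.integrable_norm_rpow
          (by rw [Ne, ENNReal.ofReal_eq_zero]; linarith) ENNReal.ofReal_ne_top
        rwa [ENNReal.toReal_ofReal (le_of_lt hp0)] at hh
      have hφaesm : AEStronglyMeasurable (fun x => ‖halved μ f x‖ ^ p) μ :=
        ((aesm_halved μ hfa).norm.aemeasurable.pow_const p).aestronglyMeasurable
      have hφint : Integrable (fun x => ‖halved μ f x‖ ^ p) μ := by
        apply hwint.mono' hφaesm
        filter_upwards with x
        rw [Real.norm_eq_abs, _root_.abs_of_nonneg (by positivity)]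
        exact Real.rpow_le_rpow (norm_nonneg _) (halved_norm_le μ f x) hp0.le
      have hgnmem : ∀ n, MemLp ((E1 n).indicator (halved μ f))
          (ENNReal.ofReal p) μ := by
        intro n
        apply MemLp.of_le hf ((aesm_halved μ hfa).indicator (hE1m n))
        filter_upwards with x
        by_cases hx : x ∈ E1 n
        · rw [indicator_of_mem hx]
          exact halved_norm_le μ f x
        · rw [indicator_of_notMem hx, norm_zero]
          exact norm_nonneg _
      have hconv : ∀ n, (eLpNorm ((E1 n).indicator (halved μ f))
            (ENNReal.ofReal p) μ).toReal
          = (∫ x in E1 n, ‖halved μ f x‖ ^ p ∂μ) ^ (1/p) := by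
        intro n
        rw [eLpNorm_toReal_eq hp (hgnmem n)]
        congr 1
        rw [← integral_indicator (hE1m n)]
        congr 1
        funext x
        by_cases hx : x ∈ E1 n
        · rw [indicator_of_mem hx, indicator_of_mem hx]
        · rw [indicator_of_notMem hx, indicator_of_notMem hx, norm_zero,
            Real.zero_rpow (ne_of_gt hp0)]
      have hφA : ∀ x ∈ A, ‖halved μ f x‖ ^ p = ((2⁻¹:ℝ) ^ p) • (‖f x‖ ^ p) := by
        intro x hx
        have hμx : 0 < μ {x} := hx
        rw [halved, if_pos hμx, norm_mul, smul_eq_mul, ← Real.mul_rpow (by norm_num)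
          (norm_nonneg _)]
        congr 2
        norm_num
      have hφAc : ∀ x ∉ A, ‖halved μ f x‖ ^ p = ‖f x‖ ^ p := by
        intro x hx
        have hμx : ¬ 0 < μ {x} := hx
        rw [halved, if_neg hμx]
      have hlim := side_main m hmsingleton μ hAm hL habsμ (by norm_num : (0:ℕ) ≤ 1)
        hbad1m hbad1to henA_sub henAm henA_cov hφint hwint ((2⁻¹:ℝ) ^ p) hφA hφAc
      have hIA : 0 ≤ ∫ x in A, ‖f x‖ ^ p ∂μ :=
        setIntegral_nonneg hAm (fun x _ => by positivity)
      have hIAc : 0 ≤ ∫ x in Aᶜ, ‖f x‖ ^ p ∂μ :=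
        setIntegral_nonneg hAm.compl (fun x _ => by positivity)
      have hTnn : 0 ≤ ∫ x, ‖f x‖ ^ p ∂μ := integral_nonneg (fun x => by positivity)
      have hcle : ((2⁻¹:ℝ) ^ p) ≤ 2⁻¹ := by
        have hh := Real.rpow_le_rpow_of_exponent_ge (by norm_num : (0:ℝ) < 2⁻¹)
          (by norm_num : (2⁻¹:ℝ) ≤ 1) hp
        rwa [Real.rpow_one] at hh
      have hlnn : 0 ≤ ((2⁻¹:ℝ) ^ p) • (∫ x in A, ‖f x‖ ^ p ∂μ)
          + (2⁻¹:ℝ) • ∫ x in Aᶜ, ‖f x‖ ^ p ∂μ := by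
        rw [smul_eq_mul, smul_eq_mul]
        have : (0:ℝ) ≤ (2⁻¹:ℝ) ^ p := by positivity
        nlinarith
      have hlle : ((2⁻¹:ℝ) ^ p) • (∫ x in A, ‖f x‖ ^ p ∂μ)
          + (2⁻¹:ℝ) • ∫ x in Aᶜ, ‖f x‖ ^ p ∂μ
          ≤ 2⁻¹ * ∫ x, ‖f x‖ ^ p ∂μ := by
        rw [smul_eq_mul, smul_eq_mul, ← integral_add_compl hAm hwint]
        nlinarith
      have hlimsup : Filter.limsup (fun n => (eLpNorm ((E1 n).indicator
            (halved μ f)) (ENNReal.ofReal p) μ).toReal) atTop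
          = (((2⁻¹:ℝ) ^ p) • (∫ x in A, ‖f x‖ ^ p ∂μ)
            + (2⁻¹:ℝ) • ∫ x in Aᶜ, ‖f x‖ ^ p ∂μ) ^ (1/p) := by
        have hl2 : Tendsto (fun n => (∫ x in E1 n, ‖halved μ f x‖ ^ p ∂μ)
            ^ (1/p)) atTop (𝓝 ((((2⁻¹:ℝ) ^ p) • (∫ x in A, ‖f x‖ ^ p ∂μ)
            + (2⁻¹:ℝ) • ∫ x in Aᶜ, ‖f x‖ ^ p ∂μ) ^ (1/p))) :=
          hlim.rpow_const (Or.inr (by positivity))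
        have heq : (fun n => (eLpNorm ((E1 n).indicator (halved μ f))
            (ENNReal.ofReal p) μ).toReal)
            = fun n => (∫ x in E1 n, ‖halved μ f x‖ ^ p ∂μ) ^ (1/p) :=
          funext hconv
        rw [heq]
        exact hl2.limsup_eq
      rw [hlimsup, eLpNorm_toReal_eq hp hf]
      calc (((2⁻¹:ℝ) ^ p) • (∫ x in A, ‖f x‖ ^ p ∂μ)
            + (2⁻¹:ℝ) • ∫ x in Aᶜ, ‖f x‖ ^ p ∂μ) ^ (1/p)
          ≤ (2⁻¹ * ∫ x, ‖f x‖ ^ p ∂μ) ^ (1/p) :=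
            Real.rpow_le_rpow hlnn hlle (by positivity)
        _ = (2⁻¹:ℝ) ^ (1/p) * (∫ x, ‖f x‖ ^ p ∂μ) ^ (1/p) :=
            Real.mul_rpow (by norm_num) hTnn
        _ = (2:ℝ) ^ (-(1/p)) * (∫ x, ‖f x‖ ^ p ∂μ) ^ (1/p) := by
            congr 1
            rw [Real.rpow_neg (by norm_num), Real.inv_rpow (by norm_num)]
    · intro f hf
      have hp0 : (0:ℝ) < p := by linarith
      have hfa : AEStronglyMeasurable f ν := hf.aestronglyMeasurable
      have hwint : Integrable (fun x => ‖f x‖ ^ p) ν := by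
        have hh := hf.integrable_norm_rpow
          (by rw [Ne, ENNReal.ofReal_eq_zero]; linarith) ENNReal.ofReal_ne_top
        rwa [ENNReal.toReal_ofReal (le_of_lt hp0)] at hh
      have hφaesm : AEStronglyMeasurable (fun x => ‖halved ν f x‖ ^ p) ν :=
        ((aesm_halved ν hfa).norm.aemeasurable.pow_const p).aestronglyMeasurable
      have hφint : Integrable (fun x => ‖halved ν f x‖ ^ p) ν := by
        apply hwint.mono' hφaesm
        filter_upwards with x
        rw [Real.norm_eq_abs, _root_.abs_of_nonneg (by positivity)]
        exact Real.rpow_le_rpow (norm_nonneg _) (halved_norm_le ν f x) hp0.le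
      have hgnmem : ∀ n, MemLp ((E2 n).indicator (halved ν f))
          (ENNReal.ofReal p) ν := by
        intro n
        apply MemLp.of_le hf ((aesm_halved ν hfa).indicator (hE2m n))
        filter_upwards with x
        by_cases hx : x ∈ E2 n
        · rw [indicator_of_mem hx]
          exact halved_norm_le ν f x
        · rw [indicator_of_notMem hx, norm_zero]
          exact norm_nonneg _
      have hconv : ∀ n, (eLpNorm ((E2 n).indicator (halved ν f))
            (ENNReal.ofReal p) ν).toReal
          = (∫ x in E2 n, ‖halved ν f x‖ ^ p ∂ν) ^ (1/p) := by
        intro n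
        rw [eLpNorm_toReal_eq hp (hgnmem n)]
        congr 1
        rw [← integral_indicator (hE2m n)]
        congr 1
        funext x
        by_cases hx : x ∈ E2 n
        · rw [indicator_of_mem hx, indicator_of_mem hx]
        · rw [indicator_of_notMem hx, indicator_of_notMem hx, norm_zero,
            Real.zero_rpow (ne_of_gt hp0)]
      have hφA : ∀ x ∈ B, ‖halved ν f x‖ ^ p = ((2⁻¹:ℝ) ^ p) • (‖f x‖ ^ p) := by
        intro x hx
        have hμx : 0 < ν {x} := hx
        rw [halved, if_pos hμx, norm_mul, smul_eq_mul, ← Real.mul_rpow (by norm_num)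
          (norm_nonneg _)]
        congr 2
        norm_num
      have hφAc : ∀ x ∉ B, ‖halved ν f x‖ ^ p = ‖f x‖ ^ p := by
        intro x hx
        have hμx : ¬ 0 < ν {x} := hx
        rw [halved, if_neg hμx]
      have hlim := side_main m hmsingleton ν hBm hL habsν (le_refl 1)
        hbad2m hbad2to henB_sub henBm henB_cov hφint hwint ((2⁻¹:ℝ) ^ p) hφA hφAc
      have hIA : 0 ≤ ∫ x in B, ‖f x‖ ^ p ∂ν :=
        setIntegral_nonneg hBm (fun x _ => by positivity)
      have hIAc : 0 ≤ ∫ x in Bᶜ, ‖f x‖ ^ p ∂ν :=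
        setIntegral_nonneg hBm.compl (fun x _ => by positivity)
      have hTnn : 0 ≤ ∫ x, ‖f x‖ ^ p ∂ν := integral_nonneg (fun x => by positivity)
      have hcle : ((2⁻¹:ℝ) ^ p) ≤ 2⁻¹ := by
        have hh := Real.rpow_le_rpow_of_exponent_ge (by norm_num : (0:ℝ) < 2⁻¹)
          (by norm_num : (2⁻¹:ℝ) ≤ 1) hp
        rwa [Real.rpow_one] at hh
      have hlnn : 0 ≤ ((2⁻¹:ℝ) ^ p) • (∫ x in B, ‖f x‖ ^ p ∂ν)
          + (2⁻¹:ℝ) • ∫ x in Bᶜ, ‖f x‖ ^ p ∂ν := by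
        rw [smul_eq_mul, smul_eq_mul]
        have : (0:ℝ) ≤ (2⁻¹:ℝ) ^ p := by positivity
        nlinarith
      have hlle : ((2⁻¹:ℝ) ^ p) • (∫ x in B, ‖f x‖ ^ p ∂ν)
          + (2⁻¹:ℝ) • ∫ x in Bᶜ, ‖f x‖ ^ p ∂ν
          ≤ 2⁻¹ * ∫ x, ‖f x‖ ^ p ∂ν := by
        rw [smul_eq_mul, smul_eq_mul, ← integral_add_compl hBm hwint]
        nlinarith
      have hlimsup : Filter.limsup (fun n => (eLpNorm ((E2 n).indicator
            (halved ν f)) (ENNReal.ofReal p) ν).toReal) atTop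
          = (((2⁻¹:ℝ) ^ p) • (∫ x in B, ‖f x‖ ^ p ∂ν)
            + (2⁻¹:ℝ) • ∫ x in Bᶜ, ‖f x‖ ^ p ∂ν) ^ (1/p) := by
        have hl2 : Tendsto (fun n => (∫ x in E2 n, ‖halved ν f x‖ ^ p ∂ν)
            ^ (1/p)) atTop (𝓝 ((((2⁻¹:ℝ) ^ p) • (∫ x in B, ‖f x‖ ^ p ∂ν)
            + (2⁻¹:ℝ) • ∫ x in Bᶜ, ‖f x‖ ^ p ∂ν) ^ (1/p))) :=
          hlim.rpow_const (Or.inr (by positivity))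
        have heq : (fun n => (eLpNorm ((E2 n).indicator (halved ν f))
            (ENNReal.ofReal p) ν).toReal)
            = fun n => (∫ x in E2 n, ‖halved ν f x‖ ^ p ∂ν) ^ (1/p) :=
          funext hconv
        rw [heq]
        exact hl2.limsup_eq
      rw [hlimsup, eLpNorm_toReal_eq hp hf]
      calc (((2⁻¹:ℝ) ^ p) • (∫ x in B, ‖f x‖ ^ p ∂ν)
            + (2⁻¹:ℝ) • ∫ x in Bᶜ, ‖f x‖ ^ p ∂ν) ^ (1/p)
          ≤ (2⁻¹ * ∫ x, ‖f x‖ ^ p ∂ν) ^ (1/p) :=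
            Real.rpow_le_rpow hlnn hlle (by positivity)
        _ = (2⁻¹:ℝ) ^ (1/p) * (∫ x, ‖f x‖ ^ p ∂ν) ^ (1/p) :=
            Real.mul_rpow (by norm_num) hTnn
        _ = (2:ℝ) ^ (-(1/p)) * (∫ x, ‖f x‖ ^ p ∂ν) ^ (1/p) := by
            congr 1
            rw [Real.rpow_neg (by norm_num), Real.inv_rpow (by norm_num)]
end
end
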